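/- arXiv:1111.0575 — 2 statements merged into one kernel-verified Lean document; each statement's English description precedes it below -/
import Mathlib

section
/- The jeu de taquin map J on the space Ω of infinite Young tableaux preserves the Plancherel measure P of infinite order: for every measurable set E ⊆ Ω, P(J⁻¹(E)) = P(E). -/
open MeasureTheory

structure SYT (μ : YoungDiagram) where
  entry : ℕ → ℕ → ℕ
  mem_iff : ∀ i j, (i, j) ∈ μ ↔ 1 ≤ entry i j
  le_card : ∀ i j, entry i j ≤ μ.card
  injOn : ∀ i j i' j', (i, j) ∈ μ → (i', j') ∈ μ → entry i j = entry i' j' →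
    (i, j) = (i', j')
  row_lt : ∀ i j, (i, j + 1) ∈ μ → entry i j < entry i (j + 1)
  col_lt : ∀ i j, (i + 1, j) ∈ μ → entry i j < entry (i + 1) j

/-- The number of standard Young tableaux of shape `μ`. -/
noncomputable def fSYT (μ : YoungDiagram) : ℕ := Nat.card (SYT μ)

/-- `ν` is obtained from `μ` by adding a single box (`μ ↗ ν`). -/
def YDcovers (μ ν : YoungDiagram) : Prop := μ.cells ⊆ ν.cells ∧ ν.card = μ.card + 1


/-- One step of the jeu de taquin path: move to whichever of the lower/right
neighbours (cells are `(row, column)`) carries the smaller entry; an entry `0`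
represents an empty cell, treated as `+∞`. -/
def jdtStepF (t : ℕ → ℕ → ℕ) (c : ℕ × ℕ) : ℕ × ℕ :=
  if t (c.1 + 1) c.2 ≠ 0 ∧ (t c.1 (c.2 + 1) = 0 ∨ t (c.1 + 1) c.2 < t c.1 (c.2 + 1)) then
    (c.1 + 1, c.2)
  else (c.1, c.2 + 1)

/-- The jeu de taquin path, starting from the corner box. -/
def jdtPathF (t : ℕ → ℕ → ℕ) : ℕ → ℕ × ℕ := fun k => (jdtStepF t)^[k] (0, 0)

open scoped Classical in
/-- The jeu de taquin transformation. -/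
noncomputable def jdtF (t : ℕ → ℕ → ℕ) : ℕ → ℕ → ℕ := fun i j =>
  if ∃ k, jdtPathF t k = (i, j) then
    t (jdtStepF t (i, j)).1 (jdtStepF t (i, j)).2 - 1
  else t i j - 1


/-- `t` is an infinite Young tableau: every cell of the quadrant is filled, every
positive integer appears exactly once, and entries increase along rows and columns
(cells are `(row, column)`). -/
def IsInfYT (t : ℕ → ℕ → ℕ) : Prop :=
  (∀ i j, 1 ≤ t i j) ∧ (∀ n, 1 ≤ n → ∃! c : ℕ × ℕ, t c.1 c.2 = n) ∧
  (∀ i j, t i j < t i (j + 1)) ∧ (∀ i j, t i j < t (i + 1) j)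

/-- The cylinder event: the entries `1, …, n` of the infinite tableau form exactly the
standard Young tableau `s`. -/
def cylEvent (μ : YoungDiagram) (s : SYT μ) : Set (ℕ → ℕ → ℕ) :=
  { t | ∀ i j, (i, j) ∈ μ → t i j = s.entry i j }

/-- `P` is the Plancherel measure of infinite order: a probability measure concentrated
on infinite Young tableaux giving each cylinder event its Plancherel probability
`fSYT μ / (μ.card)!`.  (These properties characterise the Plancherel measure.) -/
def PlancherelLike (P : MeasureTheory.Measure (ℕ → ℕ → ℕ)) : Prop :=
  MeasureTheory.IsProbabilityMeasure P ∧ P { t | IsInfYT t } = 1 ∧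
  ∀ (μ : YoungDiagram) (s : SYT μ),
    P (cylEvent μ s) = ENNReal.ofReal ((fSYT μ : ℝ) / (Nat.factorial μ.card))

namespace JDTaux

/-- Evaluation of a tableau at a cell. -/
def ev (t : ℕ → ℕ → ℕ) (c : ℕ × ℕ) : ℕ := t c.1 c.2

def dn (c : ℕ × ℕ) : ℕ × ℕ := (c.1 + 1, c.2)
def rt (c : ℕ × ℕ) : ℕ × ℕ := (c.1, c.2 + 1)

/-- A (finite or infinite) partial tableau: `0` denotes an empty cell, entries
increase along rows and columns and the support is a lower set. -/
def IsTab (t : ℕ → ℕ → ℕ) : Prop :=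
  (∀ c : ℕ × ℕ, ev t (rt c) ≠ 0 → ev t c ≠ 0 ∧ ev t c < ev t (rt c)) ∧
  (∀ c : ℕ × ℕ, ev t (dn c) ≠ 0 → ev t c ≠ 0 ∧ ev t c < ev t (dn c))

lemma jdtStepF_eq (t : ℕ → ℕ → ℕ) (c : ℕ × ℕ) :
    jdtStepF t c =
      if ev t (dn c) ≠ 0 ∧ (ev t (rt c) = 0 ∨ ev t (dn c) < ev t (rt c)) then dn c
      else rt c := rfl

lemma dn_ne_rt (c : ℕ × ℕ) : dn c ≠ rt c := by
  simp [dn, rt, Prod.ext_iff]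

lemma step_eq_dn_or_rt (t : ℕ → ℕ → ℕ) (c : ℕ × ℕ) :
    jdtStepF t c = dn c ∨ jdtStepF t c = rt c := by
  rw [jdtStepF_eq]; split <;> simp

lemma step_eq_dn_iff (t : ℕ → ℕ → ℕ) (c : ℕ × ℕ) :
    jdtStepF t c = dn c ↔
      (ev t (dn c) ≠ 0 ∧ (ev t (rt c) = 0 ∨ ev t (dn c) < ev t (rt c))) := by
  rw [jdtStepF_eq]; split
  · next h => exact iff_of_true rfl h
  · next h => exact iff_of_false (Ne.symm (dn_ne_rt c)) h


lemma step_eq_rt_iff (t : ℕ → ℕ → ℕ) (c : ℕ × ℕ) :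
    jdtStepF t c = rt c ↔
      ¬(ev t (dn c) ≠ 0 ∧ (ev t (rt c) = 0 ∨ ev t (dn c) < ev t (rt c))) := by
  rw [jdtStepF_eq]; split
  · next h => exact iff_of_false (dn_ne_rt c) (not_not_intro h)
  · next h => exact iff_of_true rfl h

lemma jdtPathF_zero (t : ℕ → ℕ → ℕ) : jdtPathF t 0 = (0, 0) := rfl

lemma jdtPathF_succ (t : ℕ → ℕ → ℕ) (k : ℕ) :
    jdtPathF t (k + 1) = jdtStepF t (jdtPathF t k) := by
  simp [jdtPathF, Function.iterate_succ_apply']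

lemma step_sum (t : ℕ → ℕ → ℕ) (c : ℕ × ℕ) :
    (jdtStepF t c).1 + (jdtStepF t c).2 = c.1 + c.2 + 1 := by
  rcases step_eq_dn_or_rt t c with h | h <;> rw [h] <;> simp [dn, rt] <;> omega

lemma path_sum (t : ℕ → ℕ → ℕ) (k : ℕ) :
    (jdtPathF t k).1 + (jdtPathF t k).2 = k := by
  induction k with
  | zero => rfl
  | succ k ih => rw [jdtPathF_succ, step_sum, ih]

lemma exists_path_iff (t : ℕ → ℕ → ℕ) (c : ℕ × ℕ) :
    (∃ k, jdtPathF t k = c) ↔ jdtPathF t (c.1 + c.2) = c := by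
  constructor
  · rintro ⟨k, rfl⟩; rw [path_sum]
  · exact fun h => ⟨_, h⟩

/-- Once the path is on an empty cell it stays on empty cells (moving right). -/
lemma step_of_zero {t : ℕ → ℕ → ℕ} (ht : IsTab t) {c : ℕ × ℕ} (hc : ev t c = 0) :
    jdtStepF t c = rt c ∧ ev t (rt c) = 0 := by
  have hd : ev t (dn c) = 0 := by
    by_contra h; exact absurd ((ht.2 c) h).1 (by simp [hc])
  have hr : ev t (rt c) = 0 := by
    by_contra h; exact absurd ((ht.1 c) h).1 (by simp [hc])
  refine ⟨?_, hr⟩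
  rw [step_eq_rt_iff]; simp [hd]

lemma path_zero_succ {t : ℕ → ℕ → ℕ} (ht : IsTab t) {k : ℕ}
    (h : ev t (jdtPathF t k) = 0) : ev t (jdtPathF t (k + 1)) = 0 := by
  rw [jdtPathF_succ, (step_of_zero ht h).1]
  exact (step_of_zero ht h).2

lemma path_zero_mono {t : ℕ → ℕ → ℕ} (ht : IsTab t) {k l : ℕ} (hkl : k ≤ l)
    (h : ev t (jdtPathF t k) = 0) : ev t (jdtPathF t l) = 0 := by
  induction l with
  | zero => exact (by omega : k = 0) ▸ h
  | succ l ih =>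
    rcases Nat.lt_or_ge k (l+1) with h' | h'
    · exact path_zero_succ ht (ih (by omega))
    · have : k = l + 1 := by omega
      exact this ▸ h

lemma path_lt_succ {t : ℕ → ℕ → ℕ} (ht : IsTab t) {k : ℕ}
    (h : ev t (jdtPathF t (k + 1)) ≠ 0) :
    ev t (jdtPathF t k) ≠ 0 ∧ ev t (jdtPathF t k) < ev t (jdtPathF t (k + 1)) := by
  rw [jdtPathF_succ] at h ⊢
  rcases step_eq_dn_or_rt t (jdtPathF t k) with hs | hs <;> rw [hs] at h ⊢
  · exact ht.2 _ h
  · exact ht.1 _ h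

lemma path_lt {t : ℕ → ℕ → ℕ} (ht : IsTab t) {k l : ℕ} (hkl : k < l)
    (h : ev t (jdtPathF t l) ≠ 0) :
    ev t (jdtPathF t k) ≠ 0 ∧ ev t (jdtPathF t k) < ev t (jdtPathF t l) := by
  induction l with
  | zero => omega
  | succ l ih =>
    rcases Nat.lt_or_ge k l with h' | h'
    · obtain ⟨h1, h2⟩ := ih (by omega) (path_lt_succ ht h).1
      exact ⟨h1, h2.trans (path_lt_succ ht h).2⟩
    · have : k = l := by omega
      subst this; exact path_lt_succ ht h

lemma path_ge {t : ℕ → ℕ → ℕ} (ht : IsTab t) {k : ℕ}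
    (h : ev t (jdtPathF t k) ≠ 0) : k + 1 ≤ ev t (jdtPathF t k) := by
  induction k with
  | zero => omega
  | succ k ih =>
    have h' := path_lt_succ ht h
    have := ih h'.1
    omega

end JDTaux
namespace JDTaux

/-! ### Basic SYT lemmas -/

lemma _root_.SYT.ext' {μ : YoungDiagram} {s s' : SYT μ} (h : s.entry = s'.entry) : s = s' := by
  cases s; cases s'; simp_all

lemma _root_.SYT.entry_eq_zero {μ : YoungDiagram} (s : SYT μ) {i j : ℕ} (h : (i, j) ∉ μ) :
    s.entry i j = 0 := by
  have := (s.mem_iff i j).not.mp h; omega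

lemma _root_.SYT.entry_pos {μ : YoungDiagram} (s : SYT μ) {i j : ℕ} (h : (i, j) ∈ μ) :
    1 ≤ s.entry i j := (s.mem_iff i j).mp h

lemma _root_.SYT.mem_iff' {μ : YoungDiagram} (s : SYT μ) (c : ℕ × ℕ) :
    c ∈ μ ↔ 1 ≤ ev s.entry c := s.mem_iff c.1 c.2

instance _root_.SYT.instFinite (μ : YoungDiagram) : Finite (SYT μ) := by
  apply Finite.of_injective
    (fun (s : SYT μ) => (fun c : μ.cells => (⟨s.entry (c : ℕ × ℕ).1 (c : ℕ × ℕ).2,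
      Nat.lt_succ_of_le (s.le_card _ _)⟩ : Fin (μ.card + 1))))
  intro s s' h
  apply SYT.ext'
  funext i j
  by_cases hm : (i, j) ∈ μ
  · have := congrFun h ⟨(i, j), hm⟩
    simpa using this
  · rw [s.entry_eq_zero hm, s'.entry_eq_zero hm]

instance : Countable YoungDiagram :=
  Function.Injective.countable (f := YoungDiagram.cells) (fun _ _ h => YoungDiagram.ext h)

lemma _root_.SYT.image_entry {μ : YoungDiagram} (s : SYT μ) :
    μ.cells.image (fun c => s.entry c.1 c.2) = Finset.Icc 1 μ.card := by
  apply Finset.eq_of_subset_of_card_le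
  · intro v hv
    simp only [Finset.mem_image] at hv
    obtain ⟨c, hc, rfl⟩ := hv
    rw [Finset.mem_Icc]
    exact ⟨s.entry_pos (by simpa [YoungDiagram.mem_cells] using hc), s.le_card _ _⟩
  · rw [Nat.card_Icc]
    rw [Finset.card_image_of_injOn]
    · simp [YoungDiagram.card]
    · intro c hc c' hc' h
      exact s.injOn c.1 c.2 c'.1 c'.2 (by simpa [YoungDiagram.mem_cells] using hc)
        (by simpa [YoungDiagram.mem_cells] using hc') (by simpa using h)

lemma _root_.SYT.exists_entry_eq {μ : YoungDiagram} (s : SYT μ) {v : ℕ} (h1 : 1 ≤ v)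
    (h2 : v ≤ μ.card) : ∃ c : ℕ × ℕ, c ∈ μ ∧ s.entry c.1 c.2 = v := by
  have : v ∈ Finset.Icc 1 μ.card := Finset.mem_Icc.mpr ⟨h1, h2⟩
  rw [← s.image_entry, Finset.mem_image] at this
  obtain ⟨c, hc, hcv⟩ := this
  exact ⟨c, by simpa [YoungDiagram.mem_cells] using hc, hcv⟩

lemma _root_.SYT.origin_mem {μ : YoungDiagram} (h : 0 < μ.card) : (0, 0) ∈ μ := by
  have : μ.cells.Nonempty := Finset.card_pos.mp h
  obtain ⟨c, hc⟩ := this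
  exact μ.up_left_mem (Nat.zero_le _) (Nat.zero_le _) (by simpa [YoungDiagram.mem_cells] using hc)

lemma _root_.SYT.entry_origin {μ : YoungDiagram} (s : SYT μ) (h : 0 < μ.card) :
    s.entry 0 0 = 1 := by
  obtain ⟨c, hc, hcv⟩ := s.exists_entry_eq le_rfl h
  have hc0 : c = (0, 0) := by
    rcases c with ⟨i, j⟩
    rcases Nat.eq_zero_or_pos i with rfl | hi
    · rcases Nat.eq_zero_or_pos j with rfl | hj
      · rfl
      · exfalso
        have hj' : j - 1 + 1 = j := by omega
        have hm : (0, j - 1 + 1) ∈ μ := by rw [hj']; exact hc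
        have h4 := s.row_lt 0 (j - 1) hm
        rw [hj'] at h4
        have h5 := s.entry_pos (μ.up_left_mem le_rfl (Nat.sub_le j 1) hc)
        have hcv' : s.entry 0 j = 1 := hcv
        omega
    · exfalso
      have hi' : i - 1 + 1 = i := by omega
      have hm : (i - 1 + 1, j) ∈ μ := by rw [hi']; exact hc
      have h4 := s.col_lt (i - 1) j hm
      rw [hi'] at h4
      have h5 := s.entry_pos (μ.up_left_mem (Nat.sub_le i 1) le_rfl hc)
      have hcv' : s.entry i j = 1 := hcv
      omega
  rw [hc0] at hcv; exact hcv

lemma _root_.SYT.eq_origin_of_entry_one {μ : YoungDiagram} (s : SYT μ) {c : ℕ × ℕ}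
    (hc : c ∈ μ) (h1 : s.entry c.1 c.2 = 1) : c = (0, 0) := by
  have hcard : 0 < μ.card := by
    exact Finset.card_pos.mpr ⟨c, by rwa [YoungDiagram.mem_cells]⟩
  exact s.injOn c.1 c.2 0 0 hc (SYT.origin_mem hcard)
    (by rw [h1, s.entry_origin hcard])

lemma _root_.SYT.exists_max_cell {μ : YoungDiagram} (s : SYT μ) (h : 0 < μ.card) :
    ∃ b : ℕ × ℕ, b ∈ μ ∧ s.entry b.1 b.2 = μ.card ∧ dn b ∉ μ ∧ rt b ∉ μ := by
  obtain ⟨b, hb, hbv⟩ := s.exists_entry_eq h le_rfl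
  refine ⟨b, hb, hbv, ?_, ?_⟩
  · intro hmem
    have := s.col_lt b.1 b.2 hmem
    have := s.le_card (b.1 + 1) b.2
    omega
  · intro hmem
    have := s.row_lt b.1 b.2 hmem
    have := s.le_card b.1 (b.2 + 1)
    omega

lemma _root_.SYT.isTab {μ : YoungDiagram} (s : SYT μ) : IsTab s.entry := by
  constructor
  · rintro ⟨i, j⟩ h
    simp only [ev, rt] at h ⊢
    have hm : (i, j + 1) ∈ μ := (s.mem_iff _ _).mpr (by omega)
    have hm' : (i, j) ∈ μ := μ.up_left_mem le_rfl (by omega) hm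
    exact ⟨by have := s.entry_pos hm'; omega, s.row_lt i j hm⟩
  · rintro ⟨i, j⟩ h
    simp only [ev, dn] at h ⊢
    have hm : (i + 1, j) ∈ μ := (s.mem_iff _ _).mpr (by omega)
    have hm' : (i, j) ∈ μ := μ.up_left_mem (by omega) le_rfl hm
    exact ⟨by have := s.entry_pos hm'; omega, s.col_lt i j hm⟩

/-! ### Truncation and infinite Young tableaux -/

/-- Truncation: keep the entries `≤ n`, empty the other cells. -/
def trunc (n : ℕ) (t : ℕ → ℕ → ℕ) : ℕ → ℕ → ℕ := fun i j => if t i j ≤ n then t i j else 0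

lemma trunc_eq_of_le {n : ℕ} {t : ℕ → ℕ → ℕ} {i j : ℕ} (h : t i j ≤ n) :
    trunc n t i j = t i j := if_pos h

lemma trunc_eq_zero {n : ℕ} {t : ℕ → ℕ → ℕ} {i j : ℕ} (h : ¬ t i j ≤ n) :
    trunc n t i j = 0 := if_neg h

section Inf

variable {t : ℕ → ℕ → ℕ} (ht : IsInfYT t)

include ht

lemma IYT.pos (i j : ℕ) : 1 ≤ t i j := ht.1 i j

lemma IYT.mono {i j i' j' : ℕ} (hi : i ≤ i') (hj : j ≤ j') : t i j ≤ t i' j' := by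
  have h1 : ∀ a b b', b ≤ b' → t a b ≤ t a b' := by
    intro a b b'
    induction b' with
    | zero => intro hb; have hb0 : b = 0 := (by omega); subst hb0; exact le_rfl
    | succ b' ih =>
      intro hb
      rcases Nat.lt_or_ge b (b' + 1) with h | h
      · have := ht.2.2.1 a b'
        have := ih (by omega)
        omega
      · have hb0 : b = b' + 1 := by omega
        subst hb0; exact le_rfl
  have h2 : ∀ b a a', a ≤ a' → t a b ≤ t a' b := by
    intro b a a'
    induction a' with
    | zero => intro ha; have ha0 : a = 0 := (by omega); subst ha0; exact le_rfl
    | succ a' ih =>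
      intro ha
      rcases Nat.lt_or_ge a (a' + 1) with h | h
      · have := ht.2.2.2 a' b
        have := ih (by omega)
        omega
      · have ha0 : a = a' + 1 := by omega
        subst ha0; exact le_rfl
  exact (h1 i j j' hj).trans (h2 j' i i' hi)

lemma IYT.ge_sum (i j : ℕ) : i + j + 1 ≤ t i j := by
  have h1 : ∀ a, a + 1 ≤ t a 0 := by
    intro a
    induction a with
    | zero => exact ht.1 0 0
    | succ a ih => have := ht.2.2.2 a 0; omega
  have h2 : ∀ b, t i 0 + b ≤ t i b := by
    intro b
    induction b with
    | zero => omega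
    | succ b ih => have := ht.2.2.1 i b; omega
  have := h1 i
  have := h2 j
  omega

lemma IYT.origin : t 0 0 = 1 := by
  obtain ⟨c, hc, -⟩ := ht.2.1 1 le_rfl
  have h1 := IYT.mono ht (Nat.zero_le c.1) (Nat.zero_le c.2)
  have := ht.1 0 0
  omega

lemma IYT.isTab : IsTab t := by
  constructor
  · rintro ⟨i, j⟩ -
    refine ⟨?_, ?_⟩ <;> simp only [ev, rt]
    · have := ht.1 i j; omega
    · exact ht.2.2.1 i j
  · rintro ⟨i, j⟩ -
    refine ⟨?_, ?_⟩ <;> simp only [ev, dn]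
    · have := ht.1 i j; omega
    · exact ht.2.2.2 i j

lemma IYT.isTab_trunc (n : ℕ) : IsTab (trunc n t) := by
  constructor
  · rintro ⟨i, j⟩ h
    simp only [ev, rt, trunc] at h ⊢
    rcases em (t i (j + 1) ≤ n) with _ | hn
    · next h' =>
      have := ht.2.2.1 i j
      have := ht.1 i j
      rw [if_pos (by omega)]
      refine ⟨by omega, ?_⟩
      simp only [h', ↓reduceIte]
      omega
    · simp [hn] at h
  · rintro ⟨i, j⟩ h
    simp only [ev, dn, trunc] at h ⊢
    rcases em (t (i + 1) j ≤ n) with _ | hn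
    · next h' =>
      have := ht.2.2.2 i j
      have := ht.1 i j
      rw [if_pos (by omega)]
      refine ⟨by omega, ?_⟩
      simp only [h', ↓reduceIte]
      omega
    · simp [hn] at h

/-- The shape formed by the entries `1, …, n` of an infinite Young tableau. -/
def shapeOf (n : ℕ) : YoungDiagram where
  cells := Finset.filter (fun c : ℕ × ℕ => t c.1 c.2 ≤ n)
    (Finset.range (n + 1) ×ˢ Finset.range (n + 1))
  isLowerSet := by
    rintro ⟨i, j⟩ ⟨i', j'⟩ hle hmem
    simp only [Finset.coe_filter, Set.mem_setOf_eq, Finset.mem_product, Finset.mem_range] at hmem ⊢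
    obtain ⟨⟨h1, h2⟩, h3⟩ := hmem
    obtain ⟨hi, hj⟩ := hle
    simp only at hi hj
    have := IYT.mono ht hi hj
    exact ⟨⟨by omega, by omega⟩, by omega⟩

lemma IYT.mem_shapeOf {n : ℕ} {c : ℕ × ℕ} : c ∈ shapeOf ht n ↔ t c.1 c.2 ≤ n := by
  rcases c with ⟨i, j⟩
  simp only [shapeOf, YoungDiagram.mem_mk, Finset.mem_filter, Finset.mem_product,
    Finset.mem_range]
  constructor
  · intro h; exact (Finset.mem_filter.mp h).2
  · intro h
    have := IYT.ge_sum ht i j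
    exact Finset.mem_filter.mpr ⟨Finset.mem_product.mpr ⟨Finset.mem_range.mpr (by omega), Finset.mem_range.mpr (by omega)⟩, h⟩

lemma IYT.card_shapeOf (n : ℕ) : (shapeOf ht n).card = n := by
  have himg : (shapeOf ht n).cells.image (fun c => t c.1 c.2) = Finset.Icc 1 n := by
    apply Finset.Subset.antisymm
    · intro v hv
      simp only [Finset.mem_image] at hv
      obtain ⟨c, hc, rfl⟩ := hv
      have : c ∈ shapeOf ht n := by rwa [← YoungDiagram.mem_cells]
      rw [IYT.mem_shapeOf ht] at this
      exact Finset.mem_Icc.mpr ⟨ht.1 _ _, this⟩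
    · intro v hv
      rw [Finset.mem_Icc] at hv
      obtain ⟨c, hc, -⟩ := ht.2.1 v hv.1
      simp only [Finset.mem_image]
      refine ⟨c, ?_, hc⟩
      rw [YoungDiagram.mem_cells, IYT.mem_shapeOf ht]
      omega
  have hinj : Set.InjOn (fun c : ℕ × ℕ => t c.1 c.2) (shapeOf ht n).cells := by
    intro c hc c' hc' h
    obtain ⟨c0, hc0, hu⟩ := ht.2.1 (t c.1 c.2) (ht.1 _ _)
    exact (hu c rfl).trans (hu c' (by simp only at h; rw [h])).symm
  have := Finset.card_image_of_injOn hinj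
  rw [himg, Nat.card_Icc] at this
  simp only [YoungDiagram.card]
  omega

/-- The standard tableau formed by the entries `1, …, n` of an infinite Young tableau. -/
def restrictSYT (n : ℕ) : SYT (shapeOf ht n) where
  entry := trunc n t
  mem_iff := by
    intro i j
    rw [IYT.mem_shapeOf ht]
    simp only [trunc]
    split
    · have := ht.1 i j; omega
    · omega
  le_card := by
    intro i j
    rw [IYT.card_shapeOf ht]
    simp only [trunc]
    split <;> omega
  injOn := by
    intro i j i' j' hm hm' h
    rw [IYT.mem_shapeOf ht] at hm hm'
    rw [trunc_eq_of_le hm, trunc_eq_of_le hm'] at h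
    obtain ⟨c0, hc0, hu⟩ := ht.2.1 (t i j) (ht.1 _ _)
    exact ((hu (i, j) rfl).trans (hu (i', j') h.symm).symm)
  row_lt := by
    intro i j hm
    rw [IYT.mem_shapeOf ht] at hm
    have hlt := ht.2.2.1 i j
    rw [trunc_eq_of_le (by simp only at hm; omega), trunc_eq_of_le (by exact hm)]
    exact hlt
  col_lt := by
    intro i j hm
    rw [IYT.mem_shapeOf ht] at hm
    have hlt := ht.2.2.2 i j
    rw [trunc_eq_of_le (by simp only at hm; omega), trunc_eq_of_le (by exact hm)]
    exact hlt

/-- Characterisation of cylinder events via truncation. -/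
lemma IYT.mem_cylEvent_iff {μ : YoungDiagram} (s : SYT μ) {n : ℕ} (hcard : μ.card = n) :
    t ∈ cylEvent μ s ↔ trunc n t = s.entry := by
  constructor
  · intro hcyl
    funext i j
    by_cases hm : (i, j) ∈ μ
    · have h1 : t i j = s.entry i j := hcyl i j hm
      have h2 : s.entry i j ≤ n := hcard ▸ s.le_card i j
      rw [trunc_eq_of_le (h1 ▸ h2), h1]
    · rw [s.entry_eq_zero hm]
      apply trunc_eq_zero
      intro hle
      obtain ⟨c, hc, hcv⟩ := s.exists_entry_eq (ht.1 i j) (hcard ▸ hle)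
      have h3 : t c.1 c.2 = t i j := by rw [hcyl c.1 c.2 hc, hcv]
      obtain ⟨c0, hc0, hu⟩ := ht.2.1 (t i j) (ht.1 i j)
      have : c = (i, j) := (hu c h3).trans (hu (i, j) rfl).symm
      rw [this] at hc
      exact hm hc
  · intro h i j hm
    have h1 : 1 ≤ s.entry i j := s.entry_pos hm
    have h2 := congrFun (congrFun h i) j
    simp only [trunc] at h2
    split at h2
    · omega
    · omega

lemma IYT.self_mem_cylEvent (n : ℕ) : t ∈ cylEvent (shapeOf ht n) (restrictSYT ht n) := by
  intro i j hm
  rw [IYT.mem_shapeOf ht] at hm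
  exact (trunc_eq_of_le hm).symm

end Inf

end JDTaux
namespace JDTaux

lemma jdtF_on {t : ℕ → ℕ → ℕ} {c : ℕ × ℕ} (h : jdtPathF t (c.1 + c.2) = c) :
    jdtF t c.1 c.2 = ev t (jdtStepF t c) - 1 := by
  have hex : ∃ k, jdtPathF t k = (c.1, c.2) := ⟨c.1 + c.2, h⟩
  simp only [jdtF, if_pos hex]
  rfl

lemma jdtF_off {t : ℕ → ℕ → ℕ} {c : ℕ × ℕ} (h : jdtPathF t (c.1 + c.2) ≠ c) :
    jdtF t c.1 c.2 = ev t c - 1 := by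
  have hex : ¬ ∃ k, jdtPathF t k = (c.1, c.2) := by
    rw [show ((c.1, c.2) : ℕ × ℕ) = c from rfl, exists_path_iff]
    exact h
  simp only [jdtF, if_neg hex]
  rfl

lemma ev_trunc {m : ℕ} {t : ℕ → ℕ → ℕ} (c : ℕ × ℕ) :
    ev (trunc m t) c = if ev t c ≤ m then ev t c else 0 := rfl

lemma ev_trunc_of_le {m : ℕ} {t : ℕ → ℕ → ℕ} {c : ℕ × ℕ} (h : ev t c ≤ m) :
    ev (trunc m t) c = ev t c := if_pos h

lemma ev_trunc_of_gt {m : ℕ} {t : ℕ → ℕ → ℕ} {c : ℕ × ℕ} (h : ¬ ev t c ≤ m) :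
    ev (trunc m t) c = 0 := if_neg h

lemma step_min {t : ℕ → ℕ → ℕ} (hpos : ∀ c : ℕ × ℕ, ev t c ≠ 0) (c : ℕ × ℕ) :
    ev t (jdtStepF t c) ≤ ev t (dn c) ∧ ev t (jdtStepF t c) ≤ ev t (rt c) := by
  rcases step_eq_dn_or_rt t c with h | h <;> rw [h]
  · rw [step_eq_dn_iff] at h
    rcases h.2 with h' | h'
    · exact absurd h' (hpos _)
    · exact ⟨le_rfl, le_of_lt h'⟩
  · rw [step_eq_rt_iff] at h
    push_neg at h
    rcases Nat.eq_zero_or_pos (ev t (dn c)) with h' | h'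
    · exact absurd h' (hpos _)
    · have := (h (by omega)).2
      exact ⟨by omega, le_rfl⟩

section Comm

variable {t : ℕ → ℕ → ℕ} (ht : IsInfYT t) (n : ℕ)

include ht

lemma IYT.ev_pos (c : ℕ × ℕ) : ev t c ≠ 0 := by
  have := ht.1 c.1 c.2; simp only [ev]; omega

/-- Step agreement between `t` and its truncation. -/
lemma step_agree {c : ℕ × ℕ}
    (h : ev t (dn c) ≤ n + 1 ∨ ev t (rt c) ≤ n + 1) :
    jdtStepF (trunc (n + 1) t) c = jdtStepF t c := by
  have hdpos := IYT.ev_pos ht (dn c)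
  have hrpos := IYT.ev_pos ht (rt c)
  by_cases hd : ev t (dn c) ≤ n + 1 <;> by_cases hr : ev t (rt c) ≤ n + 1
  · rw [jdtStepF_eq, jdtStepF_eq, ev_trunc_of_le hd, ev_trunc_of_le hr]
  · rcases (step_eq_dn_or_rt t c) with hs | hs
    · rw [hs, step_eq_dn_iff, ev_trunc_of_le hd, ev_trunc_of_gt hr]
      exact ⟨hdpos, Or.inl rfl⟩
    · exfalso
      rw [step_eq_rt_iff] at hs
      exact hs ⟨hdpos, Or.inr (by omega)⟩
  · have hs : jdtStepF t c = rt c := by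
      rw [step_eq_rt_iff]
      rintro ⟨-, h'⟩
      rcases h' with h' | h'
      · exact hrpos h'
      · omega
    rw [hs, step_eq_rt_iff, ev_trunc_of_gt hd]
    simp
  · tauto

/-- While the infinite path carries entries `≤ n+1` it agrees with the truncated path. -/
lemma path_agree_of_le : ∀ k, ev t (jdtPathF t k) ≤ n + 1 →
    jdtPathF (trunc (n + 1) t) k = jdtPathF t k := by
  intro k
  induction k with
  | zero => intro _; rfl
  | succ k ih =>
    intro h
    have hne : ev t (jdtPathF t (k + 1)) ≠ 0 := IYT.ev_pos ht _
    have hlt := path_lt_succ (IYT.isTab ht) hne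
    have hk := ih (by omega)
    rw [jdtPathF_succ, jdtPathF_succ, hk]
    apply step_agree ht
    rw [jdtPathF_succ] at h
    rcases step_eq_dn_or_rt t (jdtPathF t k) with hs | hs <;> rw [hs] at h
    · exact Or.inl h
    · exact Or.inr h

/-- While the truncated path carries nonzero entries it agrees with the infinite path. -/
lemma path_agree_of_ne : ∀ k, ev (trunc (n + 1) t) (jdtPathF (trunc (n + 1) t) k) ≠ 0 →
    jdtPathF (trunc (n + 1) t) k = jdtPathF t k := by
  intro k
  induction k with
  | zero => intro _; rfl
  | succ k ih =>
    intro h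
    have htab' : IsTab (trunc (n + 1) t) := IYT.isTab_trunc ht (n + 1)
    have h0 : ev (trunc (n + 1) t) (jdtPathF (trunc (n + 1) t) k) ≠ 0 := by
      intro hz
      exact h (path_zero_succ htab' hz)
    have hk := ih h0
    rw [jdtPathF_succ, hk] at h ⊢
    have hnb : ev t (dn (jdtPathF t k)) ≤ n + 1 ∨ ev t (rt (jdtPathF t k)) ≤ n + 1 := by
      rcases step_eq_dn_or_rt (trunc (n + 1) t) (jdtPathF t k) with hs | hs <;> rw [hs] at h
      · left
        by_contra hgt
        exact h (ev_trunc_of_gt hgt)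
      · right
        by_contra hgt
        exact h (ev_trunc_of_gt hgt)
    rw [step_agree ht n hnb, ← jdtPathF_succ]

/-- **Key commutation**: truncating after an infinite slide is the same as sliding the
truncation. -/
lemma trunc_jdt_comm : trunc n (jdtF t) = jdtF (trunc (n + 1) t) := by
  funext i j
  set c : ℕ × ℕ := (i, j) with hc
  have hsum : c.1 + c.2 = i + j := rfl
  have hij : trunc n (jdtF t) i j = trunc n (jdtF t) c.1 c.2 := rfl
  have hij' : jdtF (trunc (n + 1) t) i j = jdtF (trunc (n + 1) t) c.1 c.2 := rfl
  rw [hij, hij']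
  have hpos := IYT.ev_pos ht
  have htab := IYT.isTab ht
  have htab' := IYT.isTab_trunc ht (n + 1)
  by_cases hA : jdtPathF t (c.1 + c.2) = c <;>
    by_cases hA' : jdtPathF (trunc (n + 1) t) (c.1 + c.2) = c
  · -- on both paths
    have hstep : jdtPathF t (c.1 + c.2 + 1) = jdtStepF t c := by
      rw [jdtPathF_succ, hA]
    by_cases hs : ev t (jdtPathF t (c.1 + c.2 + 1)) ≤ n + 1
    · have hagree : jdtStepF (trunc (n + 1) t) c = jdtStepF t c := by
        apply step_agree ht
        rw [hstep] at hs
        rcases step_eq_dn_or_rt t c with h' | h' <;> rw [h'] at hs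
        · exact Or.inl hs
        · exact Or.inr hs
      have h1 : jdtF t c.1 c.2 = ev t (jdtStepF t c) - 1 := jdtF_on hA
      have h2 : jdtF (trunc (n + 1) t) c.1 c.2 = ev (trunc (n + 1) t) (jdtStepF t c) - 1 := by
        rw [jdtF_on hA', hagree]
      rw [hstep] at hs
      rw [h2, ev_trunc_of_le hs]
      show trunc n (jdtF t) c.1 c.2 = _
      simp only [trunc, h1]
      rw [if_pos (by omega)]
    · -- the next entry is too big: both sides die
      rw [hstep] at hs
      have hboth : ¬ ev t (dn c) ≤ n + 1 ∧ ¬ ev t (rt c) ≤ n + 1 := by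
        have hmin := step_min hpos c
        constructor <;> intro hle <;> apply hs <;> omega
      have h1 : jdtF t c.1 c.2 = ev t (jdtStepF t c) - 1 := jdtF_on hA
      have h2 : jdtF (trunc (n + 1) t) c.1 c.2
          = ev (trunc (n + 1) t) (jdtStepF (trunc (n + 1) t) c) - 1 := jdtF_on hA'
      have hz : ev (trunc (n + 1) t) (jdtStepF (trunc (n + 1) t) c) = 0 := by
        rcases step_eq_dn_or_rt (trunc (n + 1) t) c with h' | h' <;> rw [h']
        · exact ev_trunc_of_gt hboth.1
        · exact ev_trunc_of_gt hboth.2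
      have hge : ev t c < ev t (jdtStepF t c) := by
        have : ev t (jdtPathF t (c.1 + c.2 + 1)) ≠ 0 := hpos _
        have := (path_lt_succ htab (by rw [hstep]; exact hpos _)).2
        rwa [hA, hstep] at this
      show trunc n (jdtF t) c.1 c.2 = _
      simp only [trunc, h1, h2, hz]
      rw [if_neg (by omega)]
  · -- on t-path, off truncated path : entry of c exceeds n+1
    have hbig : ¬ ev t c ≤ n + 1 := by
      intro hle
      have := path_agree_of_le ht n (c.1 + c.2) (by rw [hA]; exact hle)
      exact hA' (this.trans hA)
    have h1 : jdtF t c.1 c.2 = ev t (jdtStepF t c) - 1 := jdtF_on hA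
    have h2 : jdtF (trunc (n + 1) t) c.1 c.2 = ev (trunc (n + 1) t) c - 1 := jdtF_off hA'
    have hgt : ev t c < ev t (jdtStepF t c) := by
      have := (path_lt_succ htab (k := c.1 + c.2)
        (by rw [jdtPathF_succ, hA]; exact hpos _)).2
      rwa [hA, jdtPathF_succ, hA] at this
    show trunc n (jdtF t) c.1 c.2 = _
    simp only [trunc, h1, h2, ev_trunc_of_gt hbig]
    rw [if_neg (by omega)]
  · -- off t-path, on truncated path: truncated entry of c is 0
    have hz : ev (trunc (n + 1) t) c = 0 := by
      by_contra hnz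
      have hnz' : ev (trunc (n + 1) t) (jdtPathF (trunc (n + 1) t) (c.1 + c.2)) ≠ 0 := by
        rw [hA']; exact hnz
      have := path_agree_of_ne ht n (c.1 + c.2) hnz'
      exact hA (this.symm.trans hA')
    have hbig : ¬ ev t c ≤ n + 1 := by
      intro hle
      rw [ev_trunc_of_le hle] at hz
      exact hpos c hz
    have h1 : jdtF t c.1 c.2 = ev t c - 1 := jdtF_off hA
    have h2 : jdtF (trunc (n + 1) t) c.1 c.2
        = ev (trunc (n + 1) t) (jdtStepF (trunc (n + 1) t) c) - 1 := jdtF_on hA'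
    have hz' : ev (trunc (n + 1) t) (jdtStepF (trunc (n + 1) t) c) = 0 := by
      rw [(step_of_zero htab' hz).1]
      exact (step_of_zero htab' hz).2
    show trunc n (jdtF t) c.1 c.2 = _
    simp only [trunc, h1, h2, hz']
    rw [if_neg (by omega)]
  · -- off both paths
    have h1 : jdtF t c.1 c.2 = ev t c - 1 := jdtF_off hA
    have h2 : jdtF (trunc (n + 1) t) c.1 c.2 = ev (trunc (n + 1) t) c - 1 := jdtF_off hA'
    show trunc n (jdtF t) c.1 c.2 = _
    by_cases hle : ev t c ≤ n + 1
    · simp only [trunc, h1, h2, ev_trunc_of_le hle]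
      have := hpos c
      by_cases h' : ev t c - 1 ≤ n
      · rw [if_pos h']
      · omega
    · simp only [trunc, h1, h2, ev_trunc_of_gt hle]
      rw [if_neg (by omega)]
  
end Comm

end JDTaux
namespace JDTaux

lemma jdtF_at_path (t : ℕ → ℕ → ℕ) (k : ℕ) :
    ev (jdtF t) (jdtPathF t k) = ev t (jdtPathF t (k + 1)) - 1 := by
  have h : jdtPathF t ((jdtPathF t k).1 + (jdtPathF t k).2) = jdtPathF t k := by
    rw [path_sum]
  have h2 := jdtF_on h
  show jdtF t (jdtPathF t k).1 (jdtPathF t k).2 = _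
  rw [h2, jdtPathF_succ]

/-- Erasing a corner of a Young diagram. -/
def eraseCorner (ν : YoungDiagram) (b : ℕ × ℕ) (hdn : dn b ∉ ν) (hrt : rt b ∉ ν) :
    YoungDiagram where
  cells := ν.cells.erase b
  isLowerSet := by
    intro a c hle ha
    rw [Finset.coe_erase, Set.mem_diff] at ha ⊢
    obtain ⟨ha, hab⟩ := ha
    rw [Finset.mem_coe, YoungDiagram.mem_cells] at ha
    have hcν : c ∈ ν := ν.up_left_mem hle.1 hle.2 ha
    refine ⟨by rwa [Finset.mem_coe, YoungDiagram.mem_cells], ?_⟩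
    simp only [Set.mem_singleton_iff] at hab ⊢
    rintro rfl
    rw [Prod.le_def] at hle
    rcases Nat.lt_or_ge c.1 a.1 with h1 | h1
    · exact hdn (ν.up_left_mem (show (dn c).1 ≤ a.1 by simp only [dn]; omega)
        (show (dn c).2 ≤ a.2 by simp only [dn]; omega; ) ha)
    · rcases Nat.lt_or_ge c.2 a.2 with h2 | h2
      · exact hrt (ν.up_left_mem (show (rt c).1 ≤ a.1 by simp only [rt]; omega)
          (show (rt c).2 ≤ a.2 by simp only [rt]; omega; ) ha)
      · exact hab (Prod.ext (by omega) (by omega))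

lemma mem_eraseCorner {ν : YoungDiagram} {b : ℕ × ℕ} {hdn : dn b ∉ ν} {hrt : rt b ∉ ν}
    {c : ℕ × ℕ} : c ∈ eraseCorner ν b hdn hrt ↔ c ≠ b ∧ c ∈ ν := by
  show c ∈ (ν.cells.erase b) ↔ _
  rw [Finset.mem_erase, YoungDiagram.mem_cells]

lemma card_eraseCorner {ν : YoungDiagram} {b : ℕ × ℕ} {hdn : dn b ∉ ν} {hrt : rt b ∉ ν}
    (hb : b ∈ ν) : (eraseCorner ν b hdn hrt).card = ν.card - 1 := by
  show (ν.cells.erase b).card = _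
  rw [Finset.card_erase_of_mem ((YoungDiagram.mem_cells _).mpr hb)]

section FinTab

variable {ν : YoungDiagram} (s : SYT ν)

/-- The index at which the jeu de taquin path leaves the finite shape. -/
noncomputable def exitIdx : ℕ :=
  Nat.findGreatest (fun k => ev s.entry (jdtPathF s.entry k) ≠ 0) ν.card

variable (hν : 0 < ν.card)

include hν

lemma exit_nonzero : ev s.entry (jdtPathF s.entry (exitIdx s)) ≠ 0 := by
  have h0 : (fun k => ev s.entry (jdtPathF s.entry k) ≠ 0) 0 := by
    show s.entry 0 0 ≠ 0
    rw [s.entry_origin hν]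
    omega
  exact Nat.findGreatest_spec (P := fun k => ev s.entry (jdtPathF s.entry k) ≠ 0)
    (n := ν.card) (Nat.zero_le _) h0

lemma path_nonzero_iff (k : ℕ) :
    ev s.entry (jdtPathF s.entry k) ≠ 0 ↔ k ≤ exitIdx s := by
  constructor
  · intro h
    by_contra hgt
    push_neg at hgt
    rcases le_or_gt k ν.card with hk | hk
    · exact Nat.findGreatest_is_greatest (P := fun k => ev s.entry (jdtPathF s.entry k) ≠ 0)
        hgt hk h
    · have h1 := path_ge s.isTab h
      have h2 := s.le_card (jdtPathF s.entry k).1 (jdtPathF s.entry k).2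
      simp only [ev] at h1
      omega
  · intro hk hz
    exact exit_nonzero s hν (path_zero_mono s.isTab hk hz)

lemma exitIdx_lt_card : exitIdx s < ν.card := by
  have h1 := exit_nonzero s hν
  have h2 := path_ge s.isTab h1
  have h3 := s.le_card (jdtPathF s.entry (exitIdx s)).1 (jdtPathF s.entry (exitIdx s)).2
  simp only [ev] at h2
  omega

/-- The cell at which the jeu de taquin path leaves the shape. -/
noncomputable def exitCell : ℕ × ℕ := jdtPathF s.entry (exitIdx s)

lemma exit_mem : exitCell s ∈ ν := by
  rw [s.mem_iff']
  have := exit_nonzero s hν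
  unfold exitCell
  omega

lemma exit_succ_zero : ev s.entry (jdtPathF s.entry (exitIdx s + 1)) = 0 := by
  by_contra h
  have := (path_nonzero_iff s hν _).mp h
  omega

lemma exit_corner : dn (exitCell s) ∉ ν ∧ rt (exitCell s) ∉ ν := by
  have hz := exit_succ_zero s hν
  rw [jdtPathF_succ] at hz
  have hrt : jdtStepF s.entry (exitCell s) = rt (exitCell s) ∧
      ev s.entry (rt (exitCell s)) = 0 := by
    rcases step_eq_dn_or_rt s.entry (exitCell s) with h | h
    · exfalso
      have := (step_eq_dn_iff s.entry (exitCell s)).mp h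
      rw [show jdtStepF s.entry (jdtPathF s.entry (exitIdx s)) =
        jdtStepF s.entry (exitCell s) from rfl, h] at hz
      exact this.1 hz
    · refine ⟨h, ?_⟩
      rw [show jdtStepF s.entry (jdtPathF s.entry (exitIdx s)) =
        jdtStepF s.entry (exitCell s) from rfl, h] at hz
      exact hz
  have hdn : ev s.entry (dn (exitCell s)) = 0 := by
    have := (step_eq_rt_iff s.entry (exitCell s)).mp hrt.1
    push_neg at this
    rcases Nat.eq_zero_or_pos (ev s.entry (dn (exitCell s))) with h | h
    · exact h
    · exact absurd hrt.2 (this (by omega)).1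
  constructor
  · intro hmem
    exact absurd hdn (by have := (s.mem_iff' _).mp hmem; omega)
  · intro hmem
    exact absurd hrt.2 (by have := (s.mem_iff' _).mp hmem; omega)

/-- The shape of the finite jeu de taquin image. -/
noncomputable def jdtShape : YoungDiagram :=
  eraseCorner ν (exitCell s) (exit_corner s hν).1 (exit_corner s hν).2

lemma mem_jdtShape {c : ℕ × ℕ} : c ∈ jdtShape s hν ↔ c ≠ exitCell s ∧ c ∈ ν :=
  mem_eraseCorner

lemma card_jdtShape : (jdtShape s hν).card = ν.card - 1 :=
  card_eraseCorner (exit_mem s hν)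

end FinTab

end JDTaux
namespace JDTaux

lemma path_inj (t : ℕ → ℕ → ℕ) {k k' : ℕ} (h : jdtPathF t k = jdtPathF t k') : k = k' := by
  have h1 := path_sum t k
  rw [h, path_sum] at h1
  omega

section FinTab2

variable {ν : YoungDiagram} (s : SYT ν)

lemma entry_two_le {c : ℕ × ℕ} (hc : c ∈ ν) (hc0 : c ≠ (0, 0)) : 2 ≤ ev s.entry c := by
  have h1 := (s.mem_iff' c).mp hc
  rcases Nat.lt_or_ge (ev s.entry c) 2 with h | h
  · have : ev s.entry c = 1 := by omega
    exact absurd (s.eq_origin_of_entry_one hc this) hc0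
  · exact h

variable (hν : 0 < ν.card)

include hν

lemma path_mem_of_le {k : ℕ} (h : k ≤ exitIdx s) : jdtPathF s.entry k ∈ ν := by
  rw [s.mem_iff']
  have := (path_nonzero_iff s hν k).mpr h
  omega

lemma idx_le_exit {k : ℕ} (h : jdtPathF s.entry k ∈ ν) : k ≤ exitIdx s := by
  apply (path_nonzero_iff s hν k).mp
  have := (s.mem_iff' _).mp h
  omega

omit hν in
lemma onPath_exitCell : jdtPathF s.entry ((exitCell s).1 + (exitCell s).2) = exitCell s := by
  unfold exitCell
  rw [path_sum]

lemma idx_lt_exit {k : ℕ} (hk : jdtPathF s.entry k ∈ ν)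
    (hne : jdtPathF s.entry k ≠ exitCell s) : k < exitIdx s := by
  have h1 := idx_le_exit s hν hk
  rcases Nat.lt_or_ge k (exitIdx s) with h | h
  · exact h
  · exfalso
    exact hne (by rw [show k = exitIdx s by omega]; rfl)

/-- Positivity of the slided entries describes the erased shape. -/
lemma u_pos_iff (c : ℕ × ℕ) :
    1 ≤ ev (jdtF s.entry) c ↔ (c ≠ exitCell s ∧ c ∈ ν) := by
  by_cases hon : jdtPathF s.entry (c.1 + c.2) = c
  · have hu := jdtF_at_path s.entry (c.1 + c.2)
    rw [hon] at hu
    rcases Nat.lt_trichotomy (c.1 + c.2) (exitIdx s) with hkm | hkm | hkm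
    · have hnz : ev s.entry (jdtPathF s.entry (c.1 + c.2 + 1)) ≠ 0 :=
        (path_nonzero_iff s hν _).mpr hkm
      have hge := path_ge s.isTab hnz
      constructor
      · intro _
        refine ⟨?_, ?_⟩
        · intro he
          have h2 : jdtPathF s.entry (c.1 + c.2) = jdtPathF s.entry (exitIdx s) := by
            rw [hon, he]; rfl
          have := path_inj s.entry h2
          omega
        · rw [← hon]
          exact path_mem_of_le s hν (le_of_lt hkm)
      · intro _
        omega
    · have hz : ev s.entry (jdtPathF s.entry (c.1 + c.2 + 1)) = 0 := by
        by_contra hnz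
        have := (path_nonzero_iff s hν _).mp hnz
        omega
      have hce : c = exitCell s := by
        rw [← hon]
        unfold exitCell
        rw [hkm]
      constructor
      · intro h1
        omega
      · rintro ⟨hne, -⟩
        exact absurd hce hne
    · have hz : ev s.entry (jdtPathF s.entry (c.1 + c.2 + 1)) = 0 := by
        by_contra hnz
        have := (path_nonzero_iff s hν _).mp hnz
        omega
      constructor
      · intro h1
        omega
      · rintro ⟨-, hcν⟩
        rw [← hon] at hcν
        have := idx_le_exit s hν hcν
        omega
  · have hu : ev (jdtF s.entry) c = ev s.entry c - 1 := jdtF_off hon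
    have hne : c ≠ exitCell s := by
      intro he
      rw [he] at hon
      exact hon (onPath_exitCell s)
    have hno : c ≠ (0, 0) := by
      intro he
      apply hon
      rw [he]
      rfl
    constructor
    · intro h1
      exact ⟨hne, (s.mem_iff' c).mpr (by omega)⟩
    · rintro ⟨-, hcν⟩
      have := entry_two_le s hcν hno
      omega

/-- **The finite jeu de taquin slide of a standard tableau is standard.** -/
noncomputable def jdtSYT : SYT (jdtShape s hν) where
  entry := jdtF s.entry
  mem_iff := by
    intro i j
    rw [mem_jdtShape]
    show _ ↔ 1 ≤ ev (jdtF s.entry) (i, j)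
    rw [u_pos_iff s hν]
  le_card := by
    intro i j
    rw [card_jdtShape]
    by_cases hon : jdtPathF s.entry (i + j) = ((i, j) : ℕ × ℕ)
    · have hu := jdtF_at_path s.entry (i + j)
      rw [hon] at hu
      show ev (jdtF s.entry) (i, j) ≤ _
      rw [hu]
      have := s.le_card (jdtPathF s.entry (i + j + 1)).1 (jdtPathF s.entry (i + j + 1)).2
      simp only [ev]
      omega
    · have hu : ev (jdtF s.entry) (i, j) = ev s.entry (i, j) - 1 := jdtF_off hon
      show ev (jdtF s.entry) (i, j) ≤ _
      rw [hu]
      have := s.le_card i j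
      simp only [ev]
      omega
  injOn := by
    intro i j i' j' hm hm' heq
    rw [mem_jdtShape] at hm hm'
    -- source cell of a cell of the slided tableau
    have key : ∀ c : ℕ × ℕ, c ≠ exitCell s → c ∈ ν →
        ∃ w : ℕ × ℕ, w ∈ ν ∧ ev s.entry w = ev (jdtF s.entry) c + 1 ∧
          (jdtPathF s.entry (c.1 + c.2) = c → w = jdtPathF s.entry (c.1 + c.2 + 1)) ∧
          (jdtPathF s.entry (c.1 + c.2) ≠ c → w = c) := by
      intro c hne hcν
      by_cases hon : jdtPathF s.entry (c.1 + c.2) = c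
      · have hlt : c.1 + c.2 < exitIdx s := by
          have := idx_lt_exit s hν (k := c.1 + c.2) (by rwa [hon]) (by rwa [hon])
          omega
        refine ⟨jdtPathF s.entry (c.1 + c.2 + 1), path_mem_of_le s hν hlt, ?_, fun _ => rfl,
          fun h => absurd hon h⟩
        have hu := jdtF_at_path s.entry (c.1 + c.2)
        rw [hon] at hu
        have hnz : ev s.entry (jdtPathF s.entry (c.1 + c.2 + 1)) ≠ 0 :=
          (path_nonzero_iff s hν _).mpr hlt
        omega
      · refine ⟨c, hcν, ?_, fun h => absurd h hon, fun _ => rfl⟩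
        have hu : ev (jdtF s.entry) c = ev s.entry c - 1 := jdtF_off hon
        have := (s.mem_iff' c).mp hcν
        omega
    obtain ⟨w, hwν, hwv, hwon, hwoff⟩ := key (i, j) hm.1 hm.2
    obtain ⟨w', hwν', hwv', hwon', hwoff'⟩ := key (i', j') hm'.1 hm'.2
    have hww : w = w' := by
      apply s.injOn w.1 w.2 w'.1 w'.2 hwν hwν'
      show ev s.entry w = ev s.entry w'
      rw [hwv, hwv']
      show ev (jdtF s.entry) (i, j) + 1 = ev (jdtF s.entry) (i', j') + 1
      simp only [ev]
      omega
    by_cases hon : jdtPathF s.entry ((i, j).1 + (i, j).2) = (i, j) <;>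
      by_cases hon' : jdtPathF s.entry ((i', j').1 + (i', j').2) = (i', j')
    · have h1 := hwon hon
      have h2 := hwon' hon'
      rw [h1, h2] at hww
      have := path_inj s.entry hww
      have hij : (i, j) = jdtPathF s.entry ((i, j).1 + (i, j).2) := hon.symm
      have hij' : (i', j') = jdtPathF s.entry ((i', j').1 + (i', j').2) := hon'.symm
      rw [hij, hij']
      rw [show (i, j).1 + (i, j).2 = (i', j').1 + (i', j').2 by omega]
    · exfalso
      have h1 := hwon hon
      have h2 := hwoff' hon'
      rw [h1, h2] at hww
      apply hon'
      have hs : ((i', j') : ℕ × ℕ).1 + ((i', j') : ℕ × ℕ).2 = (i, j).1 + (i, j).2 + 1 := by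
        rw [← hww, path_sum]
      rw [hs, hww]
    · exfalso
      have h1 := hwoff hon
      have h2 := hwon' hon'
      rw [h1, h2] at hww
      apply hon
      have hs : ((i, j) : ℕ × ℕ).1 + ((i, j) : ℕ × ℕ).2 = (i', j').1 + (i', j').2 + 1 := by
        rw [hww, path_sum]
      rw [hs, ← hww]
    · rw [← hwoff hon, hww, hwoff' hon']
  row_lt := by
    intro i j hmem
    rw [mem_jdtShape] at hmem
    have hc : ((i, j) : ℕ × ℕ) ∈ jdtShape s hν :=
      (jdtShape s hν).up_left_mem le_rfl (Nat.le_succ j) (by rw [mem_jdtShape]; exact hmem)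
    rw [mem_jdtShape] at hc
    show ev (jdtF s.entry) (i, j) < ev (jdtF s.entry) (rt (i, j))
    by_cases hon : jdtPathF s.entry (i + j) = (i, j)
    · have hlt : i + j < exitIdx s := idx_lt_exit s hν (by rw [hon]; exact hc.2)
        (by rw [hon]; exact hc.1)
      have hstep : jdtPathF s.entry (i + j + 1) = jdtStepF s.entry (i, j) := by
        rw [jdtPathF_succ, hon]
      have hu := jdtF_at_path s.entry (i + j)
      rw [hon] at hu
      rcases step_eq_dn_or_rt s.entry (i, j) with hs | hs
      · -- path went down; (i, j+1) is off the path
        have hoff : jdtPathF s.entry ((rt (i, j)).1 + (rt (i, j)).2) ≠ rt (i, j) := by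
          show jdtPathF s.entry (i + (j + 1)) ≠ rt (i, j)
          rw [show i + (j + 1) = i + j + 1 by omega, hstep, hs]
          exact dn_ne_rt _
        have hu2 : ev (jdtF s.entry) (rt (i, j)) = ev s.entry (rt (i, j)) - 1 :=
          jdtF_off hoff
        have hcond := (step_eq_dn_iff s.entry (i, j)).mp hs
        have hrtnz : ev s.entry (rt (i, j)) ≠ 0 := by
          have := (s.mem_iff' (rt (i, j))).mp hmem.2
          omega
        have hdlt : ev s.entry (dn (i, j)) < ev s.entry (rt (i, j)) := by
          rcases hcond.2 with h | h
          · exact absurd h hrtnz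
          · exact h
        rw [hu, hu2, hstep, hs]
        have := hcond.1
        omega
      · -- path went right: both cells on the path
        have hon2 : jdtPathF s.entry (i + j + 1) = rt (i, j) := by
          rw [hstep, hs]
        have hlt2 : i + j + 1 < exitIdx s := idx_lt_exit s hν
          (by rw [hon2]; exact hmem.2) (by rw [hon2]; exact hmem.1)
        have hu2 := jdtF_at_path s.entry (i + j + 1)
        rw [hon2] at hu2
        have hnz2 : ev s.entry (jdtPathF s.entry (i + j + 1 + 1)) ≠ 0 :=
          (path_nonzero_iff s hν _).mpr hlt2
        have hinc := (path_lt_succ s.isTab hnz2).2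
        have hnz1 : ev s.entry (jdtPathF s.entry (i + j + 1)) ≠ 0 :=
          (path_nonzero_iff s hν _).mpr hlt
        rw [hu, hu2]
        omega
    · by_cases hon2 : jdtPathF s.entry (i + j + 1) = rt (i, j)
      · -- c off path, rt c on path
        have hlt2 : i + j + 1 < exitIdx s := idx_lt_exit s hν
          (by rw [hon2]; exact hmem.2) (by rw [hon2]; exact hmem.1)
        have hu : ev (jdtF s.entry) (i, j) = ev s.entry (i, j) - 1 := by
          apply jdtF_off
          show jdtPathF s.entry (i + j) ≠ (i, j)
          exact hon
        have hu2 := jdtF_at_path s.entry (i + j + 1)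
        rw [hon2] at hu2
        have hnz2 : ev s.entry (jdtPathF s.entry (i + j + 1 + 1)) ≠ 0 :=
          (path_nonzero_iff s hν _).mpr hlt2
        have hinc := (path_lt_succ s.isTab hnz2).2
        rw [hon2] at hinc
        have hrow : ev s.entry (i, j) < ev s.entry (rt (i, j)) := s.row_lt i j hmem.2
        have hpos : 1 ≤ ev s.entry (i, j) := (s.mem_iff' (i, j)).mp hc.2
        rw [hu, hu2]
        omega
      · -- both off the path
        have hu : ev (jdtF s.entry) (i, j) = ev s.entry (i, j) - 1 := jdtF_off hon
        have hu2 : ev (jdtF s.entry) (rt (i, j)) = ev s.entry (rt (i, j)) - 1 := by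
          apply jdtF_off
          show jdtPathF s.entry (i + (j + 1)) ≠ rt (i, j)
          rw [show i + (j + 1) = i + j + 1 by omega]
          exact hon2
        have hrow : ev s.entry (i, j) < ev s.entry (rt (i, j)) := s.row_lt i j hmem.2
        have hpos : 1 ≤ ev s.entry (i, j) := (s.mem_iff' (i, j)).mp hc.2
        rw [hu, hu2]
        omega
  col_lt := by
    intro i j hmem
    rw [mem_jdtShape] at hmem
    have hc : ((i, j) : ℕ × ℕ) ∈ jdtShape s hν :=
      (jdtShape s hν).up_left_mem (Nat.le_succ i) le_rfl (by rw [mem_jdtShape]; exact hmem)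
    rw [mem_jdtShape] at hc
    show ev (jdtF s.entry) (i, j) < ev (jdtF s.entry) (dn (i, j))
    by_cases hon : jdtPathF s.entry (i + j) = (i, j)
    · have hlt : i + j < exitIdx s := idx_lt_exit s hν (by rw [hon]; exact hc.2)
        (by rw [hon]; exact hc.1)
      have hstep : jdtPathF s.entry (i + j + 1) = jdtStepF s.entry (i, j) := by
        rw [jdtPathF_succ, hon]
      have hu := jdtF_at_path s.entry (i + j)
      rw [hon] at hu
      rcases step_eq_dn_or_rt s.entry (i, j) with hs | hs
      · -- path went down: both cells on the path
        have hon2 : jdtPathF s.entry (i + j + 1) = dn (i, j) := by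
          rw [hstep, hs]
        have hlt2 : i + j + 1 < exitIdx s := idx_lt_exit s hν
          (by rw [hon2]; exact hmem.2) (by rw [hon2]; exact hmem.1)
        have hu2 := jdtF_at_path s.entry (i + j + 1)
        rw [hon2] at hu2
        have hnz2 : ev s.entry (jdtPathF s.entry (i + j + 1 + 1)) ≠ 0 :=
          (path_nonzero_iff s hν _).mpr hlt2
        have hinc := (path_lt_succ s.isTab hnz2).2
        have hnz1 : ev s.entry (jdtPathF s.entry (i + j + 1)) ≠ 0 :=
          (path_nonzero_iff s hν _).mpr hlt
        rw [hu, hu2]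
        omega
      · -- path went right; (i+1, j) is off the path
        have hoff : jdtPathF s.entry ((dn (i, j)).1 + (dn (i, j)).2) ≠ dn (i, j) := by
          show jdtPathF s.entry (i + 1 + j) ≠ dn (i, j)
          rw [show i + 1 + j = i + j + 1 by omega, hstep, hs]
          exact Ne.symm (dn_ne_rt _)
        have hu2 : ev (jdtF s.entry) (dn (i, j)) = ev s.entry (dn (i, j)) - 1 :=
          jdtF_off hoff
        have hcond := (step_eq_rt_iff s.entry (i, j)).mp hs
        push_neg at hcond
        have hdnz : ev s.entry (dn (i, j)) ≠ 0 := by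
          have := (s.mem_iff' (dn (i, j))).mp hmem.2
          omega
        obtain ⟨hrtnz, hge⟩ := hcond hdnz
        have hne : ev s.entry (rt (i, j)) ≠ ev s.entry (dn (i, j)) := by
          intro heq
          have hrtν : rt (i, j) ∈ ν := (s.mem_iff' _).mpr (by omega)
          have := s.injOn (rt (i, j)).1 (rt (i, j)).2 (dn (i, j)).1 (dn (i, j)).2
            hrtν hmem.2 heq
          exact (dn_ne_rt (i, j)) ((Prod.ext_iff.mpr
            ⟨congrArg Prod.fst this, congrArg Prod.snd this⟩).symm)
        rw [hu, hu2, hstep, hs]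
        omega
    · by_cases hon2 : jdtPathF s.entry (i + j + 1) = dn (i, j)
      · have hlt2 : i + j + 1 < exitIdx s := idx_lt_exit s hν
          (by rw [hon2]; exact hmem.2) (by rw [hon2]; exact hmem.1)
        have hu : ev (jdtF s.entry) (i, j) = ev s.entry (i, j) - 1 := jdtF_off hon
        have hu2 := jdtF_at_path s.entry (i + j + 1)
        rw [hon2] at hu2
        have hnz2 : ev s.entry (jdtPathF s.entry (i + j + 1 + 1)) ≠ 0 :=
          (path_nonzero_iff s hν _).mpr hlt2
        have hinc := (path_lt_succ s.isTab hnz2).2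
        rw [hon2] at hinc
        have hcol : ev s.entry (i, j) < ev s.entry (dn (i, j)) := s.col_lt i j hmem.2
        have hpos : 1 ≤ ev s.entry (i, j) := (s.mem_iff' (i, j)).mp hc.2
        rw [hu, hu2]
        omega
      · have hu : ev (jdtF s.entry) (i, j) = ev s.entry (i, j) - 1 := jdtF_off hon
        have hu2 : ev (jdtF s.entry) (dn (i, j)) = ev s.entry (dn (i, j)) - 1 := by
          apply jdtF_off
          show jdtPathF s.entry (i + 1 + j) ≠ dn (i, j)
          rw [show i + 1 + j = i + j + 1 by omega]
          exact hon2
        have hcol : ev s.entry (i, j) < ev s.entry (dn (i, j)) := s.col_lt i j hmem.2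
        have hpos : 1 ≤ ev s.entry (i, j) := (s.mem_iff' (i, j)).mp hc.2
        rw [hu, hu2]
        omega

lemma jdtSYT_entry : (jdtSYT s hν).entry = jdtF s.entry := rfl

end FinTab2

end JDTaux
namespace JDTaux

lemma dn_inj {a b : ℕ × ℕ} (h : dn a = dn b) : a = b := by
  simp only [dn, Prod.ext_iff] at h ⊢
  omega

lemma rt_inj {a b : ℕ × ℕ} (h : rt a = rt b) : a = b := by
  simp only [rt, Prod.ext_iff] at h ⊢
  omega

lemma _root_.SYT.row_lt' {ν : YoungDiagram} (s : SYT ν) {c : ℕ × ℕ} (h : rt c ∈ ν) :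
    ev s.entry c < ev s.entry (rt c) := s.row_lt c.1 c.2 h

lemma _root_.SYT.col_lt' {ν : YoungDiagram} (s : SYT ν) {c : ℕ × ℕ} (h : dn c ∈ ν) :
    ev s.entry c < ev s.entry (dn c) := s.col_lt c.1 c.2 h

section Uniq

variable {ν : YoungDiagram} (s s' : SYT ν) (hν : 0 < ν.card)
  (h : jdtF s.entry = jdtF s'.entry)

include hν h

lemma jdtShape_eq_of_jdt_eq : jdtShape s hν = jdtShape s' hν := by
  apply YoungDiagram.ext
  apply Finset.ext
  intro c
  rw [YoungDiagram.mem_cells, YoungDiagram.mem_cells, mem_jdtShape s hν, mem_jdtShape s' hν,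
    ← u_pos_iff s hν c, ← u_pos_iff s' hν c, h]

lemma exitCell_eq_of_jdt_eq : exitCell s = exitCell s' := by
  by_contra hne
  have h1 : exitCell s ∈ jdtShape s' hν :=
    (mem_jdtShape s' hν).mpr ⟨hne, exit_mem s hν⟩
  rw [← jdtShape_eq_of_jdt_eq s s' hν h, mem_jdtShape] at h1
  exact h1.1 rfl

lemma exitIdx_eq_of_jdt_eq : exitIdx s = exitIdx s' := by
  have h1 : (exitCell s).1 + (exitCell s).2 = exitIdx s := path_sum s.entry (exitIdx s)
  have h2 : (exitCell s').1 + (exitCell s').2 = exitIdx s' := path_sum s'.entry (exitIdx s')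
  rw [exitCell_eq_of_jdt_eq s s' hν h] at h1
  omega

lemma path_eq_of_jdt_eq : ∀ k, k ≤ exitIdx s →
    jdtPathF s.entry k = jdtPathF s'.entry k := by
  have hm := exitIdx_eq_of_jdt_eq s s' hν h
  have claim : ∀ d, jdtPathF s.entry (exitIdx s - d) = jdtPathF s'.entry (exitIdx s - d) := by
    intro d
    induction d with
    | zero =>
      have hec := exitCell_eq_of_jdt_eq s s' hν h
      unfold exitCell at hec
      rw [← hm] at hec
      exact hec
    | succ d ih =>
      rcases Nat.lt_or_ge (d + 1) (exitIdx s + 1) with hd | hd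
      · have hk1 : exitIdx s - (d + 1) + 1 = exitIdx s - d := by omega
        have hkm : exitIdx s - (d + 1) + 1 ≤ exitIdx s := by omega
        -- abbreviate
        generalize hkk : exitIdx s - (d + 1) = k at hk1 hkm
        have hq : jdtPathF s.entry (k + 1) = jdtPathF s'.entry (k + 1) := by
          rw [hk1]; exact ih
        have hqν : jdtPathF s.entry (k + 1) ∈ ν := path_mem_of_le s hν hkm
        have hstep : jdtStepF s.entry (jdtPathF s.entry k) = jdtPathF s.entry (k + 1) :=
          (jdtPathF_succ s.entry k).symm
        have hstep' : jdtStepF s'.entry (jdtPathF s'.entry k) = jdtPathF s'.entry (k + 1) :=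
          (jdtPathF_succ s'.entry k).symm
        have haν : jdtPathF s.entry k ∈ ν := path_mem_of_le s hν (by omega)
        have hbν : jdtPathF s'.entry k ∈ ν := path_mem_of_le s' hν (by rw [← hm]; omega)
        rcases step_eq_dn_or_rt s.entry (jdtPathF s.entry k) with hA | hA <;>
          rcases step_eq_dn_or_rt s'.entry (jdtPathF s'.entry k) with hB | hB
        · apply dn_inj
          rw [← hA, ← hB, hstep, hstep', hq]
        · -- s goes down, s' goes right : contradiction
          exfalso
          have hab : jdtPathF s.entry k ≠ jdtPathF s'.entry k := by
            intro he
            have : dn (jdtPathF s.entry k) = rt (jdtPathF s.entry k) := by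
              rw [← hA, hstep, hq, ← hstep', hB, ← he]
            exact dn_ne_rt _ this
          have hdnq : dn (jdtPathF s.entry k) = jdtPathF s.entry (k + 1) := by
            rw [← hA, hstep]
          have hrtq : rt (jdtPathF s'.entry k) = jdtPathF s.entry (k + 1) := by
            rw [← hB, hstep', hq]
          have ua1 := jdtF_at_path s.entry k
          have ua2 : ev (jdtF s'.entry) (jdtPathF s.entry k)
              = ev s'.entry (jdtPathF s.entry k) - 1 := by
            apply jdtF_off
            rw [path_sum]
            exact fun he => hab he.symm
          have ub1 := jdtF_at_path s'.entry k
          rw [← hq] at ub1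
          have ub2 : ev (jdtF s.entry) (jdtPathF s'.entry k)
              = ev s.entry (jdtPathF s'.entry k) - 1 := by
            apply jdtF_off
            rw [path_sum]
            exact hab
          have hlink1 : ev (jdtF s.entry) (jdtPathF s.entry k)
              = ev (jdtF s'.entry) (jdtPathF s.entry k) := by rw [h]
          have hlink2 : ev (jdtF s.entry) (jdtPathF s'.entry k)
              = ev (jdtF s'.entry) (jdtPathF s'.entry k) := by rw [h]
          have hq1 : 1 ≤ ev s.entry (jdtPathF s.entry (k + 1)) := (s.mem_iff' _).mp hqν
          have hq1' : 1 ≤ ev s'.entry (jdtPathF s.entry (k + 1)) := (s'.mem_iff' _).mp hqν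
          have ha1 : 1 ≤ ev s'.entry (jdtPathF s.entry k) := (s'.mem_iff' _).mp haν
          have hb1 : 1 ≤ ev s.entry (jdtPathF s'.entry k) := (s.mem_iff' _).mp hbν
          have iq1 : ev s.entry (jdtPathF s'.entry k)
              < ev s.entry (jdtPathF s.entry (k + 1)) := by
            have := s.row_lt' (c := jdtPathF s'.entry k) (by rw [hrtq]; exact hqν)
            rwa [hrtq] at this
          have iq2 : ev s'.entry (jdtPathF s.entry k)
              < ev s'.entry (jdtPathF s.entry (k + 1)) := by
            have := s'.col_lt' (c := jdtPathF s.entry k) (by rw [hdnq]; exact hqν)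
            rwa [hdnq] at this
          omega
        · -- s goes right, s' goes down : contradiction (symmetric)
          exfalso
          have hab : jdtPathF s.entry k ≠ jdtPathF s'.entry k := by
            intro he
            have : dn (jdtPathF s'.entry k) = rt (jdtPathF s'.entry k) := by
              rw [← hB, hstep', ← hq, ← hstep, hA, he]
            exact dn_ne_rt _ this
          have hdnq : dn (jdtPathF s'.entry k) = jdtPathF s.entry (k + 1) := by
            rw [← hB, hstep', hq]
          have hrtq : rt (jdtPathF s.entry k) = jdtPathF s.entry (k + 1) := by
            rw [← hA, hstep]
          have ua1 := jdtF_at_path s'.entry k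
          rw [← hq] at ua1
          have ua2 : ev (jdtF s.entry) (jdtPathF s'.entry k)
              = ev s.entry (jdtPathF s'.entry k) - 1 := by
            apply jdtF_off
            rw [path_sum]
            exact hab
          have ub1 := jdtF_at_path s.entry k
          have ub2 : ev (jdtF s'.entry) (jdtPathF s.entry k)
              = ev s'.entry (jdtPathF s.entry k) - 1 := by
            apply jdtF_off
            rw [path_sum]
            exact fun he => hab he.symm
          have hlink1 : ev (jdtF s.entry) (jdtPathF s.entry k)
              = ev (jdtF s'.entry) (jdtPathF s.entry k) := by rw [h]
          have hlink2 : ev (jdtF s.entry) (jdtPathF s'.entry k)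
              = ev (jdtF s'.entry) (jdtPathF s'.entry k) := by rw [h]
          have hq1 : 1 ≤ ev s.entry (jdtPathF s.entry (k + 1)) := (s.mem_iff' _).mp hqν
          have hq1' : 1 ≤ ev s'.entry (jdtPathF s.entry (k + 1)) := (s'.mem_iff' _).mp hqν
          have ha1 : 1 ≤ ev s.entry (jdtPathF s'.entry k) := (s.mem_iff' _).mp hbν
          have hb1 : 1 ≤ ev s'.entry (jdtPathF s.entry k) := (s'.mem_iff' _).mp haν
          have iq1 : ev s'.entry (jdtPathF s.entry k)
              < ev s'.entry (jdtPathF s.entry (k + 1)) := by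
            have := s'.row_lt' (c := jdtPathF s.entry k) (by rw [hrtq]; exact hqν)
            rwa [hrtq] at this
          have iq2 : ev s.entry (jdtPathF s'.entry k)
              < ev s.entry (jdtPathF s.entry (k + 1)) := by
            have := s.col_lt' (c := jdtPathF s'.entry k) (by rw [hdnq]; exact hqν)
            rwa [hdnq] at this
          omega
        · apply rt_inj
          rw [← hA, ← hB, hstep, hstep', hq]
      · have h0 : exitIdx s - (d + 1) = 0 := by omega
        rw [h0]
        rfl
  intro k hk
  have h2 := claim (exitIdx s - k)
  rw [show exitIdx s - (exitIdx s - k) = k by omega] at h2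
  exact h2

/-- **Injectivity of the finite jeu de taquin slide on tableaux of a fixed shape.** -/
lemma jdt_inj : s = s' := by
  have hm := exitIdx_eq_of_jdt_eq s s' hν h
  have hpath := path_eq_of_jdt_eq s s' hν h
  apply SYT.ext'
  funext i j
  by_cases hcν : ((i, j) : ℕ × ℕ) ∈ ν
  · by_cases hon : jdtPathF s.entry (i + j) = ((i, j) : ℕ × ℕ)
    · have hile : i + j ≤ exitIdx s := idx_le_exit s hν (by rwa [hon])
      rcases Nat.eq_zero_or_pos (i + j) with hz | hz
      · have hij : i = 0 ∧ j = 0 := by omega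
        rw [hij.1, hij.2, s.entry_origin hν, s'.entry_origin hν]
      · obtain ⟨k', hk'⟩ := Nat.exists_eq_succ_of_ne_zero (by omega : i + j ≠ 0)
        have hon' : jdtPathF s'.entry (i + j) = ((i, j) : ℕ × ℕ) := by
          rw [← hpath (i + j) hile]; exact hon
        have h1 := jdtF_at_path s.entry k'
        have h2 := jdtF_at_path s'.entry k'
        rw [show k' + 1 = i + j from by omega] at h1 h2
        rw [hon] at h1
        rw [hon'] at h2
        rw [hpath k' (by omega)] at h1
        rw [h] at h1
        have e1 : 1 ≤ ev s.entry (i, j) := (s.mem_iff' _).mp hcν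
        have e2 : 1 ≤ ev s'.entry (i, j) := (s'.mem_iff' _).mp hcν
        show ev s.entry (i, j) = ev s'.entry (i, j)
        omega
    · have hon' : jdtPathF s'.entry (i + j) ≠ ((i, j) : ℕ × ℕ) := by
        intro he
        have hnz : ev s'.entry (jdtPathF s'.entry (i + j)) ≠ 0 := by
          rw [he]
          have := (s'.mem_iff' ((i, j) : ℕ × ℕ)).mp hcν
          omega
        have hle : i + j ≤ exitIdx s' := (path_nonzero_iff s' hν _).mp hnz
        rw [← hpath (i + j) (by omega)] at he
        exact hon he
      have h1 : ev (jdtF s.entry) ((i, j) : ℕ × ℕ) = ev s.entry (i, j) - 1 := jdtF_off hon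
      have h2 : ev (jdtF s'.entry) ((i, j) : ℕ × ℕ) = ev s'.entry (i, j) - 1 := jdtF_off hon'
      rw [h] at h1
      have e1 : 1 ≤ ev s.entry (i, j) := (s.mem_iff' _).mp hcν
      have e2 : 1 ≤ ev s'.entry (i, j) := (s'.mem_iff' _).mp hcν
      show ev s.entry (i, j) = ev s'.entry (i, j)
      omega
  · rw [s.entry_eq_zero hcν, s'.entry_eq_zero hcν]

end Uniq

end JDTaux
namespace JDTaux

/-- Entry functions determine the pair (shape, tableau). -/
lemma sigma_ext {l l' : YoungDiagram} {a : SYT l} {b : SYT l'} (h : a.entry = b.entry) :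
    (⟨l, a⟩ : Σ x : YoungDiagram, SYT x) = ⟨l', b⟩ := by
  have hl : l = l' := by
    apply YoungDiagram.ext
    apply Finset.ext
    intro c
    rw [YoungDiagram.mem_cells, YoungDiagram.mem_cells, a.mem_iff' c, b.mem_iff' c, h]
  subst hl
  rw [SYT.ext' h]

section Rem

variable {ν : YoungDiagram} (s : SYT ν) (hν : 0 < ν.card)

noncomputable def maxCell : ℕ × ℕ := (s.exists_max_cell hν).choose

lemma maxCell_mem : maxCell s hν ∈ ν := (s.exists_max_cell hν).choose_spec.1

lemma maxCell_entry : ev s.entry (maxCell s hν) = ν.card :=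
  (s.exists_max_cell hν).choose_spec.2.1

lemma maxCell_dn : dn (maxCell s hν) ∉ ν := (s.exists_max_cell hν).choose_spec.2.2.1

lemma maxCell_rt : rt (maxCell s hν) ∉ ν := (s.exists_max_cell hν).choose_spec.2.2.2

noncomputable def remShape : YoungDiagram :=
  eraseCorner ν (maxCell s hν) (maxCell_dn s hν) (maxCell_rt s hν)

lemma mem_remShape {c : ℕ × ℕ} : c ∈ remShape s hν ↔ c ≠ maxCell s hν ∧ c ∈ ν :=
  mem_eraseCorner

lemma card_remShape : (remShape s hν).card = ν.card - 1 :=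
  card_eraseCorner (maxCell_mem s hν)

lemma entry_le_of_ne_max {c : ℕ × ℕ} (hc : c ∈ ν) (hne : c ≠ maxCell s hν) :
    ev s.entry c ≤ ν.card - 1 := by
  have h1 := s.le_card c.1 c.2
  have h2 : ev s.entry c ≠ ν.card := by
    intro he
    apply hne
    apply s.injOn c.1 c.2 (maxCell s hν).1 (maxCell s hν).2 hc (maxCell_mem s hν)
    rw [show s.entry c.1 c.2 = ev s.entry c from rfl, he, ← maxCell_entry s hν]
    rfl
  simp only [ev] at h2 ⊢
  omega

noncomputable def remSYT : SYT (remShape s hν) where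
  entry := trunc (ν.card - 1) s.entry
  mem_iff := by
    intro i j
    rw [mem_remShape]
    show _ ↔ 1 ≤ ev (trunc (ν.card - 1) s.entry) (i, j)
    by_cases hcν : ((i, j) : ℕ × ℕ) ∈ ν
    · by_cases hne : ((i, j) : ℕ × ℕ) = maxCell s hν
      · have hev : ev s.entry ((i, j) : ℕ × ℕ) = ν.card := by rw [hne, maxCell_entry]
        have hgt : ¬ ev s.entry ((i, j) : ℕ × ℕ) ≤ ν.card - 1 := by rw [hev]; omega
        rw [ev_trunc_of_gt hgt]
        simp [hne]
      · have hle := entry_le_of_ne_max s hν hcν hne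
        rw [ev_trunc_of_le hle]
        exact ⟨fun _ => (s.mem_iff' ((i, j) : ℕ × ℕ)).mp hcν, fun _ => ⟨hne, hcν⟩⟩
    · have hz : ev s.entry ((i, j) : ℕ × ℕ) = 0 := by
        have := s.entry_eq_zero (i := i) (j := j) hcν
        exact this
      rw [ev_trunc_of_le (by omega), hz]
      simp [hcν]
  le_card := by
    intro i j
    rw [card_remShape]
    show ev (trunc (ν.card - 1) s.entry) (i, j) ≤ _
    rw [ev_trunc]
    split <;> omega
  injOn := by
    intro i j i' j' hm hm' heq
    rw [mem_remShape] at hm hm'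
    have h1 := entry_le_of_ne_max s hν hm.2 hm.1
    have h2 := entry_le_of_ne_max s hν hm'.2 hm'.1
    apply s.injOn i j i' j' hm.2 hm'.2
    have e1 : trunc (ν.card - 1) s.entry i j = s.entry i j := trunc_eq_of_le h1
    have e2 : trunc (ν.card - 1) s.entry i' j' = s.entry i' j' := trunc_eq_of_le h2
    rw [← e1, ← e2]
    exact heq
  row_lt := by
    intro i j hm
    have hc : ((i, j) : ℕ × ℕ) ∈ remShape s hν :=
      (remShape s hν).up_left_mem le_rfl (Nat.le_succ j) hm
    rw [mem_remShape] at hm hc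
    have h1 := entry_le_of_ne_max s hν hc.2 hc.1
    have h2 := entry_le_of_ne_max s hν hm.2 hm.1
    have e1 : trunc (ν.card - 1) s.entry i j = s.entry i j := trunc_eq_of_le h1
    have e2 : trunc (ν.card - 1) s.entry i (j + 1) = s.entry i (j + 1) := trunc_eq_of_le h2
    rw [e1, e2]
    exact s.row_lt i j hm.2
  col_lt := by
    intro i j hm
    have hc : ((i, j) : ℕ × ℕ) ∈ remShape s hν :=
      (remShape s hν).up_left_mem (Nat.le_succ i) le_rfl hm
    rw [mem_remShape] at hm hc
    have h1 := entry_le_of_ne_max s hν hc.2 hc.1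
    have h2 := entry_le_of_ne_max s hν hm.2 hm.1
    have e1 : trunc (ν.card - 1) s.entry i j = s.entry i j := trunc_eq_of_le h1
    have e2 : trunc (ν.card - 1) s.entry (i + 1) j = s.entry (i + 1) j := trunc_eq_of_le h2
    rw [e1, e2]
    exact s.col_lt i j hm.2

lemma remShape_covers : YDcovers (remShape s hν) ν := by
  refine ⟨?_, ?_⟩
  · intro c hc
    have : c ∈ remShape s hν := by rwa [← YoungDiagram.mem_cells]
    rw [mem_remShape] at this
    rw [YoungDiagram.mem_cells]
    exact this.2
  · rw [card_remShape]
    omega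

/-- Two tableaux of the same shape with the same truncation agree. -/
lemma rem_inj (s' : SYT ν) (h : trunc (ν.card - 1) s.entry = trunc (ν.card - 1) s'.entry) :
    s = s' := by
  apply SYT.ext'
  funext i j
  by_cases hcν : ((i, j) : ℕ × ℕ) ∈ ν
  · have b1 := s.le_card i j
    have b2 := s'.le_card i j
    have p1 := s.entry_pos hcν
    have p2 := s'.entry_pos hcν
    have hcong := congrFun (congrFun h i) j
    by_cases ha : s.entry i j ≤ ν.card - 1 <;> by_cases hb : s'.entry i j ≤ ν.card - 1
    · rwa [trunc_eq_of_le ha, trunc_eq_of_le hb] at hcong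
    · rw [trunc_eq_of_le ha, trunc_eq_zero hb] at hcong
      omega
    · rw [trunc_eq_zero ha, trunc_eq_of_le hb] at hcong
      omega
    · omega
  · rw [s.entry_eq_zero hcν, s'.entry_eq_zero hcν]

end Rem

section Ext

variable {l ν : YoungDiagram} (u : SYT l)

/-- The entry function extending `u` by the value `l.card + 1` on the new cell. -/
def extEntry (ν : YoungDiagram) : ℕ → ℕ → ℕ := fun i j =>
  if (i, j) ∈ ν ∧ (i, j) ∉ l then l.card + 1 else u.entry i j

variable (hsub : l.cells ⊆ ν.cells) (hcard : ν.card = l.card + 1)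

include hsub hcard

omit hcard in
lemma mem_sub {c : ℕ × ℕ} (hc : c ∈ l) : c ∈ ν := by
  rw [← YoungDiagram.mem_cells] at hc ⊢
  exact hsub hc

/-- The extension of a standard tableau by one box. -/
noncomputable def extSYT : SYT ν where
  entry := extEntry u ν
  mem_iff := by
    intro i j
    unfold extEntry
    by_cases hnew : ((i, j) : ℕ × ℕ) ∈ ν ∧ ((i, j) : ℕ × ℕ) ∉ l
    · rw [if_pos hnew]
      simp only [hnew.1, true_iff]
      omega
    · rw [if_neg hnew]
      by_cases hl : ((i, j) : ℕ × ℕ) ∈ l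
      · simp only [mem_sub hsub hl, true_iff]
        exact u.entry_pos hl
      · have hν' : ((i, j) : ℕ × ℕ) ∉ ν := fun hh => hnew ⟨hh, hl⟩
        simp only [hν', false_iff]
        rw [u.entry_eq_zero hl]
        omega
  le_card := by
    intro i j
    unfold extEntry
    have := u.le_card i j
    split <;> omega
  injOn := by
    intro i j i' j' hm hm' heq
    unfold extEntry at heq
    by_cases h1 : ((i, j) : ℕ × ℕ) ∈ ν ∧ ((i, j) : ℕ × ℕ) ∉ l <;>
      by_cases h2 : ((i', j') : ℕ × ℕ) ∈ ν ∧ ((i', j') : ℕ × ℕ) ∉ l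
    · obtain ⟨b, hb⟩ := by
        have hsd : (ν.cells \ l.cells).card = 1 := by
          rw [Finset.card_sdiff_of_subset hsub]
          show ν.card - l.card = 1
          omega
        exact Finset.card_eq_one.mp hsd
      have m1 : ((i, j) : ℕ × ℕ) ∈ ν.cells \ l.cells := Finset.mem_sdiff.mpr
        ⟨(YoungDiagram.mem_cells _).mpr h1.1, fun hh => h1.2 ((YoungDiagram.mem_cells _).mp hh)⟩
      have m2 : ((i', j') : ℕ × ℕ) ∈ ν.cells \ l.cells := Finset.mem_sdiff.mpr
        ⟨(YoungDiagram.mem_cells _).mpr h2.1, fun hh => h2.2 ((YoungDiagram.mem_cells _).mp hh)⟩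
      rw [hb, Finset.mem_singleton] at m1 m2
      rw [m1, m2]
    · rw [if_pos h1, if_neg h2] at heq
      have hl : ((i', j') : ℕ × ℕ) ∈ l := by
        by_contra hh
        exact h2 ⟨hm', hh⟩
      have := u.le_card i' j'
      omega
    · rw [if_neg h1, if_pos h2] at heq
      have := u.le_card i j
      omega
    · rw [if_neg h1, if_neg h2] at heq
      have hl1 : ((i, j) : ℕ × ℕ) ∈ l := by
        by_contra hh
        exact h1 ⟨hm, hh⟩
      have hl2 : ((i', j') : ℕ × ℕ) ∈ l := by
        by_contra hh
        exact h2 ⟨hm', hh⟩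
      exact u.injOn i j i' j' hl1 hl2 heq
  row_lt := by
    intro i j hm
    unfold extEntry
    by_cases h2 : ((i, j + 1) : ℕ × ℕ) ∈ ν ∧ ((i, j + 1) : ℕ × ℕ) ∉ l
    · rw [if_pos h2]
      have h1 : ¬(((i, j) : ℕ × ℕ) ∈ ν ∧ ((i, j) : ℕ × ℕ) ∉ l) := by
        rintro ⟨ha, hb⟩
        obtain ⟨b, hb'⟩ := by
          have hsd : (ν.cells \ l.cells).card = 1 := by
            rw [Finset.card_sdiff_of_subset hsub]
            show ν.card - l.card = 1
            omega
          exact Finset.card_eq_one.mp hsd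
        have m1 : ((i, j) : ℕ × ℕ) ∈ ν.cells \ l.cells := Finset.mem_sdiff.mpr
          ⟨(YoungDiagram.mem_cells _).mpr ha, fun hh => hb ((YoungDiagram.mem_cells _).mp hh)⟩
        have m2 : ((i, j + 1) : ℕ × ℕ) ∈ ν.cells \ l.cells := Finset.mem_sdiff.mpr
          ⟨(YoungDiagram.mem_cells _).mpr h2.1, fun hh => h2.2 ((YoungDiagram.mem_cells _).mp hh)⟩
        rw [hb', Finset.mem_singleton] at m1 m2
        have hcontra := m1.trans m2.symm
        simp at hcontra
      rw [if_neg h1]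
      have := u.le_card i j
      omega
    · rw [if_neg h2]
      have hl2 : ((i, j + 1) : ℕ × ℕ) ∈ l := by
        by_contra hh
        exact h2 ⟨hm, hh⟩
      have hl1 : ((i, j) : ℕ × ℕ) ∈ l := l.up_left_mem le_rfl (Nat.le_succ j) hl2
      rw [if_neg (by rintro ⟨-, hb⟩; exact hb hl1)]
      exact u.row_lt i j hl2
  col_lt := by
    intro i j hm
    unfold extEntry
    by_cases h2 : ((i + 1, j) : ℕ × ℕ) ∈ ν ∧ ((i + 1, j) : ℕ × ℕ) ∉ l
    · rw [if_pos h2]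
      have h1 : ¬(((i, j) : ℕ × ℕ) ∈ ν ∧ ((i, j) : ℕ × ℕ) ∉ l) := by
        rintro ⟨ha, hb⟩
        obtain ⟨b, hb'⟩ := by
          have hsd : (ν.cells \ l.cells).card = 1 := by
            rw [Finset.card_sdiff_of_subset hsub]
            show ν.card - l.card = 1
            omega
          exact Finset.card_eq_one.mp hsd
        have m1 : ((i, j) : ℕ × ℕ) ∈ ν.cells \ l.cells := Finset.mem_sdiff.mpr
          ⟨(YoungDiagram.mem_cells _).mpr ha, fun hh => hb ((YoungDiagram.mem_cells _).mp hh)⟩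
        have m2 : ((i + 1, j) : ℕ × ℕ) ∈ ν.cells \ l.cells := Finset.mem_sdiff.mpr
          ⟨(YoungDiagram.mem_cells _).mpr h2.1, fun hh => h2.2 ((YoungDiagram.mem_cells _).mp hh)⟩
        rw [hb', Finset.mem_singleton] at m1 m2
        have hcontra := m1.trans m2.symm
        simp at hcontra
      rw [if_neg h1]
      have := u.le_card i j
      omega
    · rw [if_neg h2]
      have hl2 : ((i + 1, j) : ℕ × ℕ) ∈ l := by
        by_contra hh
        exact h2 ⟨hm, hh⟩
      have hl1 : ((i, j) : ℕ × ℕ) ∈ l := l.up_left_mem (Nat.le_succ i) le_rfl hl2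
      rw [if_neg (by rintro ⟨-, hb⟩; exact hb hl1)]
      exact u.col_lt i j hl2

lemma trunc_extSYT : trunc l.card (extSYT u hsub hcard).entry = u.entry := by
  funext i j
  show trunc l.card (extEntry u ν) i j = u.entry i j
  unfold trunc extEntry
  by_cases hnew : ((i, j) : ℕ × ℕ) ∈ ν ∧ ((i, j) : ℕ × ℕ) ∉ l
  · rw [if_pos hnew, if_neg (by omega)]
    exact (u.entry_eq_zero hnew.2).symm
  · rw [if_neg hnew, if_pos (u.le_card i j)]

end Ext

end JDTaux
namespace JDTaux

/-- Pairs of a shape covered by `ν` together with a standard tableau on it. -/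
def TPair (ν : YoungDiagram) := {p : Σ l : YoungDiagram, SYT l // YDcovers p.1 ν}

lemma TPair.entry_injective (ν : YoungDiagram) :
    Function.Injective (fun p : TPair ν => p.1.2.entry) := by
  rintro ⟨⟨l, a⟩, hp⟩ ⟨⟨l', b⟩, hq⟩ h
  exact Subtype.ext (sigma_ext h)

instance TPair.instFinite (ν : YoungDiagram) : Finite (TPair ν) := by
  apply Finite.of_injective (β := (↥ν.cells → Fin (ν.card + 1)))
    (fun p => fun c => ⟨p.1.2.entry (c : ℕ × ℕ).1 (c : ℕ × ℕ).2, by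
      have h1 := p.1.2.le_card (c : ℕ × ℕ).1 (c : ℕ × ℕ).2
      have h2 := p.2.2
      omega⟩)
  intro p q h
  apply TPair.entry_injective
  funext i j
  by_cases hm : ((i, j) : ℕ × ℕ) ∈ ν
  · have := congrFun h ⟨(i, j), (YoungDiagram.mem_cells _).mpr hm⟩
    simpa using this
  · have hp : ((i, j) : ℕ × ℕ) ∉ p.1.1 := by
      intro hh
      exact hm ((YoungDiagram.mem_cells _).mp (p.2.1 ((YoungDiagram.mem_cells _).mpr hh)))
    have hq : ((i, j) : ℕ × ℕ) ∉ q.1.1 := by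
      intro hh
      exact hm ((YoungDiagram.mem_cells _).mp (q.2.1 ((YoungDiagram.mem_cells _).mpr hh)))
    show p.1.2.entry i j = q.1.2.entry i j
    rw [p.1.2.entry_eq_zero hp, q.1.2.entry_eq_zero hq]

section Maps

variable {ν : YoungDiagram} (hν : 0 < ν.card)

lemma jdtShape_covers (s : SYT ν) : YDcovers (jdtShape s hν) ν := by
  refine ⟨?_, ?_⟩
  · intro c hc
    exact Finset.erase_subset _ _ hc
  · rw [card_jdtShape]
    omega

/-- Removing the maximal entry. -/
noncomputable def Rmap : SYT ν → TPair ν :=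
  fun s => ⟨⟨remShape s hν, remSYT s hν⟩, remShape_covers s hν⟩

/-- The finite jeu de taquin slide. -/
noncomputable def Dmap : SYT ν → TPair ν :=
  fun s => ⟨⟨jdtShape s hν, jdtSYT s hν⟩, jdtShape_covers hν s⟩

lemma Rmap_injective : Function.Injective (Rmap hν) := by
  intro s s' h
  have hent : trunc (ν.card - 1) s.entry = trunc (ν.card - 1) s'.entry :=
    congrArg (fun p : TPair ν => p.1.2.entry) h
  exact rem_inj s s' hent

lemma Rmap_surjective : Function.Surjective (Rmap hν) := by
  rintro ⟨⟨l, u⟩, hcov⟩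
  refine ⟨extSYT u hcov.1 hcov.2, ?_⟩
  apply Subtype.ext
  apply sigma_ext
  show trunc (ν.card - 1) (extSYT u hcov.1 hcov.2).entry = u.entry
  have h2 : ν.card = l.card + 1 := hcov.2
  rw [show ν.card - 1 = l.card from by omega]
  exact trunc_extSYT u hcov.1 hcov.2

lemma Dmap_injective : Function.Injective (Dmap hν) := by
  intro s s' h
  have hent : jdtF s.entry = jdtF s'.entry :=
    congrArg (fun p : TPair ν => p.1.2.entry) h
  exact jdt_inj s s' hν hent

noncomputable def RmapEquiv : SYT ν ≃ TPair ν :=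
  Equiv.ofBijective (Rmap hν) ⟨Rmap_injective hν, Rmap_surjective hν⟩

lemma Dmap_surjective : Function.Surjective (Dmap hν) := by
  have hg : Function.Injective ((RmapEquiv hν).symm ∘ Dmap hν) := by
    intro a b hab
    apply Dmap_injective hν
    have h2 := congrArg (RmapEquiv hν) hab
    simpa using h2
  have hgs := Finite.surjective_of_injective hg
  intro t
  obtain ⟨s, hs⟩ := hgs ((RmapEquiv hν).symm t)
  refine ⟨s, ?_⟩
  have h2 := congrArg (RmapEquiv hν) hs
  simpa using h2

/-- The bijection on `SYT ν` obtained by following the slide by the inverse of removal. -/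
noncomputable def psi : SYT ν → SYT ν :=
  fun s => (RmapEquiv hν).symm (Dmap hν s)

lemma Rmap_psi (s : SYT ν) : Rmap hν (psi hν s) = Dmap hν s := by
  show (RmapEquiv hν) ((RmapEquiv hν).symm (Dmap hν s)) = Dmap hν s
  exact Equiv.apply_symm_apply _ _

lemma psi_bijective : Function.Bijective (psi hν) := by
  constructor
  · intro a b hab
    apply Dmap_injective hν
    have h2 := congrArg (RmapEquiv hν) hab
    simpa [psi] using h2
  · intro t
    obtain ⟨s, hs⟩ := Dmap_surjective hν (Rmap hν t)
    refine ⟨s, ?_⟩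
    show (RmapEquiv hν).symm (Dmap hν s) = t
    rw [hs]
    exact Equiv.symm_apply_apply (RmapEquiv hν) t

/-- **Key property of Ψ**: its truncation recovers the jeu de taquin image. -/
lemma trunc_psi (s : SYT ν) :
    trunc (ν.card - 1) ((psi hν s).entry) = jdtF s.entry :=
  congrArg (fun p : TPair ν => p.1.2.entry) (Rmap_psi hν s)

end Maps

end JDTaux
namespace JDTaux

open MeasureTheory

abbrev Ω : Type := ℕ → ℕ → ℕ

lemma meas_coord (i j : ℕ) : Measurable (fun t : Ω => t i j) :=
  (measurable_pi_apply j).comp (measurable_pi_apply i)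

lemma measurable_comp_countable {α γ : Type*} [MeasurableSpace α] [MeasurableSpace γ]
    [MeasurableSingletonClass γ] [Countable γ]
    {β : Type*} [MeasurableSpace β] [MeasurableSingletonClass β] [Countable β]
    {f : α → β} (hf : Measurable f) {g : β → α → γ} (hg : ∀ b, Measurable (g b)) :
    Measurable (fun a => g (f a) a) := by
  apply measurable_to_countable'
  intro y
  have hset : (fun a => g (f a) a) ⁻¹' {y} = ⋃ b, (f ⁻¹' {b} ∩ (g b) ⁻¹' {y}) := by
    ext a
    simp only [Set.mem_preimage, Set.mem_singleton_iff, Set.mem_iUnion, Set.mem_inter_iff]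
    constructor
    · intro h
      exact ⟨f a, rfl, h⟩
    · rintro ⟨b, hb, h⟩
      rw [← hb] at h
      exact h
  rw [hset]
  exact MeasurableSet.iUnion fun b =>
    (hf (measurableSet_singleton b)).inter (hg b (measurableSet_singleton y))

lemma measurable_step (c : ℕ × ℕ) : Measurable (fun t : Ω => jdtStepF t c) := by
  have hP : MeasurableSet {t : Ω |
      t (c.1 + 1) c.2 ≠ 0 ∧ (t c.1 (c.2 + 1) = 0 ∨ t (c.1 + 1) c.2 < t c.1 (c.2 + 1))} := by
    have h1 : MeasurableSet {t : Ω | t (c.1 + 1) c.2 ≠ 0} :=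
      ((meas_coord (c.1 + 1) c.2) (measurableSet_singleton 0)).compl
    have h2 : MeasurableSet {t : Ω | t c.1 (c.2 + 1) = 0} :=
      (meas_coord c.1 (c.2 + 1)) (measurableSet_singleton 0)
    have h3 : MeasurableSet {t : Ω | t (c.1 + 1) c.2 < t c.1 (c.2 + 1)} := by
      have hm : Measurable (fun t : Ω => (t (c.1 + 1) c.2, t c.1 (c.2 + 1))) :=
        (meas_coord (c.1 + 1) c.2).prodMk (meas_coord c.1 (c.2 + 1))
      have : {t : Ω | t (c.1 + 1) c.2 < t c.1 (c.2 + 1)}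
          = (fun t : Ω => (t (c.1 + 1) c.2, t c.1 (c.2 + 1))) ⁻¹' {p : ℕ × ℕ | p.1 < p.2} :=
        rfl
      rw [this]
      exact hm ((Set.to_countable _).measurableSet)
    exact h1.inter (h2.union h3)
  unfold jdtStepF
  exact Measurable.ite hP measurable_const measurable_const

lemma measurable_path (k : ℕ) : Measurable (fun t : Ω => jdtPathF t k) := by
  induction k with
  | zero => exact measurable_const
  | succ k ih =>
    have : (fun t : Ω => jdtPathF t (k + 1)) = fun t => jdtStepF t (jdtPathF t k) := by
      funext t
      exact jdtPathF_succ t k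
    rw [this]
    exact measurable_comp_countable ih (g := fun b (t : Ω) => jdtStepF t b)
      (fun b => measurable_step b)

lemma jdtF_coord (t : Ω) (i j : ℕ) :
    jdtF t i j = if jdtPathF t (i + j) = (i, j) then ev t (jdtStepF t (i, j)) - 1
      else t i j - 1 := by
  by_cases h : jdtPathF t (i + j) = ((i, j) : ℕ × ℕ)
  · rw [if_pos h]
    exact jdtF_on (c := ((i, j) : ℕ × ℕ)) h
  · rw [if_neg h]
    exact jdtF_off (c := ((i, j) : ℕ × ℕ)) h

lemma measurable_jdtF : Measurable (fun t : Ω => jdtF t) := by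
  rw [measurable_pi_iff]
  intro i
  rw [measurable_pi_iff]
  intro j
  have heq : (fun t : Ω => jdtF t i j)
      = fun t => if jdtPathF t (i + j) = (i, j) then ev t (jdtStepF t (i, j)) - 1
        else t i j - 1 := by
    funext t
    exact jdtF_coord t i j
  rw [heq]
  apply Measurable.ite
  · exact measurable_path (i + j) (measurableSet_singleton ((i, j) : ℕ × ℕ))
  · have h1 : Measurable (fun t : Ω => ev t (jdtStepF t (i, j))) :=
      measurable_comp_countable (measurable_step ((i, j) : ℕ × ℕ))
        (g := fun b (t : Ω) => ev t b) (fun b => meas_coord b.1 b.2)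
    exact (measurable_from_top (f := fun n : ℕ => n - 1)).comp h1
  · exact (measurable_from_top (f := fun n : ℕ => n - 1)).comp (meas_coord i j)

lemma measurable_cylEvent (μ : YoungDiagram) (s : SYT μ) : MeasurableSet (cylEvent μ s) := by
  have heq : cylEvent μ s = ⋂ (i : ℕ), ⋂ (j : ℕ),
      {t : Ω | (i, j) ∈ μ → t i j = s.entry i j} := by
    ext t
    simp only [cylEvent, Set.mem_setOf_eq, Set.mem_iInter]
  rw [heq]
  apply MeasurableSet.iInter
  intro i
  apply MeasurableSet.iInter
  intro j
  by_cases hm : ((i, j) : ℕ × ℕ) ∈ μ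
  · have : {t : Ω | (i, j) ∈ μ → t i j = s.entry i j} = {t : Ω | t i j = s.entry i j} := by
      ext t; simp [hm]
    rw [this]
    exact meas_coord i j (measurableSet_singleton _)
  · have : {t : Ω | (i, j) ∈ μ → t i j = s.entry i j} = Set.univ := by
      ext t; simp [hm]
    rw [this]
    exact MeasurableSet.univ

lemma measurable_G : MeasurableSet {t : Ω | IsInfYT t} := by
  have h1 : MeasurableSet {t : Ω | ∀ i j, 1 ≤ t i j} := by
    have : {t : Ω | ∀ i j, 1 ≤ t i j} = ⋂ (i : ℕ), ⋂ (j : ℕ), {t : Ω | 1 ≤ t i j} := by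
      ext t; simp [Set.mem_iInter]
    rw [this]
    refine MeasurableSet.iInter fun i => MeasurableSet.iInter fun j => ?_
    have : {t : Ω | 1 ≤ t i j} = (fun t : Ω => t i j) ⁻¹' {0}ᶜ := by
      ext t; simp [Nat.one_le_iff_ne_zero]
    rw [this]
    exact (meas_coord i j) (measurableSet_singleton 0).compl
  have h2 : MeasurableSet {t : Ω | ∀ n, 1 ≤ n → ∃! c : ℕ × ℕ, t c.1 c.2 = n} := by
    have : {t : Ω | ∀ n, 1 ≤ n → ∃! c : ℕ × ℕ, t c.1 c.2 = n}
        = ⋂ (n : ℕ), {t : Ω | 1 ≤ n → ∃! c : ℕ × ℕ, t c.1 c.2 = n} := by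
      ext t; simp [Set.mem_iInter]
    rw [this]
    refine MeasurableSet.iInter fun n => ?_
    rcases Nat.eq_zero_or_pos n with hn | hn
    · have : {t : Ω | 1 ≤ n → ∃! c : ℕ × ℕ, t c.1 c.2 = n} = Set.univ := by
        ext t; simp [hn]
      rw [this]; exact MeasurableSet.univ
    · have : {t : Ω | 1 ≤ n → ∃! c : ℕ × ℕ, t c.1 c.2 = n}
          = ⋃ (c : ℕ × ℕ), ({t : Ω | t c.1 c.2 = n} ∩
            ⋂ (c' : ℕ × ℕ), {t : Ω | t c'.1 c'.2 = n → c' = c}) := by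
        ext t
        simp only [Set.mem_setOf_eq, Set.mem_iUnion, Set.mem_inter_iff, Set.mem_iInter]
        constructor
        · intro h
          obtain ⟨c, hc, hu⟩ := h hn
          exact ⟨c, hc, fun c' hc' => hu c' hc'⟩
        · rintro ⟨c, hc, hu⟩ _
          exact ⟨c, hc, fun c' hc' => hu c' hc'⟩
      rw [this]
      refine MeasurableSet.iUnion fun c => MeasurableSet.inter ?_ ?_
      · exact meas_coord c.1 c.2 (measurableSet_singleton n)
      · refine MeasurableSet.iInter fun c' => ?_
        by_cases hcc : c' = c
        · have : {t : Ω | t c'.1 c'.2 = n → c' = c} = Set.univ := by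
            ext t; simp [hcc]
          rw [this]; exact MeasurableSet.univ
        · have : {t : Ω | t c'.1 c'.2 = n → c' = c} = {t : Ω | t c'.1 c'.2 = n}ᶜ := by
            ext t; simp [hcc]
          rw [this]
          exact (meas_coord c'.1 c'.2 (measurableSet_singleton n)).compl
  have h3 : MeasurableSet {t : Ω | ∀ i j, t i j < t i (j + 1)} := by
    have : {t : Ω | ∀ i j, t i j < t i (j + 1)}
        = ⋂ (i : ℕ), ⋂ (j : ℕ), {t : Ω | t i j < t i (j + 1)} := by
      ext t; simp [Set.mem_iInter]
    rw [this]
    refine MeasurableSet.iInter fun i => MeasurableSet.iInter fun j => ?_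
    have hm : Measurable (fun t : Ω => (t i j, t i (j + 1))) :=
      (meas_coord i j).prodMk (meas_coord i (j + 1))
    exact hm ((Set.to_countable {p : ℕ × ℕ | p.1 < p.2}).measurableSet)
  have h4 : MeasurableSet {t : Ω | ∀ i j, t i j < t (i + 1) j} := by
    have : {t : Ω | ∀ i j, t i j < t (i + 1) j}
        = ⋂ (i : ℕ), ⋂ (j : ℕ), {t : Ω | t i j < t (i + 1) j} := by
      ext t; simp [Set.mem_iInter]
    rw [this]
    refine MeasurableSet.iInter fun i => MeasurableSet.iInter fun j => ?_
    have hm : Measurable (fun t : Ω => (t i j, t (i + 1) j)) :=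
      (meas_coord i j).prodMk (meas_coord (i + 1) j)
    exact hm ((Set.to_countable {p : ℕ × ℕ | p.1 < p.2}).measurableSet)
  have heq : {t : Ω | IsInfYT t} = {t : Ω | ∀ i j, 1 ≤ t i j}
      ∩ ({t : Ω | ∀ n, 1 ≤ n → ∃! c : ℕ × ℕ, t c.1 c.2 = n}
        ∩ ({t : Ω | ∀ i j, t i j < t i (j + 1)} ∩ {t : Ω | ∀ i j, t i j < t (i + 1) j})) := by
    ext t
    simp only [IsInfYT, Set.mem_setOf_eq, Set.mem_inter_iff]
  rw [heq]
  exact h1.inter (h2.inter (h3.inter h4))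

end JDTaux
namespace JDTaux

open MeasureTheory

/-- Basic finite-dimensional cylinder sets. -/
def cylSet (F : Finset (ℕ × ℕ)) (g : ℕ × ℕ → ℕ) : Set Ω :=
  {t | ∀ c ∈ F, t c.1 c.2 = g c}

def CylC : Set (Set Ω) := {A | ∃ F g, A = cylSet F g}

lemma measurable_cylSet (F : Finset (ℕ × ℕ)) (g : ℕ × ℕ → ℕ) :
    MeasurableSet (cylSet F g) := by
  have heq : cylSet F g = ⋂ c ∈ (F : Set (ℕ × ℕ)), {t : Ω | t c.1 c.2 = g c} := by
    ext t
    simp [cylSet]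
  rw [heq]
  exact MeasurableSet.biInter (F : Set (ℕ × ℕ)).to_countable
    (fun c _ => meas_coord c.1 c.2 (measurableSet_singleton _))

lemma isPiSystem_CylC : IsPiSystem CylC := by
  rintro A ⟨F1, g1, rfl⟩ B ⟨F2, g2, rfl⟩ hne
  obtain ⟨t0, ht0⟩ := hne
  refine ⟨F1 ∪ F2, fun c => if c ∈ F1 then g1 c else g2 c, ?_⟩
  ext t
  simp only [cylSet, Set.mem_inter_iff, Set.mem_setOf_eq, Finset.mem_union]
  constructor
  · rintro ⟨hA, hB⟩ c hc
    by_cases h1 : c ∈ F1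
    · rw [if_pos h1]; exact hA c h1
    · rw [if_neg h1]; exact hB c (hc.resolve_left h1)
  · intro h
    constructor
    · intro c hc
      have := h c (Or.inl hc)
      rwa [if_pos hc] at this
    · intro c hc
      have h2 := h c (Or.inr hc)
      by_cases h1 : c ∈ F1
      · rw [if_pos h1] at h2
        have e1 : t0 c.1 c.2 = g1 c := ht0.1 c h1
        have e2 : t0 c.1 c.2 = g2 c := ht0.2 c hc
        omega
      · rwa [if_neg h1] at h2

lemma generateFrom_CylC :
    (inferInstance : MeasurableSpace Ω) = MeasurableSpace.generateFrom CylC := by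
  apply le_antisymm
  · have hid : @Measurable Ω Ω (MeasurableSpace.generateFrom CylC) inferInstance id := by
      refine (@measurable_pi_iff Ω ℕ (fun _ => ℕ → ℕ)
        (MeasurableSpace.generateFrom CylC) _ id).mpr ?_
      intro i
      refine (@measurable_pi_iff Ω ℕ (fun _ => ℕ)
        (MeasurableSpace.generateFrom CylC) _ _).mpr ?_
      intro j
      refine @measurable_to_countable' ℕ Ω _ _ (MeasurableSpace.generateFrom CylC) _ ?_
      intro v
      apply MeasurableSpace.measurableSet_generateFrom
      refine ⟨{((i, j) : ℕ × ℕ)}, fun _ => v, ?_⟩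
      ext t
      simp [cylSet]
    exact fun s hs => hid hs
  · apply MeasurableSpace.generateFrom_le
    rintro A ⟨F, g, rfl⟩
    exact measurable_cylSet F g

/-- The (countable) index type of standard tableaux with `N` boxes. -/
def Idx (N : ℕ) := {x : Σ μ : YoungDiagram, SYT μ // x.1.card = N}

instance (N : ℕ) : Countable (Idx N) := by
  unfold Idx
  infer_instance

/-- An entry value below the truncation level transfers across a truncation identity. -/
lemma trunc_val_iff {f e' : ℕ → ℕ → ℕ} {n : ℕ} (h : trunc n f = e') {i j v : ℕ}
    (h1 : 1 ≤ v) (h2 : v ≤ n) : f i j = v ↔ e' i j = v := by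
  have hc := congrFun (congrFun h i) j
  unfold trunc at hc
  split at hc
  · omega
  · omega

section Decomp

variable (P : Measure Ω) (hP : PlancherelLike P)

lemma G_compl_null (hP : PlancherelLike P) : P {t : Ω | IsInfYT t}ᶜ = 0 := by
  haveI := hP.1
  rw [measure_compl measurable_G (measure_ne_top _ _), hP.2.1, measure_univ]
  simp

lemma inter_G_eq (hP : PlancherelLike P) (S : Set Ω) :
    P (S ∩ {t : Ω | IsInfYT t}) = P S := by
  apply le_antisymm (measure_mono Set.inter_subset_left)
  calc P S = P ((S ∩ {t : Ω | IsInfYT t}) ∪ (S ∩ {t : Ω | IsInfYT t}ᶜ)) := by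
        rw [Set.inter_union_compl]
    _ ≤ P (S ∩ {t : Ω | IsInfYT t}) + P (S ∩ {t : Ω | IsInfYT t}ᶜ) := measure_union_le _ _
    _ ≤ P (S ∩ {t : Ω | IsInfYT t}) + 0 := by
        gcongr
        calc P (S ∩ {t : Ω | IsInfYT t}ᶜ) ≤ P {t : Ω | IsInfYT t}ᶜ :=
              measure_mono Set.inter_subset_right
          _ = 0 := G_compl_null P hP
    _ = P (S ∩ {t : Ω | IsInfYT t}) := by rw [add_zero]

lemma mem_piece_iff {N : ℕ} (x : Idx N) {t : Ω} :
    t ∈ cylEvent x.1.1 x.1.2 ∩ {t : Ω | IsInfYT t} ↔ IsInfYT t ∧ trunc N t = x.1.2.entry := by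
  constructor
  · rintro ⟨h1, h2⟩
    exact ⟨h2, (IYT.mem_cylEvent_iff h2 x.1.2 x.2).mp h1⟩
  · rintro ⟨h1, h2⟩
    exact ⟨(IYT.mem_cylEvent_iff h1 x.1.2 x.2).mpr h2, h1⟩

lemma G_subset_iUnion (N : ℕ) :
    {t : Ω | IsInfYT t} ⊆ ⋃ (x : Idx N), (cylEvent x.1.1 x.1.2 ∩ {t : Ω | IsInfYT t}) := by
  intro t ht
  rw [Set.mem_iUnion]
  exact ⟨⟨⟨shapeOf ht N, restrictSYT ht N⟩, IYT.card_shapeOf ht N⟩,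
    IYT.self_mem_cylEvent ht N, ht⟩

lemma pieces_disjoint (N : ℕ) :
    Pairwise (Function.onFun Disjoint (fun x : Idx N => cylEvent x.1.1 x.1.2 ∩ {t : Ω | IsInfYT t})) := by
  intro x y hxy
  rw [Function.onFun]
  rw [Set.disjoint_left]
  intro t htx hty
  apply hxy
  rw [mem_piece_iff] at htx hty
  apply Subtype.ext
  have hent : x.1.2.entry = y.1.2.entry := by rw [← htx.2, ← hty.2]
  exact sigma_ext hent

lemma measure_decomp (hP : PlancherelLike P) (B : Set Ω) (hB : MeasurableSet B) (N : ℕ) :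
    P B = ∑' (x : Idx N), P (B ∩ (cylEvent x.1.1 x.1.2 ∩ {t : Ω | IsInfYT t})) := by
  have h1 : P B = P (B ∩ {t : Ω | IsInfYT t}) := (inter_G_eq P hP B).symm
  have h2 : B ∩ {t : Ω | IsInfYT t}
      = ⋃ (x : Idx N), (B ∩ (cylEvent x.1.1 x.1.2 ∩ {t : Ω | IsInfYT t})) := by
    apply Set.Subset.antisymm
    · intro t ⟨htB, htG⟩
      have := G_subset_iUnion N htG
      rw [Set.mem_iUnion] at this ⊢
      obtain ⟨x, hx⟩ := this
      exact ⟨x, htB, hx⟩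
    · intro t ht
      rw [Set.mem_iUnion] at ht
      obtain ⟨x, htB, htx⟩ := ht
      exact ⟨htB, htx.2⟩
  rw [h1, h2]
  apply measure_iUnion
  · intro x y hxy
    exact Disjoint.mono Set.inter_subset_right Set.inter_subset_right
      (pieces_disjoint N hxy)
  · intro x
    exact hB.inter ((measurable_cylEvent _ _).inter measurable_G)

end Decomp

end JDTaux
namespace JDTaux

open MeasureTheory

lemma IYT.jdt_pos {t : ℕ → ℕ → ℕ} (ht : IsInfYT t) (i j : ℕ) : 1 ≤ jdtF t i j := by
  by_cases hon : jdtPathF t (i + j) = ((i, j) : ℕ × ℕ)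
  · have h : jdtF t i j = ev t (jdtStepF t ((i, j) : ℕ × ℕ)) - 1 :=
      jdtF_on (c := ((i, j) : ℕ × ℕ)) hon
    rcases step_eq_dn_or_rt t ((i, j) : ℕ × ℕ) with hs | hs <;> rw [hs] at h
    · have hdn : ev t (dn ((i, j) : ℕ × ℕ)) = t (i + 1) j := rfl
      rw [hdn] at h
      have h1 := ht.2.2.2 i j
      have h2 := ht.1 i j
      omega
    · have hrt : ev t (rt ((i, j) : ℕ × ℕ)) = t i (j + 1) := rfl
      rw [hrt] at h
      have h1 := ht.2.2.1 i j
      have h2 := ht.1 i j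
      omega
  · have h : jdtF t i j = ev t ((i, j) : ℕ × ℕ) - 1 := jdtF_off (c := ((i, j) : ℕ × ℕ)) hon
    have hne : ¬(i = 0 ∧ j = 0) := by
      rintro ⟨rfl, rfl⟩
      exact hon rfl
    have h2 : t i j ≠ 1 := by
      intro h1
      obtain ⟨c0, hc0, hu⟩ := ht.2.1 1 le_rfl
      have e1 : ((i, j) : ℕ × ℕ) = c0 := hu ((i, j) : ℕ × ℕ) h1
      have e2 : ((0, 0) : ℕ × ℕ) = c0 := hu ((0, 0) : ℕ × ℕ) (IYT.origin ht)
      rw [← e2] at e1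
      simp only [Prod.mk.injEq] at e1
      exact hne ⟨e1.1, e1.2⟩
    have h3 := ht.1 i j
    have hev : ev t ((i, j) : ℕ × ℕ) = t i j := rfl
    rw [hev] at h
    omega

section Main

variable {F : Finset (ℕ × ℕ)} {g : ℕ × ℕ → ℕ} {N : ℕ}

lemma A1 (hg1 : ∀ c ∈ F, 1 ≤ g c) (hgN : ∀ c ∈ F, g c ≤ N) (x : Idx (N + 1)) :
    cylSet F g ∩ (cylEvent x.1.1 x.1.2 ∩ {t : Ω | IsInfYT t})
      = if (∀ c ∈ F, x.1.2.entry c.1 c.2 = g c)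
        then (cylEvent x.1.1 x.1.2 ∩ {t : Ω | IsInfYT t}) else ∅ := by
  split
  · next hcomp =>
    apply Set.Subset.antisymm Set.inter_subset_right
    intro t ht
    refine ⟨?_, ht⟩
    have hmem := (mem_piece_iff x).mp ht
    intro c hc
    exact (trunc_val_iff hmem.2 (hg1 c hc) (le_trans (hgN c hc) (Nat.le_succ N))).mpr
      (hcomp c hc)
  · next hcomp =>
    push_neg at hcomp
    obtain ⟨c, hc, hne⟩ := hcomp
    apply Set.eq_empty_iff_forall_notMem.mpr
    rintro t ⟨htA, htx⟩
    have hmem := (mem_piece_iff x).mp htx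
    exact hne ((trunc_val_iff hmem.2 (hg1 c hc) (le_trans (hgN c hc) (Nat.le_succ N))).mp
      (htA c hc))

lemma A2 (hg1 : ∀ c ∈ F, 1 ≤ g c) (hgN : ∀ c ∈ F, g c ≤ N) (x : Idx (N + 1)) :
    ((fun t : Ω => jdtF t) ⁻¹' cylSet F g) ∩ (cylEvent x.1.1 x.1.2 ∩ {t : Ω | IsInfYT t})
      = if (∀ c ∈ F, jdtF x.1.2.entry c.1 c.2 = g c)
        then (cylEvent x.1.1 x.1.2 ∩ {t : Ω | IsInfYT t}) else ∅ := by
  have key : ∀ t : Ω, t ∈ cylEvent x.1.1 x.1.2 ∩ {t : Ω | IsInfYT t} →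
      ((∀ c ∈ F, jdtF t c.1 c.2 = g c) ↔ (∀ c ∈ F, jdtF x.1.2.entry c.1 c.2 = g c)) := by
    intro t ht
    have hmem := (mem_piece_iff x).mp ht
    have hcomm : trunc N (jdtF t) = jdtF x.1.2.entry := by
      rw [trunc_jdt_comm hmem.1 N, hmem.2]
    constructor
    · intro h c hc
      exact (trunc_val_iff hcomm (hg1 c hc) (hgN c hc)).mp (h c hc)
    · intro h c hc
      exact (trunc_val_iff hcomm (hg1 c hc) (hgN c hc)).mpr (h c hc)
  split
  · next hcomp =>
    apply Set.Subset.antisymm Set.inter_subset_right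
    intro t ht
    exact ⟨fun c hc => ((key t ht).mpr hcomp) c hc, ht⟩
  · next hcomp =>
    apply Set.eq_empty_iff_forall_notMem.mpr
    rintro t ⟨htA, htx⟩
    exact hcomp ((key t htx).mp htA)

noncomputable def phiIdx (N : ℕ) : Idx (N + 1) → Idx (N + 1) := fun x =>
  ⟨⟨x.1.1, psi (show 0 < x.1.1.card by rw [x.2]; omega) x.1.2⟩, x.2⟩

lemma phiIdx_bijective (N : ℕ) : Function.Bijective (phiIdx N) := by
  constructor
  · rintro ⟨⟨μ, s⟩, hx⟩ ⟨⟨μ', s'⟩, hy⟩ h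
    have hsh : μ = μ' := congrArg (fun z : Idx (N + 1) => z.1.1) h
    subst hsh
    have hpos : 0 < μ.card := by rw [show μ.card = N + 1 from hx]; omega
    have hent : (psi hpos s).entry = (psi hpos s').entry :=
      congrArg (fun z : Idx (N + 1) => z.1.2.entry) h
    have hps := SYT.ext' hent
    have hss := (psi_bijective hpos).1 hps
    apply Subtype.ext
    rw [hss]
  · rintro ⟨⟨μ, s'⟩, hy⟩
    have hpos : 0 < μ.card := by rw [show μ.card = N + 1 from hy]; omega
    obtain ⟨s, hs⟩ := (psi_bijective hpos).2 s'
    refine ⟨⟨⟨μ, s⟩, hy⟩, ?_⟩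
    apply Subtype.ext
    exact congrArg (Sigma.mk μ) hs

lemma phiIdx_comp_iff (hg1 : ∀ c ∈ F, 1 ≤ g c) (hgN : ∀ c ∈ F, g c ≤ N)
    (x : Idx (N + 1)) :
    (∀ c ∈ F, (phiIdx N x).1.2.entry c.1 c.2 = g c)
      ↔ (∀ c ∈ F, jdtF x.1.2.entry c.1 c.2 = g c) := by
  have hpos : 0 < x.1.1.card := by rw [x.2]; omega
  have htr : trunc N ((phiIdx N x).1.2.entry) = jdtF x.1.2.entry := by
    have h0 := trunc_psi hpos x.1.2
    have h2 := x.2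
    rw [show x.1.1.card - 1 = N from by omega] at h0
    exact h0
  constructor
  · intro h c hc
    exact (trunc_val_iff htr (hg1 c hc) (hgN c hc)).mp (h c hc)
  · intro h c hc
    exact (trunc_val_iff htr (hg1 c hc) (hgN c hc)).mpr (h c hc)

lemma map_cylSet_eq (P : Measure Ω) (hP : PlancherelLike P) (F : Finset (ℕ × ℕ))
    (g : ℕ × ℕ → ℕ) :
    P ((fun t : Ω => jdtF t) ⁻¹' cylSet F g) = P (cylSet F g) := by
  haveI := hP.1
  by_cases hg0 : ∃ c ∈ F, g c = 0
  · obtain ⟨c0, hc0, hgc0⟩ := hg0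
    have hA : cylSet F g ∩ {t : Ω | IsInfYT t} = ∅ := by
      apply Set.eq_empty_iff_forall_notMem.mpr
      rintro t ⟨h1, h2⟩
      have e1 := h1 c0 hc0
      have e2 := h2.1 c0.1 c0.2
      omega
    have hB : ((fun t : Ω => jdtF t) ⁻¹' cylSet F g) ∩ {t : Ω | IsInfYT t} = ∅ := by
      apply Set.eq_empty_iff_forall_notMem.mpr
      rintro t ⟨h1, h2⟩
      have e1 : jdtF t c0.1 c0.2 = g c0 := h1 c0 hc0
      have e2 := IYT.jdt_pos h2 c0.1 c0.2
      omega
    rw [← inter_G_eq P hP (cylSet F g), ← inter_G_eq P hP ((fun t : Ω => jdtF t) ⁻¹' cylSet F g),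
      hA, hB]
  · push_neg at hg0
    have hg1 : ∀ c ∈ F, 1 ≤ g c := fun c hc => by have := hg0 c hc; omega
    have hgN : ∀ c ∈ F, g c ≤ F.sup g := fun c hc => Finset.le_sup hc
    set N := F.sup g with hN
    rw [measure_decomp P hP _ (measurable_jdtF (measurable_cylSet F g)) (N + 1),
      measure_decomp P hP _ (measurable_cylSet F g) (N + 1)]
    have hterm1 : ∀ x : Idx (N + 1),
        P (((fun t : Ω => jdtF t) ⁻¹' cylSet F g)
            ∩ (cylEvent x.1.1 x.1.2 ∩ {t : Ω | IsInfYT t}))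
        = if (∀ c ∈ F, jdtF x.1.2.entry c.1 c.2 = g c)
          then ENNReal.ofReal ((fSYT x.1.1 : ℝ) / (Nat.factorial (N + 1))) else 0 := by
      intro x
      rw [A2 hg1 hgN x]
      split
      · rw [inter_G_eq P hP, hP.2.2 x.1.1 x.1.2, x.2]
      · exact measure_empty
    have hterm2 : ∀ x : Idx (N + 1),
        P (cylSet F g ∩ (cylEvent x.1.1 x.1.2 ∩ {t : Ω | IsInfYT t}))
        = if (∀ c ∈ F, x.1.2.entry c.1 c.2 = g c)
          then ENNReal.ofReal ((fSYT x.1.1 : ℝ) / (Nat.factorial (N + 1))) else 0 := by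
      intro x
      rw [A1 hg1 hgN x]
      split
      · rw [inter_G_eq P hP, hP.2.2 x.1.1 x.1.2, x.2]
      · exact measure_empty
    rw [tsum_congr hterm1, tsum_congr hterm2]
    have hfun : ∀ x : Idx (N + 1),
        (if (∀ c ∈ F, jdtF x.1.2.entry c.1 c.2 = g c)
          then ENNReal.ofReal ((fSYT x.1.1 : ℝ) / (Nat.factorial (N + 1))) else 0)
        = (if (∀ c ∈ F, (phiIdx N x).1.2.entry c.1 c.2 = g c)
          then ENNReal.ofReal ((fSYT (phiIdx N x).1.1 : ℝ) / (Nat.factorial (N + 1))) else 0) := by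
      intro x
      exact (if_congr (phiIdx_comp_iff hg1 hgN x) rfl rfl).symm
    rw [tsum_congr hfun]
    exact (Equiv.ofBijective _ (phiIdx_bijective N)).tsum_eq
      (fun y : Idx (N + 1) => if (∀ c ∈ F, y.1.2.entry c.1 c.2 = g c)
        then ENNReal.ofReal ((fSYT y.1.1 : ℝ) / (Nat.factorial (N + 1))) else 0)

end Main

end JDTaux

/-- The jeu de taquin map preserves the Plancherel measure of infinite
order. -/
theorem jdt_measure_preserving (P : Measure (ℕ → ℕ → ℕ)) (hP : PlancherelLike P)
    (E : Set (ℕ → ℕ → ℕ)) (hE : MeasurableSet E) :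
    P (jdtF ⁻¹' E) = P E := by
  haveI := hP.1
  haveI : IsProbabilityMeasure (P.map (fun t : JDTaux.Ω => jdtF t)) :=
    MeasureTheory.Measure.isProbabilityMeasure_map JDTaux.measurable_jdtF.aemeasurable
  have hQ : P.map (fun t : JDTaux.Ω => jdtF t) = P := by
    apply MeasureTheory.ext_of_generate_finite JDTaux.CylC JDTaux.generateFrom_CylC
      JDTaux.isPiSystem_CylC
    · rintro A ⟨F, g, rfl⟩
      rw [MeasureTheory.Measure.map_apply JDTaux.measurable_jdtF
        (JDTaux.measurable_cylSet F g)]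
      exact JDTaux.map_cylSet_eq P hP F g
    · rw [MeasureTheory.measure_univ, MeasureTheory.measure_univ]
  have hmap := MeasureTheory.Measure.map_apply (μ := P) JDTaux.measurable_jdtF hE
  rw [hQ] at hmap
  exact hmap.symm
end

section
/- Let λ ⊢ n be a Young diagram with boxes at positions (i₁,j₁),...,(iₙ,jₙ) and let u_ℓ = i_ℓ − j_ℓ be the contents of the boxes. Then for every symmetric polynomial P in n variables, the element P(X₁,...,Xₙ) of the group algebra ℂ(Sₙ) formed from the Jucys–Murphy elements X_i = (1,i)+(2,i)+...+(i−1,i) lies in the center of ℂ(Sₙ), and acts in the irreducible representation of Sₙ corresponding to λ as the scalar P(u₁,...,uₙ). -/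
/-- The row index of the cell numbered `m` (0-indexed, reading the diagram row by row). -/
noncomputable def rowOf (μ : YoungDiagram) (m : ℕ) : ℕ :=
  sSup { i : ℕ | ∑ i' ∈ Finset.range i, μ.rowLen i' ≤ m }

/-- The column index of the cell numbered `m`. -/
noncomputable def colOf (μ : YoungDiagram) (m : ℕ) : ℕ :=
  m - ∑ i' ∈ Finset.range (rowOf μ m), μ.rowLen i'

/-- The content (column minus row) of the cell numbered `m`. -/
noncomputable def contentOf (μ : YoungDiagram) (m : ℕ) : ℤ :=
  (colOf μ m : ℤ) - (rowOf μ m : ℤ)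

open scoped Classical in
/-- The row symmetrizer: the sum of the permutations preserving each row of the canonical
filling of `μ`. -/
noncomputable def rowSym (n : ℕ) (μ : YoungDiagram) :
    MonoidAlgebra ℂ (Equiv.Perm (Fin n)) :=
  ∑ σ ∈ Finset.univ.filter (fun σ : Equiv.Perm (Fin n) =>
      ∀ m : Fin n, rowOf μ (σ m) = rowOf μ m),
    MonoidAlgebra.single σ 1

open scoped Classical in
/-- The signed column symmetrizer of `μ`. -/
noncomputable def colSym (n : ℕ) (μ : YoungDiagram) :
    MonoidAlgebra ℂ (Equiv.Perm (Fin n)) :=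
  ∑ σ ∈ Finset.univ.filter (fun σ : Equiv.Perm (Fin n) =>
      ∀ m : Fin n, colOf μ (σ m) = colOf μ m),
    MonoidAlgebra.single σ ((Equiv.Perm.sign σ : ℤ) : ℂ)

/-- The Young symmetrizer of `μ`; the left ideal it generates realises the irreducible
representation of the symmetric group corresponding to `μ`. -/
noncomputable def youngSym (n : ℕ) (μ : YoungDiagram) :
    MonoidAlgebra ℂ (Equiv.Perm (Fin n)) :=
  rowSym n μ * colSym n μ

open scoped Classical in
/-- The Jucys–Murphy element `X_i = Σ_{j<i} (j, i)`. -/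
noncomputable def JM (n : ℕ) (i : Fin n) : MonoidAlgebra ℂ (Equiv.Perm (Fin n)) :=
  ∑ j ∈ Finset.univ.filter (fun j : Fin n => j < i),
    MonoidAlgebra.single (Equiv.swap j i) (1 : ℂ)

/-- The abelianization map sending a noncommutative polynomial to the corresponding
commutative polynomial. -/
noncomputable def abelPoly (n : ℕ) : FreeAlgebra ℂ (Fin n) →ₐ[ℂ] MvPolynomial (Fin n) ℂ :=
  FreeAlgebra.lift ℂ (fun i => MvPolynomial.X i)

namespace JMAux
open Finset

variable (μ : YoungDiagram)

/-- Partial sums of row lengths. -/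
def F (i : ℕ) : ℕ := ∑ i' ∈ Finset.range i, μ.rowLen i'

lemma F_succ (i : ℕ) : F μ (i + 1) = F μ i + μ.rowLen i := by
  simp [F, Finset.sum_range_succ]

lemma F_mono : Monotone (F μ) := by
  intro i j hij
  exact Finset.sum_le_sum_of_subset (Finset.range_subset_range.2 hij)

lemma rowLen_eq_zero {i : ℕ} (h : μ.colLen 0 ≤ i) : μ.rowLen i = 0 := by
  by_contra h'
  have : (i, 0) ∈ μ := YoungDiagram.mem_iff_lt_rowLen.2 (Nat.pos_of_ne_zero h')
  exact absurd (YoungDiagram.mem_iff_lt_colLen.1 this) (not_lt.2 h)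

lemma F_colLen : F μ (μ.colLen 0) = μ.card := by
  classical
  have : μ.cells = (Finset.range (μ.colLen 0)).biUnion
      (fun i => (Finset.range (μ.rowLen i)).image (fun j => (i, j))) := by
    ext ⟨i, j⟩
    simp only [Finset.mem_biUnion, Finset.mem_range, Finset.mem_image, YoungDiagram.mem_cells]
    constructor
    · intro h
      refine ⟨i, ?_, j, YoungDiagram.mem_iff_lt_rowLen.1 h, rfl⟩
      exact YoungDiagram.mem_iff_lt_colLen.1 (μ.up_left_mem le_rfl (Nat.zero_le j) h)
    · rintro ⟨i', _, j', hj', hij⟩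
      cases hij
      exact YoungDiagram.mem_iff_lt_rowLen.2 hj'
  rw [YoungDiagram.card, this, Finset.card_biUnion]
  · apply Finset.sum_congr rfl
    intro i _
    rw [Finset.card_image_of_injective _ (fun a b h => by injection h), Finset.card_range]
  · intro x _ y _ hxy
    simp only [Finset.disjoint_left, Finset.mem_image]
    rintro p ⟨j, _, rfl⟩ ⟨j', _, h⟩
    exact hxy ((congrArg Prod.fst h).symm)

lemma F_eq_card {i : ℕ} (h : μ.colLen 0 ≤ i) : F μ i = μ.card := by
  have h1 : F μ (μ.colLen 0) + ∑ i' ∈ Finset.Ico (μ.colLen 0) i, μ.rowLen i' = F μ i :=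
    Finset.sum_range_add_sum_Ico _ h
  have h2 : ∑ i' ∈ Finset.Ico (μ.colLen 0) i, μ.rowLen i' = 0 :=
    Finset.sum_eq_zero (fun x hx => rowLen_eq_zero μ (Finset.mem_Ico.1 hx).1)
  have := F_colLen μ
  omega

lemma bddAbove_S {m : ℕ} (hm : m < μ.card) : BddAbove {i : ℕ | F μ i ≤ m} := by
  refine ⟨μ.colLen 0, fun i hi => ?_⟩
  by_contra h
  push_neg at h
  have := F_eq_card μ (le_of_lt h)
  simp only [Set.mem_setOf_eq] at hi
  omega

lemma rowOf_def (m : ℕ) : rowOf μ m = sSup {i : ℕ | F μ i ≤ m} := rfl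

lemma F_rowOf_le {m : ℕ} (hm : m < μ.card) : F μ (rowOf μ m) ≤ m := by
  have : rowOf μ m ∈ {i : ℕ | F μ i ≤ m} := by
    rw [rowOf_def]
    exact Nat.sSup_mem ⟨0, by simp [F]⟩ (bddAbove_S μ hm)
  exact this

lemma lt_F_rowOf_succ {m : ℕ} (hm : m < μ.card) : m < F μ (rowOf μ m + 1) := by
  by_contra h
  push_neg at h
  have hmem : rowOf μ m + 1 ∈ {i : ℕ | F μ i ≤ m} := h
  have := le_csSup (bddAbove_S μ hm) hmem
  rw [← rowOf_def] at this
  omega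

lemma colOf_def (m : ℕ) : colOf μ m = m - F μ (rowOf μ m) := rfl

lemma colOf_lt {m : ℕ} (hm : m < μ.card) : colOf μ m < μ.rowLen (rowOf μ m) := by
  have h1 := F_rowOf_le μ hm
  have h2 := lt_F_rowOf_succ μ hm
  rw [F_succ] at h2
  rw [colOf_def]
  omega

lemma F_add_colOf {m : ℕ} (hm : m < μ.card) : F μ (rowOf μ m) + colOf μ m = m := by
  have h1 := F_rowOf_le μ hm
  rw [colOf_def]
  omega

lemma mem_of_lt_card {m : ℕ} (hm : m < μ.card) : (rowOf μ m, colOf μ m) ∈ μ :=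
  YoungDiagram.mem_iff_lt_rowLen.2 (colOf_lt μ hm)

lemma boxN_lt_card {i j : ℕ} (hij : (i, j) ∈ μ) : F μ i + j < μ.card := by
  have hj : j < μ.rowLen i := YoungDiagram.mem_iff_lt_rowLen.1 hij
  have hK : i < μ.colLen 0 :=
    YoungDiagram.mem_iff_lt_colLen.1 (μ.up_left_mem le_rfl (Nat.zero_le j) hij)
  have h1 : F μ (i + 1) ≤ F μ (μ.colLen 0) := F_mono μ hK
  have h2 := F_succ μ i
  have h3 := F_colLen μ
  omega

lemma rowOf_boxN {i j : ℕ} (hij : (i, j) ∈ μ) : rowOf μ (F μ i + j) = i := by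
  have hj : j < μ.rowLen i := YoungDiagram.mem_iff_lt_rowLen.1 hij
  have hbd : BddAbove {i' : ℕ | F μ i' ≤ F μ i + j} := bddAbove_S μ (boxN_lt_card μ hij)
  rw [rowOf_def]
  refine le_antisymm (csSup_le ⟨0, by simp [F]⟩ ?_) (le_csSup hbd (by simp))
  intro i' hi'
  simp only [Set.mem_setOf_eq] at hi'
  by_contra h
  push_neg at h
  have : F μ (i + 1) ≤ F μ i' := F_mono μ h
  rw [F_succ] at this
  omega

lemma colOf_boxN {i j : ℕ} (hij : (i, j) ∈ μ) : colOf μ (F μ i + j) = j := by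
  rw [colOf_def, rowOf_boxN μ hij]
  omega

lemma boxN_eq {m : ℕ} (hm : m < μ.card) : F μ (rowOf μ m) + colOf μ m = m :=
  F_add_colOf μ hm

/-- lexicographic comparison of boxes gives comparison of numbers -/
lemma boxN_lt_boxN {i j i' j' : ℕ} (hij : (i, j) ∈ μ) (hij' : (i', j') ∈ μ)
    (h : i < i' ∨ (i = i' ∧ j < j')) : F μ i + j < F μ i' + j' := by
  rcases h with h | ⟨rfl, h⟩
  · have hj : j < μ.rowLen i := YoungDiagram.mem_iff_lt_rowLen.1 hij
    have h1 : F μ (i + 1) ≤ F μ i' := F_mono μ h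
    have h2 := F_succ μ i
    omega
  · omega

lemma lt_of_lex {m m' : ℕ} (hm : m < μ.card) (hm' : m' < μ.card)
    (h : rowOf μ m < rowOf μ m' ∨ (rowOf μ m = rowOf μ m' ∧ colOf μ m < colOf μ m')) :
    m < m' := by
  have := boxN_lt_boxN μ (mem_of_lt_card μ hm) (mem_of_lt_card μ hm') h
  rw [boxN_eq μ hm, boxN_eq μ hm'] at this
  exact this

lemma lex_of_lt {m m' : ℕ} (hm : m < μ.card) (hm' : m' < μ.card) (h : m < m') :
    rowOf μ m < rowOf μ m' ∨ (rowOf μ m = rowOf μ m' ∧ colOf μ m < colOf μ m') := by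
  rcases Nat.lt_trichotomy (rowOf μ m) (rowOf μ m') with h1 | h1 | h1
  · exact Or.inl h1
  · rcases Nat.lt_trichotomy (colOf μ m) (colOf μ m') with h2 | h2 | h2
    · exact Or.inr ⟨h1, h2⟩
    · exfalso
      have : m = m' := by
        rw [← boxN_eq μ hm, ← boxN_eq μ hm', h1, h2]
      omega
    · exfalso
      have := lt_of_lex μ hm' hm (Or.inr ⟨h1.symm, h2⟩)
      omega
  · exfalso
    have := lt_of_lex μ hm' hm (Or.inl h1)
    omega

lemma rowOf_le_of_lt {m m' : ℕ} (hm : m < μ.card) (hm' : m' < μ.card) (h : m < m') :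
    rowOf μ m ≤ rowOf μ m' := by
  rcases lex_of_lt μ hm hm' h with h1 | ⟨h1, _⟩ <;> omega

section GroupAlg

open Equiv Equiv.Perm MonoidAlgebra

variable {n : ℕ}

/-- single group element as element of the group algebra -/
noncomputable def eps (g : Equiv.Perm (Fin n)) : MonoidAlgebra ℂ (Equiv.Perm (Fin n)) :=
  MonoidAlgebra.single g 1

/-- sum of group elements over a finset -/
noncomputable def sF (s : Finset (Equiv.Perm (Fin n))) :
    MonoidAlgebra ℂ (Equiv.Perm (Fin n)) := ∑ g ∈ s, eps g

lemma eps_mul (g h : Equiv.Perm (Fin n)) : eps g * eps h = eps (g * h) := by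
  simp [eps, MonoidAlgebra.single_mul_single]

lemma eps_one : eps (1 : Equiv.Perm (Fin n)) = 1 := by
  simp [eps, MonoidAlgebra.one_def]

lemma eps_mul_sF (p : Equiv.Perm (Fin n)) (s : Finset (Equiv.Perm (Fin n))) :
    eps p * sF s = ∑ g ∈ s, eps (p * g) := by
  rw [sF, Finset.mul_sum]
  exact Finset.sum_congr rfl (fun g _ => eps_mul p g)

lemma sF_mul_eps (s : Finset (Equiv.Perm (Fin n))) (p : Equiv.Perm (Fin n)) :
    sF s * eps p = ∑ g ∈ s, eps (g * p) := by
  rw [sF, Finset.sum_mul]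
  exact Finset.sum_congr rfl (fun g _ => eps_mul g p)

/-- reindexing: a bijective right translation fixes the sum -/
lemma sF_mul_eps_self {s : Finset (Equiv.Perm (Fin n))} {t : Equiv.Perm (Fin n)}
    (h : ∀ g, g ∈ s ↔ g * t ∈ s) : sF s * eps t = sF s := by
  rw [sF_mul_eps]
  apply Finset.sum_nbij (fun g => g * t)
  · exact fun g hg => (h g).1 hg
  · intro g _ g' _ hgg'
    exact mul_right_cancel hgg'
  · intro g hg
    exact ⟨g * t⁻¹, by simpa using (h (g * t⁻¹)).2 (by simpa using hg), by simp⟩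
  · exact fun g _ => rfl

/-- general factorization of group sums via bijective multiplication -/
lemma sF_mul_sF (X Y Z : Finset (Equiv.Perm (Fin n)))
    (h1 : ∀ x ∈ X, ∀ y ∈ Y, x * y ∈ Z)
    (h2 : ∀ z ∈ Z, ∃ x ∈ X, ∃ y ∈ Y, x * y = z)
    (h3 : ∀ x ∈ X, ∀ y ∈ Y, ∀ x' ∈ X, ∀ y' ∈ Y, x * y = x' * y' → x = x') :
    sF X * sF Y = sF Z := by
  rw [sF, sF, Finset.sum_mul_sum]
  rw [← Finset.sum_product']
  apply Finset.sum_nbij (fun p => p.1 * p.2)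
  · rintro ⟨x, y⟩ hxy
    rw [Finset.mem_product] at hxy
    exact h1 x hxy.1 y hxy.2
  · rintro ⟨x, y⟩ hxy ⟨x', y'⟩ hxy' hm
    rw [Finset.mem_coe, Finset.mem_product] at hxy hxy'
    have hx : x = x' := h3 x hxy.1 y hxy.2 x' hxy'.1 y' hxy'.2 hm
    subst hx
    have : y = y' := mul_left_cancel hm
    simp [this]
  · intro z hz
    rw [Finset.mem_coe] at hz
    obtain ⟨x, hx, y, hy, hxy⟩ := h2 z hz
    exact ⟨(x, y), Finset.mem_coe.2 (Finset.mem_product.2 ⟨hx, hy⟩), hxy⟩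
  · rintro ⟨x, y⟩ _
    exact eps_mul x y

/-- permutations with disjoint support commute -/
lemma perm_comm_of_support {N : Finset (Fin n)} {g h : Equiv.Perm (Fin n)}
    (hg : ∀ m ∉ N, g m = m) (hh : ∀ m ∈ N, h m = m) : g * h = h * g := by
  have hgN : ∀ m ∈ N, g m ∈ N := by
    intro m hm
    by_contra hc
    have := hg _ hc
    have : g m = m := g.injective this
    rw [this] at hc; exact hc hm
  have hhN : ∀ m ∉ N, h m ∉ N := by
    intro m hm hc
    have := hh _ hc
    have : h m = m := h.injective this
    rw [this] at hc; exact hm hc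
  ext m
  simp only [Equiv.Perm.mul_apply]
  by_cases hm : m ∈ N
  · rw [hh m hm, hh (g m) (hgN m hm)]
  · rw [hg m hm, hg (h m) (hhN m hm)]

end GroupAlg

section Sym

open Equiv MonoidAlgebra

variable {n : ℕ} (μ : YoungDiagram)

/-- row-preserving permutations -/
def PrP (σ : Equiv.Perm (Fin n)) : Prop := ∀ m : Fin n, rowOf μ (σ m) = rowOf μ m

/-- column-preserving permutations -/
def PcP (σ : Equiv.Perm (Fin n)) : Prop := ∀ m : Fin n, colOf μ (σ m) = colOf μ m

lemma PrP_mul {σ τ : Equiv.Perm (Fin n)} (hσ : PrP μ σ) (hτ : PrP μ τ) : PrP μ (σ * τ) :=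
  fun m => by rw [Equiv.Perm.mul_apply, hσ, hτ]

lemma PrP_inv {σ : Equiv.Perm (Fin n)} (hσ : PrP μ σ) : PrP μ σ⁻¹ := by
  intro m
  have := hσ (σ⁻¹ m)
  simpa using this.symm

lemma PcP_mul {σ τ : Equiv.Perm (Fin n)} (hσ : PcP μ σ) (hτ : PcP μ τ) : PcP μ (σ * τ) :=
  fun m => by rw [Equiv.Perm.mul_apply, hσ, hτ]

lemma PcP_inv {σ : Equiv.Perm (Fin n)} (hσ : PcP μ σ) : PcP μ σ⁻¹ := by
  intro m
  have := hσ (σ⁻¹ m)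
  simpa using this.symm

open scoped Classical in
lemma rowSym_eq_sF : rowSym n μ = sF (Finset.univ.filter (PrP μ)) := by
  unfold rowSym sF eps PrP
  congr

lemma rowSym_absorb {p : Equiv.Perm (Fin n)} (hp : PrP μ p) :
    eps p * rowSym n μ = rowSym n μ := by
  classical
  rw [rowSym_eq_sF, eps_mul_sF]
  apply Finset.sum_nbij (fun g => p * g)
  · intro g hg
    simp only [Finset.mem_filter, Finset.mem_univ, true_and] at hg ⊢
    exact PrP_mul μ hp hg
  · intro g _ g' _ h
    exact mul_left_cancel h
  · intro g hg
    simp only [Finset.coe_filter, Finset.mem_univ, true_and, Set.mem_setOf_eq] at hg ⊢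
    exact ⟨p⁻¹ * g, PrP_mul μ (PrP_inv μ hp) hg, by simp [mul_assoc]⟩
  · exact fun g _ => rfl

open scoped Classical in
lemma colSym_eq : colSym n μ = ∑ σ ∈ Finset.univ.filter (PcP μ),
    MonoidAlgebra.single σ ((Equiv.Perm.sign σ : ℤ) : ℂ) := by
  unfold colSym PcP
  congr

lemma colSym_absorb {q : Equiv.Perm (Fin n)} (hq : PcP μ q) :
    eps q * colSym n μ = (((Equiv.Perm.sign q : ℤ) : ℂ)) • colSym n μ := by
  classical
  rw [colSym_eq, Finset.mul_sum, Finset.smul_sum]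
  have key : ∀ σ ∈ Finset.univ.filter (PcP μ),
      eps q * MonoidAlgebra.single σ ((Equiv.Perm.sign σ : ℤ) : ℂ) =
      MonoidAlgebra.single (q * σ)
        (((Equiv.Perm.sign q : ℤ) : ℂ) * ((Equiv.Perm.sign (q * σ) : ℤ) : ℂ)) := by
    intro σ _
    rw [eps, MonoidAlgebra.single_mul_single, one_mul]
    congr 1
    have h1 : Equiv.Perm.sign (q * σ) = Equiv.Perm.sign q * Equiv.Perm.sign σ := map_mul _ _ _
    have h2 : Equiv.Perm.sign q * Equiv.Perm.sign q = 1 := by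
      rcases Int.units_eq_one_or (Equiv.Perm.sign q) with h | h <;> simp [h]
    rw [h1]
    rcases Int.units_eq_one_or (Equiv.Perm.sign q) with h | h <;>
      rcases Int.units_eq_one_or (Equiv.Perm.sign σ) with h' | h' <;>
      simp [h, h']
  rw [Finset.sum_congr rfl key]
  apply Finset.sum_nbij (fun g => q * g)
  · intro g hg
    simp only [Finset.mem_filter, Finset.mem_univ, true_and] at hg ⊢
    exact PcP_mul μ hq hg
  · intro g _ g' _ h
    exact mul_left_cancel h
  · intro g hg
    simp only [Finset.coe_filter, Finset.mem_univ, true_and, Set.mem_setOf_eq] at hg ⊢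
    exact ⟨q⁻¹ * g, PcP_mul μ (PcP_inv μ hq) hg, by simp [mul_assoc]⟩
  · intro g _
    exact (MonoidAlgebra.smul_single' _ _ _).symm

lemma colSym_absorb_swap {u v : Fin n} (huv : u ≠ v) (hcol : colOf μ u = colOf μ v) :
    eps (Equiv.swap u v) * colSym n μ = -colSym n μ := by
  have hPc : PcP μ (Equiv.swap u v) := by
    intro m
    by_cases h1 : m = u
    · rw [h1, Equiv.swap_apply_left, ← hcol]
    · by_cases h2 : m = v
      · rw [h2, Equiv.swap_apply_right, hcol]
      · rw [Equiv.swap_apply_of_ne_of_ne h1 h2]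
  rw [colSym_absorb μ hPc, Equiv.Perm.sign_swap huv]
  push_cast
  simp

end Sym

section Eigen

open Equiv MonoidAlgebra Finset

variable {n : ℕ} (μ : YoungDiagram)

lemma mem_of_supp {s : Finset (Fin n)} {g : Equiv.Perm (Fin n)}
    (hg : ∀ m ∉ s, g m = m) {m : Fin n} (hm : m ∈ s) : g m ∈ s := by
  by_contra hc
  have h1 := hg _ hc
  have h2 : g m = m := g.injective h1
  rw [h2] at hc; exact hc hm

lemma supp_mul {s : Finset (Fin n)} {g h : Equiv.Perm (Fin n)}
    (hg : ∀ m ∉ s, g m = m) (hh : ∀ m ∉ s, h m = m) : ∀ m ∉ s, (g * h) m = m := by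
  intro m hm
  simp only [Equiv.Perm.mul_apply]
  rw [hh m hm, hg m hm]

lemma supp_inv {s : Finset (Fin n)} {g : Equiv.Perm (Fin n)}
    (hg : ∀ m ∉ s, g m = m) : ∀ m ∉ s, g⁻¹ m = m := by
  intro m hm
  have := hg m hm
  nth_rewrite 1 [← this]
  exact g.symm_apply_apply m

lemma supp_mono {s t : Finset (Fin n)} (hst : s ⊆ t) {g : Equiv.Perm (Fin n)}
    (hg : ∀ m ∉ s, g m = m) : ∀ m ∉ t, g m = m :=
  fun m hm => hg m (fun hc => hm (hst hc))

/-- boxes in row `i` -/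
noncomputable def RiF (i : ℕ) : Finset (Fin n) :=
  Finset.univ.filter (fun m : Fin n => rowOf μ (m : ℕ) = i)

/-- permutations supported in a set of boxes -/
noncomputable def suppF (s : Finset (Fin n)) : Finset (Equiv.Perm (Fin n)) :=
  Finset.univ.filter (fun g => ∀ m ∉ s, g m = m)

open scoped Classical in
/-- row-preserving permutations fixing row `i` pointwise -/
noncomputable def ArestF (i : ℕ) : Finset (Equiv.Perm (Fin n)) :=
  Finset.univ.filter (fun g => PrP μ g ∧ ∀ m ∈ RiF μ i, g m = m)

open scoped Classical in
/-- row-preserving permutations fixing row `i` pointwise and fixing `k` -/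
noncomputable def AtilF (i : ℕ) (k : Fin n) : Finset (Equiv.Perm (Fin n)) :=
  Finset.univ.filter (fun g => PrP μ g ∧ (∀ m ∈ RiF μ i, g m = m) ∧ g k = k)

lemma PrP_of_supp {i : ℕ} {g : Equiv.Perm (Fin n)}
    (hg : ∀ m ∉ RiF μ i, g m = m) : PrP μ g := by
  intro m
  by_cases hm : m ∈ RiF μ i
  · have h1 : g m ∈ RiF μ i := mem_of_supp hg hm
    simp only [RiF, Finset.mem_filter] at hm h1
    rw [h1.2, hm.2]
  · rw [hg m hm]

lemma PrP_swap {u v : Fin n} (h : rowOf μ (u : ℕ) = rowOf μ (v : ℕ)) :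
    PrP μ (Equiv.swap u v) := by
  intro m
  by_cases h1 : m = u
  · rw [h1, Equiv.swap_apply_left, ← h]
  · by_cases h2 : m = v
    · rw [h2, Equiv.swap_apply_right, h]
    · rw [Equiv.swap_apply_of_ne_of_ne h1 h2]

lemma stepA (i : ℕ) : sF (suppF (RiF μ i)) * sF (ArestF μ i) = rowSym n μ := by
  classical
  rw [rowSym_eq_sF]
  apply sF_mul_sF
  · intro x hx y hy
    simp only [suppF, ArestF, Finset.mem_filter, Finset.mem_univ, true_and] at hx hy ⊢
    exact PrP_mul μ (PrP_of_supp μ hx) hy.1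
  · intro z hz
    simp only [Finset.mem_filter, Finset.mem_univ, true_and] at hz
    have hmem : ∀ m : Fin n, (m ∈ RiF μ i) ↔ (z m ∈ RiF μ i) := by
      intro m
      simp only [RiF, Finset.mem_filter, Finset.mem_univ, true_and]
      rw [hz m]
    set x : Equiv.Perm (Fin n) := Equiv.Perm.ofSubtype (z.subtypePerm (fun m => (hmem m).symm)) with hxdef
    have hx1 : ∀ m ∉ RiF μ i, x m = m := by
      intro m hm
      exact Equiv.Perm.ofSubtype_apply_of_not_mem _ hm
    have hx2 : ∀ m ∈ RiF μ i, x m = z m := by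
      intro m hm
      rw [hxdef, Equiv.Perm.ofSubtype_apply_of_mem _ hm]
      rfl
    refine ⟨x, ?_, x⁻¹ * z, ?_, by simp⟩
    · simp only [suppF, Finset.mem_filter, Finset.mem_univ, true_and]
      exact hx1
    · simp only [ArestF, Finset.mem_filter, Finset.mem_univ, true_and]
      constructor
      · exact PrP_mul μ (PrP_inv μ (PrP_of_supp μ hx1)) hz
      · intro m hm
        simp only [Equiv.Perm.mul_apply]
        rw [← hx2 m hm]
        exact x.symm_apply_apply m
  · intro x hx y hy x' hx' y' hy' h
    simp only [suppF, ArestF, Finset.mem_filter, Finset.mem_univ, true_and] at hx hy hx' hy'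
    ext m
    by_cases hm : m ∈ RiF μ i
    · have e1 : (x * y) m = x m := by
        simp only [Equiv.Perm.mul_apply]; rw [hy.2 m hm]
      have e2 : (x' * y') m = x' m := by
        simp only [Equiv.Perm.mul_apply]; rw [hy'.2 m hm]
      rw [← e1, ← e2, h]
    · rw [hx m hm, hx' m hm]

end Eigen

lemma sF_comm {n : ℕ} (X Y : Finset (Equiv.Perm (Fin n)))
    (h : ∀ x ∈ X, ∀ y ∈ Y, x * y = y * x) : sF X * sF Y = sF Y * sF X := by
  rw [sF, sF, Finset.sum_mul_sum, Finset.sum_mul_sum, Finset.sum_comm]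
  apply Finset.sum_congr rfl
  intro y hy
  apply Finset.sum_congr rfl
  intro x hx
  rw [eps_mul, eps_mul, h x hx y hy]

section Eigen2

open Equiv MonoidAlgebra Finset

variable {n : ℕ} (μ : YoungDiagram)

/-- the "1 + row transpositions into k" finset -/
noncomputable def X1F (i : ℕ) (k : Fin n) : Finset (Equiv.Perm (Fin n)) :=
  (RiF μ i).image (fun j => Equiv.swap j k) ∪ {1}

/-- the row of `k` together with `k`'s coset maps -/
noncomputable def SLF (k : Fin n) : Finset (Equiv.Perm (Fin n)) :=
  (RiF μ (rowOf μ (k : ℕ))).image (fun l => Equiv.swap l k)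

lemma stepB (i : ℕ) (k : Fin n) (hik : rowOf μ (k : ℕ) ≠ i) :
    sF (X1F μ i k) * sF (suppF (RiF μ i)) = sF (suppF (insert k (RiF μ i))) := by
  classical
  have hkRi : k ∉ RiF μ i := by
    simp only [RiF, Finset.mem_filter, Finset.mem_univ, true_and]
    exact hik
  have hsub : RiF μ i ⊆ insert k (RiF μ i) := Finset.subset_insert _ _
  apply sF_mul_sF
  · intro x hx y hy
    simp only [X1F, suppF, Finset.mem_filter, Finset.mem_univ, true_and,
      Finset.mem_union, Finset.mem_image, Finset.mem_singleton] at hx hy ⊢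
    have hxsupp : ∀ m ∉ insert k (RiF μ i), x m = m := by
      rcases hx with ⟨j, hj, rfl⟩ | rfl
      · intro m hm
        apply Equiv.swap_apply_of_ne_of_ne
        · intro hc; rw [hc] at hm; exact hm (hsub hj)
        · intro hc; rw [hc] at hm; exact hm (Finset.mem_insert_self _ _)
      · intro m _; rfl
    exact supp_mul hxsupp (supp_mono hsub hy)
  · intro z hz
    simp only [suppF, Finset.mem_filter, Finset.mem_univ, true_and] at hz
    have hzk : z k ∈ insert k (RiF μ i) := mem_of_supp hz (Finset.mem_insert_self _ _)
    refine ⟨Equiv.swap (z k) k, ?_, Equiv.swap (z k) k * z, ?_, by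
      rw [← mul_assoc, Equiv.swap_mul_self, one_mul]⟩
    · simp only [X1F, Finset.mem_union, Finset.mem_image, Finset.mem_singleton]
      by_cases h : z k = k
      · right; rw [h]; exact Equiv.swap_self k
      · left
        exact ⟨z k, (Finset.mem_insert.1 hzk).resolve_left h, rfl⟩
    · simp only [suppF, Finset.mem_filter, Finset.mem_univ, true_and]
      intro m hm
      by_cases hmk : m = k
      · rw [hmk]
        simp only [Equiv.Perm.mul_apply]
        exact Equiv.swap_apply_left _ _
      · have hmN : m ∉ insert k (RiF μ i) := by
          simp only [Finset.mem_insert]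
          push_neg
          exact ⟨hmk, hm⟩
        simp only [Equiv.Perm.mul_apply]
        rw [hz m hmN]
        apply Equiv.swap_apply_of_ne_of_ne
        · intro hc; rw [hc] at hmN; exact hmN hzk
        · exact hmk
  · intro x hx y hy x' hx' y' hy' h
    simp only [X1F, suppF, Finset.mem_filter, Finset.mem_univ, true_and,
      Finset.mem_union, Finset.mem_image, Finset.mem_singleton] at hx hy hx' hy'
    have hyk : y k = k := hy k hkRi
    have hyk' : y' k = k := hy' k hkRi
    have hz : x k = x' k := by
      have e1 : (x * y) k = x k := by simp only [Equiv.Perm.mul_apply]; rw [hyk]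
      have e2 : (x' * y') k = x' k := by simp only [Equiv.Perm.mul_apply]; rw [hyk']
      rw [← e1, ← e2, h]
    rcases hx with ⟨j, hj, rfl⟩ | rfl <;> rcases hx' with ⟨j', hj', rfl⟩ | rfl
    · rw [Equiv.swap_apply_right, Equiv.swap_apply_right] at hz
      rw [hz]
    · rw [Equiv.swap_apply_right, Equiv.Perm.one_apply] at hz
      rw [hz] at hj
      exact absurd hj hkRi
    · rw [Equiv.swap_apply_right, Equiv.Perm.one_apply] at hz
      rw [← hz] at hj'
      exact absurd hj' hkRi
    · rfl

lemma stepC (i : ℕ) (k : Fin n) (hi : i < rowOf μ (k : ℕ)) :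
    sF (AtilF μ i k) * sF (SLF μ k) = sF (ArestF μ i) := by
  classical
  have hik : rowOf μ (k : ℕ) ≠ i := by omega
  have hrowk : ∀ l : Fin n, l ∈ RiF μ (rowOf μ (k:ℕ)) → l ∉ RiF μ i := by
    intro l hl hc
    simp only [RiF, Finset.mem_filter, Finset.mem_univ, true_and] at hl hc
    omega
  apply sF_mul_sF
  · intro x hx y hy
    simp only [AtilF, ArestF, SLF, Finset.mem_filter, Finset.mem_univ, true_and,
      Finset.mem_image] at hx hy ⊢
    obtain ⟨l, hl, rfl⟩ := hy
    have hlrow : rowOf μ (l:ℕ) = rowOf μ (k:ℕ) := by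
      simp only [RiF, Finset.mem_filter, Finset.mem_univ, true_and] at hl
      exact hl
    constructor
    · exact PrP_mul μ hx.1 (PrP_swap μ hlrow)
    · intro m hm
      simp only [Equiv.Perm.mul_apply]
      have hswap : Equiv.swap l k m = m := by
        apply Equiv.swap_apply_of_ne_of_ne
        · intro hc; rw [hc] at hm; exact hrowk l hl hm
        · intro hc; rw [hc] at hm
          simp only [RiF, Finset.mem_filter, Finset.mem_univ, true_and] at hm
          exact hik hm
      rw [hswap, hx.2.1 m hm]
  · intro z hz
    simp only [ArestF, Finset.mem_filter, Finset.mem_univ, true_and] at hz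
    set l : Fin n := z⁻¹ k with hldef
    have hlrow : rowOf μ (l:ℕ) = rowOf μ (k:ℕ) := PrP_inv μ hz.1 k
    have hlRi : l ∈ RiF μ (rowOf μ (k:ℕ)) := by
      simp only [RiF, Finset.mem_filter, Finset.mem_univ, true_and]
      exact hlrow
    refine ⟨z * Equiv.swap l k, ?_, Equiv.swap l k, ?_, by
      rw [mul_assoc, Equiv.swap_mul_self, mul_one]⟩
    · simp only [AtilF, Finset.mem_filter, Finset.mem_univ, true_and]
      refine ⟨PrP_mul μ hz.1 (PrP_swap μ hlrow), ?_, ?_⟩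
      · intro m hm
        simp only [Equiv.Perm.mul_apply]
        have hswap : Equiv.swap l k m = m := by
          apply Equiv.swap_apply_of_ne_of_ne
          · intro hc; rw [hc] at hm; exact hrowk l hlRi hm
          · intro hc; rw [hc] at hm
            simp only [RiF, Finset.mem_filter, Finset.mem_univ, true_and] at hm
            exact hik hm
        rw [hswap, hz.2 m hm]
      · simp only [Equiv.Perm.mul_apply]
        rw [Equiv.swap_apply_right]
        exact z.apply_symm_apply k
    · simp only [SLF, Finset.mem_image]
      exact ⟨l, hlRi, rfl⟩
  · intro x hx y hy x' hx' y' hy' h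
    simp only [AtilF, SLF, Finset.mem_filter, Finset.mem_univ, true_and,
      Finset.mem_image] at hx hy hx' hy'
    obtain ⟨l, hl, rfl⟩ := hy
    obtain ⟨l', hl', rfl⟩ := hy'
    have hxk : x⁻¹ k = k := by nth_rewrite 1 [← hx.2.2]; exact x.symm_apply_apply k
    have hxk' : x'⁻¹ k = k := by nth_rewrite 1 [← hx'.2.2]; exact x'.symm_apply_apply k
    have e1 : (x * Equiv.swap l k)⁻¹ k = l := by
      rw [mul_inv_rev]
      simp only [Equiv.Perm.mul_apply]
      rw [hxk, Equiv.swap_inv, Equiv.swap_apply_right]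
    have e2 : (x' * Equiv.swap l' k)⁻¹ k = l' := by
      rw [mul_inv_rev]
      simp only [Equiv.Perm.mul_apply]
      rw [hxk', Equiv.swap_inv, Equiv.swap_apply_right]
    have hll : l = l' := by rw [← e1, ← e2, h]
    subst hll
    exact mul_right_cancel h

lemma stepD (i : ℕ) (k : Fin n) :
    sF (AtilF μ i k) * sF (suppF (insert k (RiF μ i))) =
    sF (suppF (insert k (RiF μ i))) * sF (AtilF μ i k) := by
  classical
  apply sF_comm
  intro x hx y hy
  simp only [AtilF, suppF, Finset.mem_filter, Finset.mem_univ, true_and] at hx hy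
  have hxfix : ∀ m ∈ insert k (RiF μ i), x m = m := by
    intro m hm
    rcases Finset.mem_insert.1 hm with rfl | hm'
    · exact hx.2.2
    · exact hx.2.1 m hm'
  exact (perm_comm_of_support hy hxfix).symm

end Eigen2

section Eigen3

open Equiv MonoidAlgebra Finset

variable {n : ℕ} (μ : YoungDiagram)

lemma stepE (hμ : μ.card = n) (k : Fin n) {i : ℕ} (hi : i < rowOf μ (k : ℕ))
    (l : Fin n) (hl : rowOf μ (l : ℕ) = rowOf μ (k : ℕ)) :
    sF (suppF (insert k (RiF μ i))) * eps (Equiv.swap l k) * colSym n μ = 0 := by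
  classical
  have hlc : (l : ℕ) < μ.card := by rw [hμ]; exact l.isLt
  have hcol_lt : colOf μ (l : ℕ) < μ.rowLen i := by
    have h1 := colOf_lt μ hlc
    rw [hl] at h1
    have h2 := μ.rowLen_anti i (rowOf μ (k : ℕ)) (le_of_lt hi)
    omega
  have hmem : (i, colOf μ (l : ℕ)) ∈ μ := YoungDiagram.mem_iff_lt_rowLen.2 hcol_lt
  have hjlt : F μ i + colOf μ (l : ℕ) < n := by
    have := boxN_lt_card μ hmem; omega
  set j₁ : Fin n := ⟨F μ i + colOf μ (l : ℕ), hjlt⟩ with hj₁def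
  have hj₁row : rowOf μ (j₁ : ℕ) = i := rowOf_boxN μ hmem
  have hj₁col : colOf μ (j₁ : ℕ) = colOf μ (l : ℕ) := colOf_boxN μ hmem
  have hj₁Ri : j₁ ∈ RiF μ i := by
    simp only [RiF, Finset.mem_filter, Finset.mem_univ, true_and]
    exact hj₁row
  have hj₁k : j₁ ≠ k := by
    intro h; rw [h] at hj₁row; omega
  have hj₁l : j₁ ≠ l := by
    intro h; rw [h] at hj₁row; omega
  have ht'supp : ∀ m ∉ insert k (RiF μ i), Equiv.swap j₁ k m = m := by
    intro m hm
    apply Equiv.swap_apply_of_ne_of_ne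
    · intro hc; rw [hc] at hm
      exact hm (Finset.mem_insert_of_mem hj₁Ri)
    · intro hc; rw [hc] at hm
      exact hm (Finset.mem_insert_self _ _)
  have hre : sF (suppF (insert k (RiF μ i))) * eps (Equiv.swap j₁ k) =
      sF (suppF (insert k (RiF μ i))) := by
    apply sF_mul_eps_self
    intro g
    simp only [suppF, Finset.mem_filter, Finset.mem_univ, true_and]
    constructor
    · intro hg
      exact supp_mul hg ht'supp
    · intro hg
      have : ∀ m ∉ insert k (RiF μ i), (g * Equiv.swap j₁ k * Equiv.swap j₁ k) m = m :=
        supp_mul hg ht'supp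
      intro m hm
      have h2 := this m hm
      rwa [Equiv.mul_swap_mul_self] at h2
  have hswapid : Equiv.swap j₁ k * Equiv.swap l k =
      Equiv.swap l k * Equiv.swap j₁ l := by
    have h1 := Equiv.swap_apply_apply (Equiv.swap l k) j₁ l
    rw [Equiv.swap_apply_of_ne_of_ne hj₁l hj₁k, Equiv.swap_apply_left, Equiv.swap_inv] at h1
    rw [h1, mul_assoc, mul_assoc, Equiv.swap_mul_self, mul_one]
  have habs : eps (Equiv.swap j₁ l) * colSym n μ = -colSym n μ := by
    apply colSym_absorb_swap μ hj₁l
    rw [hj₁col]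
  have key : sF (suppF (insert k (RiF μ i))) * eps (Equiv.swap l k) * colSym n μ =
      -(sF (suppF (insert k (RiF μ i))) * eps (Equiv.swap l k) * colSym n μ) := by
    nth_rewrite 1 [← hre]
    rw [mul_assoc _ _ (eps (Equiv.swap l k)), eps_mul, hswapid, ← eps_mul,
      ← mul_assoc, mul_assoc _ _ (colSym n μ), habs]
    rw [mul_neg]
  have h2 : (2 : ℂ) • (sF (suppF (insert k (RiF μ i))) * eps (Equiv.swap l k) * colSym n μ)
      = 0 := by
    rw [two_smul]
    nth_rewrite 2 [key]
    rw [add_neg_cancel]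
  rcases smul_eq_zero.1 h2 with h | h
  · norm_num at h
  · exact h

lemma row_absorb (hμ : μ.card = n) (k : Fin n) {i : ℕ} (hi : i < rowOf μ (k : ℕ)) :
    (∑ j ∈ RiF μ i, eps (Equiv.swap j k)) * (rowSym n μ * colSym n μ) =
      -(rowSym n μ * colSym n μ) := by
  classical
  have hik : rowOf μ (k : ℕ) ≠ i := by omega
  have hkRi : k ∉ RiF μ i := by
    simp only [RiF, Finset.mem_filter, Finset.mem_univ, true_and]
    exact hik
  have hswapinj : ∀ j ∈ RiF μ i, ∀ j' ∈ RiF μ i,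
      Equiv.swap j k = Equiv.swap j' k → j = j' := by
    intro j _ j' _ h
    have := congrArg (fun σ : Equiv.Perm (Fin n) => σ k) h
    simpa [Equiv.swap_apply_right] using this
  have hX1 : sF (X1F μ i k) = (∑ j ∈ RiF μ i, eps (Equiv.swap j k)) + 1 := by
    rw [X1F, sF]
    rw [Finset.sum_union]
    · rw [Finset.sum_image hswapinj, Finset.sum_singleton, eps_one]
    · rw [Finset.disjoint_singleton_right]
      simp only [Finset.mem_image]
      rintro ⟨j, hj, hswap⟩
      have := congrArg (fun σ : Equiv.Perm (Fin n) => σ k) hswap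
      simp only [Equiv.swap_apply_right, Equiv.Perm.one_apply] at this
      rw [this] at hj
      exact hkRi hj
  have hSL : sF (SLF μ k) = ∑ l ∈ RiF μ (rowOf μ (k : ℕ)), eps (Equiv.swap l k) := by
    rw [SLF, sF]
    exact Finset.sum_image (by
      intro j hj j' hj' h
      have := congrArg (fun σ : Equiv.Perm (Fin n) => σ k) h
      simpa [Equiv.swap_apply_right] using this)
  have hzero : sF (X1F μ i k) * (rowSym n μ * colSym n μ) = 0 := by
    calc sF (X1F μ i k) * (rowSym n μ * colSym n μ)
        = sF (X1F μ i k) * ((sF (suppF (RiF μ i)) * sF (ArestF μ i)) * colSym n μ) := by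
          rw [stepA]
      _ = ((sF (X1F μ i k) * sF (suppF (RiF μ i))) * sF (ArestF μ i)) * colSym n μ := by
          rw [← mul_assoc, ← mul_assoc]
      _ = ((sF (suppF (insert k (RiF μ i)))) * sF (ArestF μ i)) * colSym n μ := by
          rw [stepB μ i k hik]
      _ = ((sF (suppF (insert k (RiF μ i)))) * (sF (AtilF μ i k) * sF (SLF μ k)))
            * colSym n μ := by rw [stepC μ i k hi]
      _ = ((sF (suppF (insert k (RiF μ i))) * sF (AtilF μ i k)) * sF (SLF μ k))
            * colSym n μ := by rw [← mul_assoc]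
      _ = ((sF (AtilF μ i k) * sF (suppF (insert k (RiF μ i)))) * sF (SLF μ k))
            * colSym n μ := by rw [stepD]
      _ = sF (AtilF μ i k) * ((sF (suppF (insert k (RiF μ i))) * sF (SLF μ k))
            * colSym n μ) := by
          rw [mul_assoc (sF (AtilF μ i k)) (sF (suppF (insert k (RiF μ i)))) (sF (SLF μ k)),
            mul_assoc (sF (AtilF μ i k)) _ (colSym n μ)]
      _ = 0 := by
          rw [hSL, Finset.mul_sum, Finset.sum_mul]
          have : ∀ l ∈ RiF μ (rowOf μ (k : ℕ)),
              (sF (suppF (insert k (RiF μ i))) * eps (Equiv.swap l k)) * colSym n μ = 0 := by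
            intro l hl
            simp only [RiF, Finset.mem_filter, Finset.mem_univ, true_and] at hl
            exact stepE μ hμ k hi l hl
          rw [Finset.sum_congr rfl this, Finset.sum_const_zero, mul_zero]
  rw [hX1, add_mul, one_mul] at hzero
  exact eq_neg_of_add_eq_zero_left hzero

end Eigen3

section EigenMain

open Equiv MonoidAlgebra Finset

variable {n : ℕ} (μ : YoungDiagram)

lemma JM_eq (k : Fin n) : JM n k =
    ∑ j ∈ Finset.univ.filter (fun j : Fin n => j < k), eps (Equiv.swap j k) := by
  unfold JM eps
  congr

lemma flt (hμ : μ.card = n) (m : Fin n) : (m : ℕ) < μ.card := by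
  rw [hμ]; exact m.isLt

lemma eigen (hμ : μ.card = n) (k : Fin n) :
    JM n k * (rowSym n μ * colSym n μ) =
      (((colOf μ (k : ℕ) : ℂ)) - ((rowOf μ (k : ℕ) : ℂ))) • (rowSym n μ * colSym n μ) := by
  classical
  set S1 : Finset (Fin n) :=
    Finset.univ.filter (fun j : Fin n => rowOf μ (j : ℕ) = rowOf μ (k : ℕ) ∧ j < k) with hS1def
  set S2 : Finset (Fin n) :=
    Finset.univ.filter (fun j : Fin n => rowOf μ (j : ℕ) < rowOf μ (k : ℕ)) with hS2def
  have hsplit : Finset.univ.filter (fun j : Fin n => j < k) = S1 ∪ S2 := by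
    ext j
    simp only [hS1def, hS2def, Finset.mem_union, Finset.mem_filter, Finset.mem_univ, true_and]
    constructor
    · intro hj
      have hjk : (j : ℕ) < (k : ℕ) := hj
      have hle := rowOf_le_of_lt μ (flt μ hμ j) (flt μ hμ k) hjk
      rcases eq_or_lt_of_le hle with h | h
      · exact Or.inl ⟨h, hj⟩
      · exact Or.inr h
    · rintro (⟨_, hj⟩ | h)
      · exact hj
      · have : (j : ℕ) < (k : ℕ) := lt_of_lex μ (flt μ hμ j) (flt μ hμ k) (Or.inl h)
        exact this
  have hdisj : Disjoint S1 S2 := by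
    rw [Finset.disjoint_left]
    intro j hj1 hj2
    simp only [hS1def, hS2def, Finset.mem_filter, Finset.mem_univ, true_and] at hj1 hj2
    omega
  have hbiUnion : S2 = (Finset.range (rowOf μ (k : ℕ))).biUnion (fun i => RiF μ i) := by
    ext j
    simp only [hS2def, RiF, Finset.mem_biUnion, Finset.mem_range, Finset.mem_filter,
      Finset.mem_univ, true_and]
    constructor
    · intro h; exact ⟨rowOf μ (j : ℕ), h, rfl⟩
    · rintro ⟨i, hi, rfl⟩; exact hi
  have hdisjRi : ∀ i1 ∈ Finset.range (rowOf μ (k : ℕ)), ∀ i2 ∈ Finset.range (rowOf μ (k : ℕ)),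
      i1 ≠ i2 → Disjoint (RiF (n := n) μ i1) (RiF (n := n) μ i2) := by
    intro i1 _ i2 _ h12
    rw [Finset.disjoint_left]
    intro j hj1 hj2
    simp only [RiF, Finset.mem_filter, Finset.mem_univ, true_and] at hj1 hj2
    omega
  have hcard : S1.card = colOf μ (k : ℕ) := by
    have himg : S1.image (fun j : Fin n => colOf μ (j : ℕ)) = Finset.range (colOf μ (k : ℕ)) := by
      ext c
      simp only [Finset.mem_image, Finset.mem_range, hS1def, Finset.mem_filter,
        Finset.mem_univ, true_and]
      constructor
      · rintro ⟨j, ⟨hrow, hjk⟩, rfl⟩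
        have := lex_of_lt μ (flt μ hμ j) (flt μ hμ k) hjk
        rcases this with h | ⟨_, h⟩
        · omega
        · exact h
      · intro hc
        have h2 := colOf_lt μ (flt μ hμ k)
        have hmem : ((rowOf μ (k : ℕ)), c) ∈ μ := YoungDiagram.mem_iff_lt_rowLen.2 (by omega)
        refine ⟨⟨F μ (rowOf μ (k : ℕ)) + c, by
          have := boxN_lt_card μ hmem; omega⟩, ⟨?_, ?_⟩, ?_⟩
        · exact rowOf_boxN μ hmem
        · have hlt : (F μ (rowOf μ (k : ℕ)) + c) < (k : ℕ) := by
            have := lt_of_lex μ (boxN_lt_card μ hmem) (flt μ hμ k)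
              (Or.inr ⟨by rw [rowOf_boxN μ hmem], by rw [colOf_boxN μ hmem]; exact hc⟩)
            omega
          exact hlt
        · exact colOf_boxN μ hmem
    have hinj : Set.InjOn (fun j : Fin n => colOf μ (j : ℕ)) S1 := by
      intro j hj j' hj' h
      simp only [Finset.coe_filter, hS1def, Set.mem_setOf_eq, Finset.mem_univ,
        true_and] at hj hj'
      apply Fin.ext
      have e1 := boxN_eq μ (flt μ hμ j)
      have e2 := boxN_eq μ (flt μ hμ j')
      simp only at h
      rw [← e1, ← e2, hj.1, hj'.1, h]
    rw [← Finset.card_range (colOf μ (k : ℕ)), ← himg, Finset.card_image_of_injOn hinj]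
  rw [JM_eq, hsplit, Finset.sum_union hdisj, add_mul]
  have hsum1 : (∑ j ∈ S1, eps (Equiv.swap j k)) * (rowSym n μ * colSym n μ) =
      ((colOf μ (k : ℕ) : ℂ)) • (rowSym n μ * colSym n μ) := by
    rw [Finset.sum_mul]
    have : ∀ j ∈ S1, eps (Equiv.swap j k) * (rowSym n μ * colSym n μ) =
        rowSym n μ * colSym n μ := by
      intro j hj
      simp only [hS1def, Finset.mem_filter, Finset.mem_univ, true_and] at hj
      rw [← mul_assoc, rowSym_absorb μ (PrP_swap μ hj.1)]
    rw [Finset.sum_congr rfl this, Finset.sum_const, hcard]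
    rw [← Nat.cast_smul_eq_nsmul ℂ]
  have hsum2 : (∑ j ∈ S2, eps (Equiv.swap j k)) * (rowSym n μ * colSym n μ) =
      -(((rowOf μ (k : ℕ) : ℂ)) • (rowSym n μ * colSym n μ)) := by
    rw [hbiUnion, Finset.sum_biUnion (by exact hdisjRi), Finset.sum_mul]
    have : ∀ i ∈ Finset.range (rowOf μ (k : ℕ)),
        (∑ j ∈ RiF μ i, eps (Equiv.swap j k)) * (rowSym n μ * colSym n μ) =
        -(rowSym n μ * colSym n μ) := by
      intro i hi
      exact row_absorb μ hμ k (Finset.mem_range.1 hi)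
    rw [Finset.sum_congr rfl this, Finset.sum_const, Finset.card_range]
    rw [← Nat.cast_smul_eq_nsmul ℂ]
    simp [smul_neg]
  rw [hsum1, hsum2, sub_smul]
  abel

end EigenMain

section JMRel

open Equiv MonoidAlgebra Finset

variable {n : ℕ}

lemma swap_conj (g : Equiv.Perm (Fin n)) (x y : Fin n) :
    g * Equiv.swap x y = Equiv.swap (g x) (g y) * g := by
  rw [Equiv.swap_apply_apply, mul_assoc, inv_mul_cancel, mul_one]

lemma comm1 {g : Equiv.Perm (Fin n)} (hinv : g * g = 1) (i : Fin n) (hgi : g i = i)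
    (hmap : ∀ m : Fin n, m < i → g m < i) :
    eps g * JM n i = JM n i * eps g := by
  classical
  have hgg : ∀ m : Fin n, g (g m) = m := by
    intro m
    have := congrArg (fun σ : Equiv.Perm (Fin n) => σ m) hinv
    simpa using this
  rw [JM_eq, Finset.mul_sum, Finset.sum_mul]
  have hterm : ∀ j : Fin n, j < i →
      eps g * eps (Equiv.swap j i) = eps (Equiv.swap (g j) i) * eps g := by
    intro j _
    rw [eps_mul, eps_mul, swap_conj, hgi]
  apply Finset.sum_nbij (fun j => g j)
  · intro j hj
    simp only [Finset.mem_filter, Finset.mem_univ, true_and] at hj ⊢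
    exact hmap j hj
  · intro j _ j' _ h
    exact g.injective h
  · intro j hj
    simp only [Finset.coe_filter, Finset.mem_univ, true_and, Set.mem_setOf_eq] at hj ⊢
    exact ⟨g j, hmap j hj, hgg j⟩
  · intro j hj
    simp only [Finset.mem_filter, Finset.mem_univ, true_and] at hj
    exact hterm j hj

lemma JM_comm_aux {i j : Fin n} (hji : j < i) : JM n j * JM n i = JM n i * JM n j := by
  classical
  rw [JM_eq j, Finset.sum_mul, Finset.mul_sum]
  apply Finset.sum_congr rfl
  intro x hx
  simp only [Finset.mem_filter, Finset.mem_univ, true_and] at hx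
  have hxj : x ≠ j := ne_of_lt hx
  apply comm1 (Equiv.swap_mul_self x j) i
  · apply Equiv.swap_apply_of_ne_of_ne
    · exact ne_of_gt (lt_trans hx hji)
    · exact ne_of_gt hji
  · intro m hm
    by_cases h1 : m = x
    · rw [h1, Equiv.swap_apply_left]
      exact hji
    · by_cases h2 : m = j
      · rw [h2, Equiv.swap_apply_right]
        exact lt_trans hx hji
      · rw [Equiv.swap_apply_of_ne_of_ne h1 h2]
        exact hm

lemma JM_comm (i j : Fin n) : JM n i * JM n j = JM n j * JM n i := by
  rcases lt_trichotomy i j with h | h | h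
  · exact JM_comm_aux h
  · rw [h]
  · exact (JM_comm_aux h).symm

variable {a : ℕ} (ha : a + 1 < n)

lemma fin_swap_lt {x y j : Fin n} (hxy : (x:ℕ) + 1 = (y:ℕ)) (hxj : x ≠ j) (hyj : y ≠ j) :
    ∀ m : Fin n, m < j → (Equiv.swap x y) m < j := by
  intro m hm
  have hv : ∀ u v : Fin n, u < v ↔ (u:ℕ) < (v:ℕ) := fun _ _ => Iff.rfl
  by_cases h1 : m = x
  · rw [h1, Equiv.swap_apply_left]
    have hxv : (x:ℕ) < (j:ℕ) := h1 ▸ hm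
    have : (y:ℕ) ≠ (j:ℕ) := fun hc => hyj (Fin.ext hc)
    rw [hv]
    omega
  · by_cases h2 : m = y
    · rw [h2, Equiv.swap_apply_right]
      have hyv : (y:ℕ) < (j:ℕ) := h2 ▸ hm
      rw [hv]
      omega
    · rw [Equiv.swap_apply_of_ne_of_ne h1 h2]
      exact hm

lemma rel1 {x y j : Fin n} (hxy : (x:ℕ) + 1 = (y:ℕ)) (hxj : x ≠ j) (hyj : y ≠ j) :
    eps (Equiv.swap x y) * JM n j = JM n j * eps (Equiv.swap x y) := by
  apply comm1 (Equiv.swap_mul_self x y)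
  · apply Equiv.swap_apply_of_ne_of_ne
    · exact fun hc => hxj hc.symm
    · exact fun hc => hyj hc.symm
  · exact fin_swap_lt hxy hxj hyj

lemma filter_lt_succ {x y : Fin n} (hxy : (x:ℕ) + 1 = (y:ℕ)) :
    Finset.univ.filter (fun j : Fin n => j < y) =
      insert x (Finset.univ.filter (fun j : Fin n => j < x)) := by
  ext j
  simp only [Finset.mem_insert, Finset.mem_filter, Finset.mem_univ, true_and]
  constructor
  · intro hj
    have hj' : (j:ℕ) < (y:ℕ) := hj
    by_cases h : (j:ℕ) = (x:ℕ)
    · exact Or.inl (Fin.ext h)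
    · right
      show (j:ℕ) < (x:ℕ)
      omega
  · rintro (rfl | hj)
    · show (j:ℕ) < (y:ℕ); omega
    · have hj' : (j:ℕ) < (x:ℕ) := hj
      show (j:ℕ) < (y:ℕ); omega

lemma rel2 {x y : Fin n} (hxy : (x:ℕ) + 1 = (y:ℕ)) :
    eps (Equiv.swap x y) * JM n x = JM n y * eps (Equiv.swap x y) - 1 := by
  classical
  have hxyne : x ≠ y := fun hc => by
    have := congrArg (Fin.val) hc; omega
  have hJMy : JM n y = (∑ j ∈ Finset.univ.filter (fun j : Fin n => j < x),
      eps (Equiv.swap j y)) + eps (Equiv.swap x y) := by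
    rw [JM_eq, filter_lt_succ hxy, Finset.sum_insert (by simp)]
    abel
  have hkey : eps (Equiv.swap x y) * JM n x =
      (∑ j ∈ Finset.univ.filter (fun j : Fin n => j < x), eps (Equiv.swap j y)) *
        eps (Equiv.swap x y) := by
    rw [JM_eq, Finset.mul_sum, Finset.sum_mul]
    apply Finset.sum_congr rfl
    intro j hj
    simp only [Finset.mem_filter, Finset.mem_univ, true_and] at hj
    have hjx : j ≠ x := ne_of_lt hj
    have hjy : j ≠ y := by
      intro hc
      have : (j:ℕ) < (x:ℕ) := hj
      rw [hc] at this; omega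
    rw [eps_mul, eps_mul, swap_conj]
    rw [Equiv.swap_apply_of_ne_of_ne hjx hjy, Equiv.swap_apply_left]
  rw [hkey, hJMy, add_mul]
  rw [eps_mul, Equiv.swap_mul_self, eps_one]
  abel

lemma rel2' {x y : Fin n} (hxy : (x:ℕ) + 1 = (y:ℕ)) :
    eps (Equiv.swap x y) * JM n y = JM n x * eps (Equiv.swap x y) + 1 := by
  classical
  have hxyne : x ≠ y := fun hc => by
    have := congrArg (Fin.val) hc; omega
  rw [JM_eq y, filter_lt_succ hxy, Finset.mul_sum, Finset.sum_insert (by simp)]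
  have h1 : eps (Equiv.swap x y) * eps (Equiv.swap x y) = 1 := by
    rw [eps_mul, Equiv.swap_mul_self, eps_one]
  have h2 : ∑ j ∈ Finset.univ.filter (fun j : Fin n => j < x),
      eps (Equiv.swap x y) * eps (Equiv.swap j y) =
      JM n x * eps (Equiv.swap x y) := by
    rw [JM_eq, Finset.sum_mul]
    apply Finset.sum_congr rfl
    intro j hj
    simp only [Finset.mem_filter, Finset.mem_univ, true_and] at hj
    have hjx : j ≠ x := ne_of_lt hj
    have hjy : j ≠ y := by
      intro hc
      have : (j:ℕ) < (x:ℕ) := hj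
      rw [hc] at this; omega
    rw [eps_mul, eps_mul, swap_conj]
    rw [Equiv.swap_apply_of_ne_of_ne hjx hjy, Equiv.swap_apply_right]
  rw [h1, h2]
  abel

lemma rel_sum {x y : Fin n} (hxy : (x:ℕ) + 1 = (y:ℕ)) :
    eps (Equiv.swap x y) * (JM n x + JM n y) = (JM n x + JM n y) * eps (Equiv.swap x y) := by
  rw [mul_add, add_mul, rel2 hxy, rel2' hxy]
  abel

lemma rel_prod {x y : Fin n} (hxy : (x:ℕ) + 1 = (y:ℕ)) :
    eps (Equiv.swap x y) * (JM n x * JM n y) = (JM n x * JM n y) * eps (Equiv.swap x y) := by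
  have h1 : eps (Equiv.swap x y) * (JM n x * JM n y) =
      (JM n y * eps (Equiv.swap x y) - 1) * JM n y := by
    rw [← mul_assoc, rel2 hxy]
  rw [h1, sub_mul, one_mul, mul_assoc, rel2' hxy, mul_add, mul_one]
  rw [← mul_assoc, JM_comm]
  abel

end JMRel

section CommSub

open MonoidAlgebra

variable (n : ℕ)

lemma JM_range_comm : ∀ a ∈ Set.range (JM n), ∀ b ∈ Set.range (JM n), a * b = b * a := by
  rintro _ ⟨i, rfl⟩ _ ⟨j, rfl⟩
  exact JM_comm i j

/-- commutative subalgebra generated by the Jucys–Murphy elements -/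
noncomputable def Bsub : Subalgebra ℂ (MonoidAlgebra ℂ (Equiv.Perm (Fin n))) :=
  Algebra.adjoin ℂ (Set.range (JM n))

noncomputable instance : CommRing (Bsub n) :=
  { (inferInstance : Ring (Bsub n)) with
    mul_comm := (Algebra.isMulCommutative_adjoin ℂ (JM_range_comm n)).is_comm.comm }

/-- the JM elements as elements of the commutative subalgebra -/
noncomputable def XB : Fin n → Bsub n :=
  fun i => ⟨JM n i, Algebra.subset_adjoin ⟨i, rfl⟩⟩

/-- evaluation of a commutative polynomial at the JM elements -/
noncomputable def evalJM : MvPolynomial (Fin n) ℂ →ₐ[ℂ] MonoidAlgebra ℂ (Equiv.Perm (Fin n)) :=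
  (Bsub n).val.comp (MvPolynomial.aeval (XB n))

lemma evalJM_X (i : Fin n) : evalJM n (MvPolynomial.X i) = JM n i := by
  simp [evalJM, XB]

lemma lift_eq_evalJM (P : FreeAlgebra ℂ (Fin n)) :
    FreeAlgebra.lift ℂ (JM n) P = evalJM n (abelPoly n P) := by
  have h : (FreeAlgebra.lift ℂ (JM n) : FreeAlgebra ℂ (Fin n) →ₐ[ℂ] _) =
      (evalJM n).comp (abelPoly n) := by
    apply FreeAlgebra.hom_ext
    funext i
    simp only [Function.comp_apply, FreeAlgebra.lift_ι_apply, AlgHom.coe_comp]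
    rw [show abelPoly n (FreeAlgebra.ι ℂ i) = MvPolynomial.X i from
      FreeAlgebra.lift_ι_apply _ _]
    rw [evalJM_X]
  rw [h]
  rfl

end CommSub

section Central

open MonoidAlgebra Equiv

variable {n : ℕ}

lemma mem_center_of_eps_comm {z : MonoidAlgebra ℂ (Equiv.Perm (Fin n))}
    (hz : ∀ g : Equiv.Perm (Fin n), eps g * z = z * eps g) :
    z ∈ Set.center (MonoidAlgebra ℂ (Equiv.Perm (Fin n))) := by
  rw [Semigroup.mem_center_iff]
  intro a
  have ha : a = Finsupp.sum a.coeff (fun g c => MonoidAlgebra.single g c) :=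
    (MonoidAlgebra.sum_coeff_single a).symm
  rw [ha, Finsupp.sum, Finset.sum_mul, Finset.mul_sum]
  apply Finset.sum_congr rfl
  intro g _
  have e : MonoidAlgebra.single g (a.coeff g) = (a.coeff g) • eps g := by
    rw [eps, MonoidAlgebra.smul_single', mul_one]
  rw [e, smul_mul_assoc, mul_smul_comm, hz g]

lemma eps_comm_of_adjacent {z : MonoidAlgebra ℂ (Equiv.Perm (Fin n))}
    (hz : ∀ x y : Fin n, (x:ℕ) + 1 = (y:ℕ) →
      eps (Equiv.swap x y) * z = z * eps (Equiv.swap x y)) :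
    ∀ g : Equiv.Perm (Fin n), eps g * z = z * eps g := by
  set H : Subgroup (Equiv.Perm (Fin n)) :=
    { carrier := {g | eps g * z = z * eps g}
      one_mem' := by simp [eps_one]
      mul_mem' := by
        intro g h hg hh
        simp only [Set.mem_setOf_eq] at hg hh ⊢
        rw [← eps_mul, mul_assoc, hh, ← mul_assoc, hg, mul_assoc, eps_mul]
      inv_mem' := by
        intro g hg
        simp only [Set.mem_setOf_eq] at hg ⊢
        have h1 : eps g⁻¹ * (eps g * z) * eps g⁻¹ = eps g⁻¹ * (z * eps g) * eps g⁻¹ := by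
          rw [hg]
        have h2 : eps g⁻¹ * eps g = 1 := by rw [eps_mul, inv_mul_cancel, eps_one]
        have h3 : eps g * eps g⁻¹ = 1 := by rw [eps_mul, mul_inv_cancel, eps_one]
        calc eps g⁻¹ * z = eps g⁻¹ * z * 1 := by rw [mul_one]
          _ = eps g⁻¹ * z * (eps g * eps g⁻¹) := by rw [h3]
          _ = eps g⁻¹ * (z * eps g) * eps g⁻¹ := by
              rw [mul_assoc, mul_assoc, mul_assoc]
          _ = eps g⁻¹ * (eps g * z) * eps g⁻¹ := by rw [hg]
          _ = (eps g⁻¹ * eps g) * (z * eps g⁻¹) := by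
              rw [mul_assoc, mul_assoc, mul_assoc]
          _ = z * eps g⁻¹ := by rw [h2, one_mul] } with hHdef
  have hswap : ∀ d : ℕ, ∀ x y : Fin n, (y:ℕ) = (x:ℕ) + d + 1 → Equiv.swap x y ∈ H := by
    intro d
    induction d with
    | zero =>
      intro x y hxy
      exact hz x y (by omega)
    | succ d ih =>
      intro x y hxy
      have hw : (y:ℕ) - 1 < n := by omega
      set w : Fin n := ⟨(y:ℕ) - 1, hw⟩ with hwdef
      have hxw : x ≠ w := by
        intro h
        have := congrArg Fin.val h
        simp [hwdef] at this
        omega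
      have hxy' : x ≠ y := by
        intro h
        have := congrArg Fin.val h
        omega
      have hid : Equiv.swap w y * Equiv.swap x w * Equiv.swap w y = Equiv.swap y x :=
        Equiv.swap_mul_swap_mul_swap hxw hxy'
      have h1 : Equiv.swap x w ∈ H := ih x w (by simp [hwdef]; omega)
      have h2 : Equiv.swap w y ∈ H := hz w y (by simp [hwdef]; omega)
      have : Equiv.swap y x ∈ H := by
        rw [← hid]
        exact H.mul_mem (H.mul_mem h2 h1) h2
      rwa [Equiv.swap_comm] at this
  have hH : H = ⊤ := by
    rw [← Equiv.Perm.closure_isSwap]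
    apply le_antisymm
    · rw [Equiv.Perm.closure_isSwap]; exact le_top
    · apply Subgroup.closure_le _ |>.2
      rintro σ ⟨x, y, hxy, rfl⟩
      rcases Nat.lt_or_ge (x:ℕ) (y:ℕ) with h | h
      · exact hswap ((y:ℕ) - (x:ℕ) - 1) x y (by omega)
      · have hyx : (x:ℕ) ≠ (y:ℕ) := fun hc => hxy (Fin.ext hc)
        have : Equiv.swap y x ∈ H := hswap ((x:ℕ) - (y:ℕ) - 1) y x (by omega)
        rwa [Equiv.swap_comm] at this
  intro g
  have : g ∈ H := by rw [hH]; exact Subgroup.mem_top g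
  exact this

end Central

section TwoVar

open MvPolynomial

variable {n : ℕ} (x y : Fin n)

/-- subalgebra of polynomials symmetric in the two variables `x`, `y` -/
noncomputable def A0 : Subalgebra ℂ (MvPolynomial (Fin n) ℂ) :=
  Algebra.adjoin ℂ ({p | ∃ j : Fin n, j ≠ x ∧ j ≠ y ∧ p = MvPolynomial.X j} ∪
    {MvPolynomial.X x + MvPolynomial.X y, MvPolynomial.X x * MvPolynomial.X y})

lemma memX {j : Fin n} (h1 : j ≠ x) (h2 : j ≠ y) : MvPolynomial.X j ∈ A0 x y :=
  Algebra.subset_adjoin (Or.inl ⟨j, h1, h2, rfl⟩)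

lemma memS : MvPolynomial.X x + MvPolynomial.X y ∈ A0 x y :=
  Algebra.subset_adjoin (Or.inr (by simp))

lemma memP : MvPolynomial.X x * MvPolynomial.X y ∈ A0 x y :=
  Algebra.subset_adjoin (Or.inr (by simp))

lemma pow_decomp : ∀ N a b : ℕ, a + b ≤ N →
    ∃ q₁ ∈ A0 x y, ∃ q₂ ∈ A0 x y,
      (MvPolynomial.X x : MvPolynomial (Fin n) ℂ) ^ a * MvPolynomial.X y ^ b =
        q₁ + MvPolynomial.X x * q₂ := by
  intro N
  induction N with
  | zero =>
    intro a b hab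
    have ha : a = 0 := by omega
    have hb : b = 0 := by omega
    subst ha; subst hb
    exact ⟨1, one_mem _, 0, zero_mem _, by ring⟩
  | succ N ih =>
    intro a b hab
    rcases a with _ | a
    · rcases b with _ | b
      · exact ⟨1, one_mem _, 0, zero_mem _, by ring⟩
      · rcases b with _ | b
        · exact ⟨MvPolynomial.X x + MvPolynomial.X y, memS x y, -1,
            neg_mem (one_mem _), by ring⟩
        · obtain ⟨q₁, hq₁, q₂, hq₂, hq⟩ := ih 0 (b + 1) (by omega)
          obtain ⟨p₁, hp₁, p₂, hp₂, hp⟩ := ih 0 b (by omega)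
          refine ⟨(MvPolynomial.X x + MvPolynomial.X y) * q₁ -
              (MvPolynomial.X x * MvPolynomial.X y) * p₁,
            sub_mem (mul_mem (memS x y) hq₁) (mul_mem (memP x y) hp₁),
            (MvPolynomial.X x + MvPolynomial.X y) * q₂ -
              (MvPolynomial.X x * MvPolynomial.X y) * p₂,
            sub_mem (mul_mem (memS x y) hq₂) (mul_mem (memP x y) hp₂), ?_⟩
          linear_combination (MvPolynomial.X x + MvPolynomial.X y) * hq -
            (MvPolynomial.X x * MvPolynomial.X y) * hp
    · rcases b with _ | b
      · rcases a with _ | a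
        · exact ⟨0, zero_mem _, 1, one_mem _, by ring⟩
        · obtain ⟨q₁, hq₁, q₂, hq₂, hq⟩ := ih (a + 1) 0 (by omega)
          obtain ⟨p₁, hp₁, p₂, hp₂, hp⟩ := ih a 0 (by omega)
          refine ⟨(MvPolynomial.X x + MvPolynomial.X y) * q₁ -
              (MvPolynomial.X x * MvPolynomial.X y) * p₁,
            sub_mem (mul_mem (memS x y) hq₁) (mul_mem (memP x y) hp₁),
            (MvPolynomial.X x + MvPolynomial.X y) * q₂ -
              (MvPolynomial.X x * MvPolynomial.X y) * p₂,
            sub_mem (mul_mem (memS x y) hq₂) (mul_mem (memP x y) hp₂), ?_⟩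
          linear_combination (MvPolynomial.X x + MvPolynomial.X y) * hq -
            (MvPolynomial.X x * MvPolynomial.X y) * hp
      · obtain ⟨q₁, hq₁, q₂, hq₂, hq⟩ := ih a b (by omega)
        refine ⟨(MvPolynomial.X x * MvPolynomial.X y) * q₁,
          mul_mem (memP x y) hq₁,
          (MvPolynomial.X x * MvPolynomial.X y) * q₂,
          mul_mem (memP x y) hq₂, ?_⟩
        linear_combination (MvPolynomial.X x * MvPolynomial.X y) * hq

lemma monomial_split (hne : x ≠ y) (u : Fin n →₀ ℕ) (cc : ℂ) :
    (MvPolynomial.monomial u) cc = MvPolynomial.C cc *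
      ((MvPolynomial.X x ^ (u x) * MvPolynomial.X y ^ (u y)) *
        ∏ j ∈ Finset.univ.filter (fun j : Fin n => j ≠ x ∧ j ≠ y),
          (MvPolynomial.X j : MvPolynomial (Fin n) ℂ) ^ u j) := by
  rw [MvPolynomial.monomial_eq]
  congr 1
  rw [Finsupp.prod_fintype _ _ (fun j => pow_zero _)]
  rw [← Finset.mul_prod_erase Finset.univ _ (Finset.mem_univ x)]
  have hy : y ∈ Finset.univ.erase x := by
    simp [Finset.mem_erase, hne.symm]
  rw [← Finset.mul_prod_erase (Finset.univ.erase x) _ hy]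
  have he : (Finset.univ.erase x).erase y =
      Finset.univ.filter (fun j : Fin n => j ≠ x ∧ j ≠ y) := by
    ext j
    simp only [Finset.mem_erase, Finset.mem_filter, Finset.mem_univ, true_and, and_true]
    tauto
  rw [he]
  ring

lemma decomp (hne : x ≠ y) (Q : MvPolynomial (Fin n) ℂ) :
    ∃ q₁ ∈ A0 x y, ∃ q₂ ∈ A0 x y, Q = q₁ + MvPolynomial.X x * q₂ := by
  induction Q using MvPolynomial.induction_on' with
  | monomial u cc =>
    obtain ⟨q₁, hq₁, q₂, hq₂, hq⟩ := pow_decomp x y (u x + u y) (u x) (u y) le_rfl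
    set W : MvPolynomial (Fin n) ℂ :=
      ∏ j ∈ Finset.univ.filter (fun j : Fin n => j ≠ x ∧ j ≠ y), MvPolynomial.X j ^ u j
      with hWdef
    have hW : W ∈ A0 x y := by
      apply prod_mem
      intro j hj
      simp only [Finset.mem_filter, Finset.mem_univ, true_and] at hj
      exact pow_mem (memX x y hj.1 hj.2) _
    have hC : MvPolynomial.C cc ∈ A0 x y := by
      rw [show (MvPolynomial.C cc : MvPolynomial (Fin n) ℂ) =
        algebraMap ℂ _ cc from rfl]
      exact algebraMap_mem _ _
    refine ⟨MvPolynomial.C cc * W * q₁, mul_mem (mul_mem hC hW) hq₁,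
      MvPolynomial.C cc * W * q₂, mul_mem (mul_mem hC hW) hq₂, ?_⟩
    rw [monomial_split x y hne u cc]
    linear_combination (MvPolynomial.C cc * W) * hq
  | add p q hp hq =>
    obtain ⟨q₁, hq₁, q₂, hq₂, he⟩ := hp
    obtain ⟨p₁, hp₁, p₂, hp₂, he'⟩ := hq
    exact ⟨q₁ + p₁, add_mem hq₁ hp₁, q₂ + p₂, add_mem hq₂ hp₂, by
      rw [he, he']; ring⟩

lemma A0_fixed (p : MvPolynomial (Fin n) ℂ) (hp : p ∈ A0 x y) :
    MvPolynomial.rename (Equiv.swap x y) p = p := by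
  induction hp using Algebra.adjoin_induction with
  | mem q hq =>
    rcases hq with ⟨j, hj1, hj2, rfl⟩ | hq
    · rw [MvPolynomial.rename_X, Equiv.swap_apply_of_ne_of_ne hj1 hj2]
    · rcases hq with rfl | rfl
      · rw [map_add, MvPolynomial.rename_X, MvPolynomial.rename_X,
          Equiv.swap_apply_left, Equiv.swap_apply_right, add_comm]
      · rw [map_mul, MvPolynomial.rename_X, MvPolynomial.rename_X,
          Equiv.swap_apply_left, Equiv.swap_apply_right, mul_comm]
  | algebraMap r => exact MvPolynomial.rename_C _ r
  | add p q _ _ hp hq => rw [map_add, hp, hq]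
  | mul p q _ _ hp hq => rw [map_mul, hp, hq]

lemma sym_mem (hne : x ≠ y) (Q : MvPolynomial (Fin n) ℂ)
    (hQ : MvPolynomial.rename (Equiv.swap x y) Q = Q) : Q ∈ A0 x y := by
  obtain ⟨q₁, hq₁, q₂, hq₂, hdec⟩ := decomp x y hne Q
  have h2 : Q = q₁ + MvPolynomial.X y * q₂ := by
    conv_lhs => rw [← hQ, hdec]
    rw [map_add, map_mul, A0_fixed x y q₁ hq₁, A0_fixed x y q₂ hq₂,
      MvPolynomial.rename_X, Equiv.swap_apply_left]
  have h3 : (MvPolynomial.X x - MvPolynomial.X y) * q₂ = 0 := by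
    have := hdec.symm.trans h2
    linear_combination this
  have h4 : (MvPolynomial.X x : MvPolynomial (Fin n) ℂ) - MvPolynomial.X y ≠ 0 := by
    intro hc
    rw [sub_eq_zero] at hc
    exact hne (MvPolynomial.X_injective hc)
  have h5 : q₂ = 0 := by
    rcases mul_eq_zero.1 h3 with h | h
    · exact absurd h h4
    · exact h
  rw [hdec, h5, mul_zero, add_zero]
  exact hq₁

end TwoVar

section Final

open MonoidAlgebra MvPolynomial

variable {n : ℕ}

lemma symmetric_central (P : FreeAlgebra ℂ (Fin n))
    (hsym : MvPolynomial.IsSymmetric (abelPoly n P)) :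
    FreeAlgebra.lift ℂ (JM n) P ∈ Set.center (MonoidAlgebra ℂ (Equiv.Perm (Fin n))) := by
  rw [lift_eq_evalJM]
  apply mem_center_of_eps_comm
  apply eps_comm_of_adjacent
  intro x y hxy
  have hne : x ≠ y := by
    intro h
    have := congrArg Fin.val h
    omega
  have hQ : abelPoly n P ∈ A0 x y := sym_mem x y hne _ (hsym (Equiv.swap x y))
  -- the polynomials sent into the centralizer of eps (swap x y)
  have hle : A0 x y ≤ Subalgebra.comap (evalJM n)
      (Subalgebra.centralizer ℂ {eps (Equiv.swap x y)}) := by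
    rw [A0, Algebra.adjoin_le_iff]
    rintro p (⟨j, hj1, hj2, rfl⟩ | hp)
    · simp only [Subalgebra.mem_comap, SetLike.mem_coe, Subalgebra.mem_centralizer_iff,
        Set.mem_singleton_iff, forall_eq]
      rw [evalJM_X]
      exact rel1 hxy (Ne.symm hj1) (Ne.symm hj2)
    · rcases hp with rfl | rfl
      · simp only [Subalgebra.mem_comap, SetLike.mem_coe, Subalgebra.mem_centralizer_iff,
          Set.mem_singleton_iff, forall_eq]
        rw [map_add, evalJM_X, evalJM_X]
        exact rel_sum hxy
      · simp only [Subalgebra.mem_comap, SetLike.mem_coe, Subalgebra.mem_centralizer_iff,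
          Set.mem_singleton_iff, forall_eq]
        rw [map_mul, evalJM_X, evalJM_X]
        exact rel_prod hxy
  have := hle hQ
  simp only [Subalgebra.mem_comap, Subalgebra.mem_centralizer_iff,
    Set.mem_singleton_iff, forall_eq] at this
  exact this

lemma eval_on_youngSym (μ : YoungDiagram) (hμ : μ.card = n) (P : FreeAlgebra ℂ (Fin n)) :
    FreeAlgebra.lift ℂ (JM n) P * youngSym n μ =
      MvPolynomial.eval (fun m : Fin n => ((contentOf μ m : ℂ))) (abelPoly n P) •
        youngSym n μ := by
  induction P using FreeAlgebra.induction with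
  | grade0 r =>
    rw [AlgHom.commutes (abelPoly n), MvPolynomial.algebraMap_eq, MvPolynomial.eval_C,
      AlgHom.commutes (FreeAlgebra.lift ℂ (JM n)), ← Algebra.smul_def]
  | grade1 i =>
    rw [FreeAlgebra.lift_ι_apply, show abelPoly n (FreeAlgebra.ι ℂ i) = MvPolynomial.X i from
      FreeAlgebra.lift_ι_apply _ _, MvPolynomial.eval_X]
    have h := eigen μ hμ i
    rw [youngSym, h]
    congr 1
    rw [contentOf]
    push_cast
    ring
  | mul p q hp hq =>
    rw [map_mul, mul_assoc, hq, mul_smul_comm, hp, smul_smul, map_mul, map_mul,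
      mul_comm ((MvPolynomial.eval fun m : Fin n => ((contentOf μ m : ℂ))) (abelPoly n q))]
  | add p q hp hq =>
    rw [map_add, add_mul, hp, hq, map_add, map_add, add_smul]

end Final

end JMAux

/-- For any symmetric polynomial `P` in `n` variables (represented by a
noncommutative polynomial whose abelianization is symmetric), the evaluation
`P(X_1, …, X_n)` at the Jucys–Murphy elements lies in the center of the symmetric group
algebra, and acts on the irreducible representation corresponding to `μ ⊢ n` (realised as
the left ideal generated by the Young symmetrizer of `μ`) as the scalar given by `P`
evaluated at the contents of the boxes of `μ`. -/
theorem jucys_murphy_eval (n : ℕ) (μ : YoungDiagram) (hμ : μ.card = n)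
    (P : FreeAlgebra ℂ (Fin n)) (hsym : MvPolynomial.IsSymmetric (abelPoly n P)) :
    FreeAlgebra.lift ℂ (JM n) P ∈ Set.center (MonoidAlgebra ℂ (Equiv.Perm (Fin n))) ∧
    ∀ v ∈ Ideal.span {youngSym n μ},
      FreeAlgebra.lift ℂ (JM n) P * v =
        MvPolynomial.eval (fun m : Fin n => ((contentOf μ m : ℂ))) (abelPoly n P) • v := by
  constructor
  · exact JMAux.symmetric_central P hsym
  · intro v hv
    have hcent := JMAux.symmetric_central P hsym
    have hcomm := Semigroup.mem_center_iff.1 hcent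
    obtain ⟨r, rfl⟩ := Submodule.mem_span_singleton.1 hv
    rw [smul_eq_mul, ← mul_assoc, ← hcomm r, mul_assoc,
      JMAux.eval_on_youngSym μ hμ P, mul_smul_comm]
end
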